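/- arXiv:1109.1806 — 6 statements merged into one kernel-verified Lean document; each statement's English description precedes it below -/
import Mathlib

section
/- Let S = {(a,0) : a ≥ 1} ∪ {(0,a) : a ≥ 1} ∪ {(a,a) : a ≥ 1} be the set of queen steps, let p_n be the number of Catalan S-paths from (0,0) to (n,n), and let P(t) = Σ_{n≥0} p_n tⁿ ∈ ℚ⟦t⟧. Then P satisfies the quadratic equation t(2−3t)²·P(t)² − (4t³ − 5t² + 1)·P(t) + (1−t)² = 0 in ℚ⟦t⟧. -/
/-- x-coordinate of the `j`-th node of the path `p` (partial sum of first coordinates). -/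
def xPart (p : List (ℕ × ℕ)) (j : ℕ) : ℕ := ((p.take j).map Prod.fst).sum

/-- y-coordinate of the `j`-th node of the path `p` (partial sum of second coordinates). -/
def yPart (p : List (ℕ × ℕ)) (j : ℕ) : ℕ := ((p.take j).map Prod.snd).sum

/-- `p` is an `S`-path from `(0,0)` to `(n,m)`. -/
def IsPath (S : Set (ℕ × ℕ)) (n m : ℕ) (p : List (ℕ × ℕ)) : Prop :=
  (∀ st ∈ p, st ∈ S) ∧ xPart p p.length = n ∧ yPart p p.length = m

/-- `p` is Catalan: every node `(x, y)` satisfies `x ≤ y`. -/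
def IsCatalan (p : List (ℕ × ℕ)) : Prop :=
  ∀ j ≤ p.length, xPart p j ≤ yPart p j

/-- The number of `S`-paths from `(0,0)` to `(n,m)`. -/
noncomputable def aCount (S : Set (ℕ × ℕ)) (n m : ℕ) : ℕ :=
  Set.ncard {p : List (ℕ × ℕ) | IsPath S n m p}

/-- The number of Catalan `S`-paths from `(0,0)` to `(n,n)`. -/
noncomputable def pCatalan (S : Set (ℕ × ℕ)) (n : ℕ) : ℕ :=
  Set.ncard {p : List (ℕ × ℕ) | IsPath S n n p ∧ IsCatalan p}

/-- The set of queen steps: proper horizontal, vertical and diagonal steps. -/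
def queenSteps : Set (ℕ × ℕ) :=
  {st | (∃ a : ℕ, 1 ≤ a ∧ st = (a, 0)) ∨ (∃ a : ℕ, 1 ≤ a ∧ st = (0, a)) ∨
        (∃ a : ℕ, 1 ≤ a ∧ st = (a, a))}

namespace Stmt6
open Finset

abbrev Path := List (ℕ × ℕ)

/-- Catalan queen paths ending at `(x, x+k)`. -/
def A (x k : ℕ) : Set Path := {p | IsPath queenSteps x (x + k) p ∧ IsCatalan p}

lemma xPart_all (p : Path) : xPart p p.length = (p.map Prod.fst).sum := by
  simp [xPart]

lemma yPart_all (p : Path) : yPart p p.length = (p.map Prod.snd).sum := by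
  simp [yPart]

lemma xPart_concat {p : Path} {st : ℕ × ℕ} {j : ℕ} (h : j ≤ p.length) :
    xPart (p ++ [st]) j = xPart p j := by
  simp [xPart, List.take_append_of_le_length h]

lemma yPart_concat {p : Path} {st : ℕ × ℕ} {j : ℕ} (h : j ≤ p.length) :
    yPart (p ++ [st]) j = yPart p j := by
  simp [yPart, List.take_append_of_le_length h]

lemma queen_pos {st : ℕ × ℕ} (h : st ∈ queenSteps) : 1 ≤ st.1 + st.2 := by
  rcases h with ⟨a, ha, rfl⟩ | ⟨a, ha, rfl⟩ | ⟨a, ha, rfl⟩ <;> simp <;> omega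

lemma length_le (p : Path) (h : ∀ st ∈ p, 1 ≤ st.1 + st.2) :
    p.length ≤ (p.map Prod.fst).sum + (p.map Prod.snd).sum := by
  induction p with
  | nil => simp
  | cons s t ih =>
    simp only [List.map_cons, List.sum_cons, List.length_cons]
    have h1 := h s List.mem_cons_self
    have h2 := ih (fun st hst => h st (List.mem_cons_of_mem _ hst))
    omega

lemma A_finite (x k : ℕ) : (A x k).Finite := by
  set T : Set (ℕ × ℕ) := Set.Iic x ×ˢ Set.Iic (x + k) with hT
  have hTf : T.Finite := (Set.finite_Iic x).prod (Set.finite_Iic (x + k))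
  haveI := hTf.to_subtype
  apply Set.Finite.subset
    ((List.finite_length_le (↥T) (x + (x + k))).image fun l : List ↥T => l.map Subtype.val)
  rintro p ⟨⟨hS, hx, hy⟩, _⟩
  rw [xPart_all] at hx
  rw [yPart_all] at hy
  have hmem : ∀ st ∈ p, st ∈ T := by
    intro st hst
    constructor
    · have : st.1 ≤ (p.map Prod.fst).sum :=
        List.single_le_sum (fun _ _ => Nat.zero_le _) _ (List.mem_map_of_mem (f := Prod.fst) hst)
      simpa [hx] using this
    · have : st.2 ≤ (p.map Prod.snd).sum :=
        List.single_le_sum (fun _ _ => Nat.zero_le _) _ (List.mem_map_of_mem (f := Prod.snd) hst)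
      simpa [hy] using this
  refine ⟨p.pmap (fun a h => (⟨a, h⟩ : ↥T)) hmem, ?_, ?_⟩
  · simp only [Set.mem_setOf_eq, List.length_pmap]
    have := length_le p (fun st hst => queen_pos (hS st hst))
    omega
  · show (p.pmap (fun a h => (⟨a, h⟩ : ↥T)) hmem).map Subtype.val = p
    rw [List.map_pmap]
    exact ((List.pmap_eq_map (f := fun a : ℕ × ℕ => a) (l := p) hmem).trans (List.map_id p))

noncomputable def q (x k : ℕ) : ℕ := (A x k).ncard

lemma A_zero : A 0 0 = {([] : Path)} := by
  ext p
  constructor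
  · rintro ⟨⟨hS, hx, hy⟩, _⟩
    rw [xPart_all] at hx
    rw [yPart_all] at hy
    simp only [Nat.add_zero] at hy
    cases p with
    | nil => rfl
    | cons s t =>
      exfalso
      have h1 : s.1 = 0 := by
        have := List.single_le_sum (l := (s :: t).map Prod.fst) (fun _ _ => Nat.zero_le _)
          s.1 (List.mem_map_of_mem (f := Prod.fst) List.mem_cons_self)
        omega
      have h2 : s.2 = 0 := by
        have := List.single_le_sum (l := (s :: t).map Prod.snd) (fun _ _ => Nat.zero_le _)
          s.2 (List.mem_map_of_mem (f := Prod.snd) List.mem_cons_self)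
        omega
      have := queen_pos (hS s List.mem_cons_self)
      omega
  · rintro rfl
    refine ⟨⟨by simp, by simp [xPart], by simp [yPart]⟩, ?_⟩
    intro j hj
    simp at hj
    simp [hj, xPart, yPart]

lemma q00 : q 0 0 = 1 := by
  rw [q, A_zero, Set.ncard_singleton]

end Stmt6

namespace Stmt6
open Finset

noncomputable def fA (x k : ℕ) : Finset Path := (A_finite x k).toFinset

lemma mem_fA {x k : ℕ} {p : Path} :
    p ∈ fA x k ↔ IsPath queenSteps x (x + k) p ∧ IsCatalan p := by
  rw [fA, Set.Finite.mem_toFinset]; rfl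

lemma q_eq_card (x k : ℕ) : q x k = (fA x k).card :=
  Set.ncard_eq_toFinset_card _ (A_finite x k)

def stepsF (x k : ℕ) : Finset (ℕ × ℕ) :=
  ((range x).image fun b => (b + 1, 0)) ∪ ((range k).image fun b => (0, b + 1)) ∪
    ((range x).image fun b => (b + 1, b + 1))

lemma fA_decomp (x k : ℕ) (h : ¬(x = 0 ∧ k = 0)) :
    fA x k = (stepsF x k).biUnion
      (fun st => (fA (x - st.1) (k + st.1 - st.2)).image (· ++ [st])) := by
  ext p
  simp only [Finset.mem_biUnion, Finset.mem_image, mem_fA]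
  constructor
  · rintro ⟨⟨hS, hx, hy⟩, hC⟩
    rcases p.eq_nil_or_concat' with rfl | ⟨p', st, rfl⟩
    · exfalso
      simp [xPart, yPart] at hx hy
      omega
    have hstS : st ∈ queenSteps := hS st (by simp)
    have hxy' : xPart p' p'.length ≤ yPart p' p'.length := by
      have h1 := hC p'.length (by simp)
      rwa [xPart_concat (le_refl _), yPart_concat (le_refl _)] at h1
    rw [xPart_all, yPart_all] at hxy'
    have hP' : ∀ st' ∈ p', st' ∈ queenSteps := fun st' h' => hS st' (by simp [h'])
    have hC' : IsCatalan p' := by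
      intro j hj
      have := hC j (by simp; omega)
      rwa [xPart_concat hj, yPart_concat hj] at this
    rw [xPart_all] at hx
    rw [yPart_all] at hy
    rcases hstS with ⟨a, ha, rfl⟩ | ⟨a, ha, rfl⟩ | ⟨a, ha, rfl⟩ <;>
      simp only [List.map_append, List.sum_append, List.map_cons, List.sum_cons,
        List.map_nil, List.sum_nil, add_zero] at hx hy
    · refine ⟨(a, 0), ?_, p', ⟨⟨hP', ?_, ?_⟩, hC'⟩, rfl⟩
      · simp only [stepsF, Finset.mem_union, Finset.mem_image, Finset.mem_range]
        exact Or.inl (Or.inl ⟨a - 1, by omega, by simp [Prod.ext_iff]; omega⟩)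
      · rw [xPart_all]; show _ = x - a; omega
      · rw [yPart_all]; show _ = (x - a) + (k + a - 0); omega
    · refine ⟨(0, a), ?_, p', ⟨⟨hP', ?_, ?_⟩, hC'⟩, rfl⟩
      · simp only [stepsF, Finset.mem_union, Finset.mem_image, Finset.mem_range]
        exact Or.inl (Or.inr ⟨a - 1, by omega, by simp [Prod.ext_iff]; omega⟩)
      · rw [xPart_all]; show _ = x - 0; omega
      · rw [yPart_all]; show _ = (x - 0) + (k + 0 - a); omega
    · refine ⟨(a, a), ?_, p', ⟨⟨hP', ?_, ?_⟩, hC'⟩, rfl⟩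
      · simp only [stepsF, Finset.mem_union, Finset.mem_image, Finset.mem_range]
        exact Or.inr ⟨a - 1, by omega, by simp [Prod.ext_iff]; omega⟩
      · rw [xPart_all]; show _ = x - a; omega
      · rw [yPart_all]; show _ = (x - a) + (k + a - a); omega
  · rintro ⟨st, hst, p', ⟨⟨hP', hx', hy'⟩, hC'⟩, rfl⟩
    rw [xPart_all] at hx'
    rw [yPart_all] at hy'
    rw [stepsF, Finset.mem_union, Finset.mem_union] at hst
    have hCat : ∀ (hb1 : st.1 ≤ x) (hb2 : (p'.map Prod.fst).sum + st.1 = x)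
        (hb3 : (p'.map Prod.snd).sum + st.2 = x + k), IsCatalan (p' ++ [st]) := by
      intro hb1 hb2 hb3 j hj
      by_cases hj' : j ≤ p'.length
      · rw [xPart_concat hj', yPart_concat hj']
        exact hC' j hj'
      · simp only [List.length_append, List.length_cons, List.length_nil] at hj
        have hj2 : j = p'.length + 1 := by omega
        have hlen : j = (p' ++ [st]).length := by simp [hj2]
        rw [hlen, xPart_all, yPart_all]
        simp only [List.map_append, List.sum_append, List.map_cons, List.sum_cons,
          List.map_nil, List.sum_nil, add_zero]
        omega
    have hSt : ∀ (hq : st ∈ queenSteps) (hb1 : st.1 ≤ x)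
        (hb2 : (p'.map Prod.fst).sum + st.1 = x)
        (hb3 : (p'.map Prod.snd).sum + st.2 = x + k),
        IsPath queenSteps x (x + k) (p' ++ [st]) ∧ IsCatalan (p' ++ [st]) := by
      intro hq hb1 hb2 hb3
      refine ⟨⟨?_, ?_, ?_⟩, hCat hb1 hb2 hb3⟩
      · intro st' hst'
        rcases List.mem_append.1 hst' with h1 | h1
        · exact hP' st' h1
        · simp at h1; subst h1; exact hq
      · rw [xPart_all]
        simp only [List.map_append, List.sum_append, List.map_cons, List.sum_cons,
          List.map_nil, List.sum_nil, add_zero]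
        omega
      · rw [yPart_all]
        simp only [List.map_append, List.sum_append, List.map_cons, List.sum_cons,
          List.map_nil, List.sum_nil, add_zero]
        omega
    rcases hst with (h1 | h1) | h1 <;>
      · simp only [Finset.mem_image, Finset.mem_range] at h1
        obtain ⟨b, hb, rfl⟩ := h1
        simp only at hx' hy' ⊢
        exact hSt (by rw [queenSteps]; first
            | exact Or.inl ⟨b + 1, by omega, rfl⟩
            | exact Or.inr (Or.inl ⟨b + 1, by omega, rfl⟩)
            | exact Or.inr (Or.inr ⟨b + 1, by omega, rfl⟩))
          (by simp <;> omega) (by simp at hx' ⊢ <;> omega) (by simp at hy' ⊢ <;> omega)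

end Stmt6

namespace Stmt6
open Finset

lemma append_singleton_injective (st : ℕ × ℕ) :
    Function.Injective (fun p : Path => p ++ [st]) := by
  intro a b hab
  have := congrArg List.reverse hab
  simp only [List.reverse_append, List.reverse_cons, List.reverse_nil, List.nil_append,
    List.singleton_append, List.cons.injEq, List.reverse_inj] at this
  exact this.2

lemma q_rec (x k : ℕ) (h : ¬(x = 0 ∧ k = 0)) :
    q x k = ((∑ b ∈ range x, q (x - 1 - b) (k + b + 1)) + ∑ b ∈ range k, q x (k - 1 - b))
      + ∑ b ∈ range x, q (x - 1 - b) k := by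
  rw [q_eq_card, fA_decomp x k h, Finset.card_biUnion]
  · have hcard : ∀ st ∈ stepsF x k,
        ((fA (x - st.1) (k + st.1 - st.2)).image (· ++ [st])).card
          = q (x - st.1) (k + st.1 - st.2) := by
      intro st _
      rw [Finset.card_image_of_injective _ (append_singleton_injective st), q_eq_card]
    rw [Finset.sum_congr rfl hcard]
    have hd1 : Disjoint ((range x).image fun b => ((b + 1, 0) : ℕ × ℕ))
        ((range k).image fun b => ((0, b + 1) : ℕ × ℕ)) := by
      rw [Finset.disjoint_left]
      rintro ⟨u, v⟩ h1 h2
      simp only [Finset.mem_image, Finset.mem_range, Prod.mk.injEq] at h1 h2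
      obtain ⟨b, _, hb1, hb2⟩ := h1
      obtain ⟨c, _, hc1, hc2⟩ := h2
      omega
    have hd2 : Disjoint
        (((range x).image fun b => ((b + 1, 0) : ℕ × ℕ)) ∪
          ((range k).image fun b => ((0, b + 1) : ℕ × ℕ)))
        ((range x).image fun b => ((b + 1, b + 1) : ℕ × ℕ)) := by
      rw [Finset.disjoint_left]
      rintro ⟨u, v⟩ h1 h2
      simp only [Finset.mem_union, Finset.mem_image, Finset.mem_range, Prod.mk.injEq] at h1 h2
      obtain ⟨c, _, hc1, hc2⟩ := h2
      rcases h1 with ⟨b, _, hb1, hb2⟩ | ⟨b, _, hb1, hb2⟩ <;> omega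
    rw [stepsF, Finset.sum_union hd2, Finset.sum_union hd1]
    congr 1
    · congr 1
      · rw [Finset.sum_image (by intro a _ b _ hab; simpa [Prod.ext_iff] using hab)]
        refine Finset.sum_congr rfl fun b _ => ?_
        congr 1 <;> omega
      · rw [Finset.sum_image (by intro a _ b _ hab; simpa [Prod.ext_iff] using hab)]
        refine Finset.sum_congr rfl fun b _ => ?_
        congr 1 <;> omega
    · rw [Finset.sum_image (by intro a _ b _ hab; simpa [Prod.ext_iff] using hab)]
      refine Finset.sum_congr rfl fun b _ => ?_
      congr 1 <;> omega
  · intro st _ st' _ hne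
    dsimp only [Function.onFun]
    rw [Finset.disjoint_left]
    rintro p hp hp'
    obtain ⟨a, _, rfl⟩ := Finset.mem_image.1 hp
    obtain ⟨b, _, hab⟩ := Finset.mem_image.1 hp'
    apply hne
    have := congrArg List.reverse hab
    simp only [List.reverse_append, List.reverse_cons, List.reverse_nil, List.nil_append,
      List.singleton_append, List.cons.injEq] at this
    exact this.1.symm

end Stmt6

namespace Stmt6
open Finset PowerSeries

noncomputable section

abbrev R := PowerSeries ℚ

def Q (x k : ℕ) : ℚ := (q x k : ℚ)

def F (k : ℕ) : R := PowerSeries.mk fun x => Q x k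
def Hs (k : ℕ) : R := PowerSeries.mk fun x => ∑ b ∈ range (x + 1), Q (x - b) (k + b + 1)
def Dg (k : ℕ) : R := PowerSeries.mk fun x => ∑ b ∈ range x, Q (x - 1 - b) k
def Gs : R := PowerSeries.mk fun n => ∑ a ∈ range (n + 1), Q (n - a) a
def u0 : R := X * (1 + Gs)

lemma Q_rec (x k : ℕ) (h : ¬(x = 0 ∧ k = 0)) :
    Q x k = ((∑ b ∈ range x, Q (x - 1 - b) (k + b + 1)) + ∑ b ∈ range k, Q x (k - 1 - b))
      + ∑ b ∈ range x, Q (x - 1 - b) k := by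
  have := q_rec x k h
  simp only [Q]
  exact_mod_cast congrArg (Nat.cast : ℕ → ℚ) this

lemma Q00 : Q 0 0 = 1 := by simp [Q, q00]

lemma R1 (k : ℕ) :
    F k = (if k = 0 then 1 else 0) + Dg k + (∑ j ∈ range k, F j) + X * Hs k := by
  ext x
  simp only [map_add, coeff_mk, F, Dg, Hs, map_sum]
  have hvert : ∀ x : ℕ, (∑ j ∈ range k, Q x j) = ∑ b ∈ range k, Q x (k - 1 - b) :=
    fun x => (Finset.sum_range_reflect (fun j => Q x j) k).symm
  cases x with
  | zero =>
    rw [coeff_zero_X_mul]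
    cases k with
    | zero => simp [Q00]
    | succ k =>
      have := Q_rec 0 (k + 1) (by omega)
      simp only [range_zero, sum_empty, zero_add, add_zero] at this
      simp only [if_neg (Nat.succ_ne_zero k), map_zero, coeff_zero_eq_constantCoeff]
      rw [hvert 0]
      simpa using this
  | succ n =>
    rw [coeff_succ_X_mul, coeff_mk]
    have hrec := Q_rec (n + 1) k (by omega)
    have hif : (coeff (n + 1)) (if k = 0 then (1 : R) else 0) = 0 := by
      split_ifs <;> simp [coeff_one]
    have hh : (∑ b ∈ range (n + 1), Q (n + 1 - 1 - b) (k + b + 1))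
        = ∑ b ∈ range (n + 1), Q (n - b) (k + b + 1) :=
      Finset.sum_congr rfl fun b _ => by
        have h : n + 1 - 1 - b = n - b := by omega
        rw [h]
    rw [hif, hvert (n + 1), hrec, hh]
    ring

lemma R1a (k : ℕ) : Dg k = X * F k + X * Dg k := by
  ext x
  cases x with
  | zero => simp [Dg]
  | succ n =>
    simp only [map_add, coeff_succ_X_mul, coeff_mk, Dg, F]
    rw [Finset.sum_range_succ' (fun b => Q (n + 1 - 1 - b) k) n]
    have h1 : (∑ i ∈ range n, Q (n + 1 - 1 - (i + 1)) k) = ∑ i ∈ range n, Q (n - 1 - i) k :=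
      Finset.sum_congr rfl fun b _ => by
        have h : n + 1 - 1 - (b + 1) = n - 1 - b := by omega
        rw [h]
    have h2 : Q (n + 1 - 1 - 0) k = Q n k := by norm_num
    rw [h1, h2]
    ring

lemma R2 (k : ℕ) : Hs k = F (k + 1) + X * Hs (k + 1) := by
  ext x
  cases x with
  | zero => simp [Hs, F]
  | succ n =>
    simp only [map_add, coeff_succ_X_mul, coeff_mk, Hs, F]
    rw [Finset.sum_range_succ' (fun b => Q (n + 1 - b) (k + b + 1)) (n + 1)]
    have h1 : (∑ i ∈ range (n + 1), Q (n + 1 - (i + 1)) (k + (i + 1) + 1))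
        = ∑ i ∈ range (n + 1), Q (n - i) (k + 1 + i + 1) :=
      Finset.sum_congr rfl fun b _ => by
        have h : n + 1 - (b + 1) = n - b := by omega
        have h2 : k + (b + 1) + 1 = k + 1 + b + 1 := by omega
        rw [h, h2]
    have h2 : Q (n + 1 - 0) (k + 0 + 1) = Q (n + 1) (k + 1) := by norm_num
    rw [h1, h2]
    ring

lemma R3 : Gs = F 0 + X * Hs 0 := by
  ext x
  cases x with
  | zero => simp [Gs, F]
  | succ n =>
    simp only [map_add, coeff_succ_X_mul, coeff_mk, Gs, F, Hs]
    rw [Finset.sum_range_succ' (fun a => Q (n + 1 - a) a) (n + 1)]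
    have h1 : (∑ i ∈ range (n + 1), Q (n + 1 - (i + 1)) (i + 1))
        = ∑ i ∈ range (n + 1), Q (n - i) (0 + i + 1) :=
      Finset.sum_congr rfl fun b _ => by
        have h : n + 1 - (b + 1) = n - b := by omega
        have h2 : b + 1 = 0 + b + 1 := by omega
        rw [h, ← h2]
    have h2 : Q (n + 1 - 0) 0 = Q (n + 1) 0 := by norm_num
    rw [h1, h2]
    ring

end
end Stmt6

namespace Stmt6
open Finset PowerSeries

noncomputable section

lemma constantCoeff_u0 : constantCoeff u0 = 0 := by
  simp [u0]

lemma coeff_mul_u0_pow {B : R} {n k : ℕ} (h : n < k) : coeff n (B * u0 ^ k) = 0 := by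
  have hdvd : (X : R) ^ k ∣ B * u0 ^ k := by
    apply Dvd.dvd.mul_left
    exact pow_dvd_pow_of_dvd ⟨1 + Gs, rfl⟩ k
  exact (PowerSeries.X_pow_dvd_iff.1 hdvd) n h

/-- Evaluation of `∑ k, A k * u0 ^ k`. -/
def Ev (A : ℕ → R) : R := PowerSeries.mk fun n => ∑ k ∈ range (n + 1), coeff n (A k * u0 ^ k)

lemma Ev_add (A B : ℕ → R) : Ev (fun k => A k + B k) = Ev A + Ev B := by
  ext n
  simp [Ev, add_mul, Finset.sum_add_distrib]

lemma Ev_zero : Ev (fun _ => 0) = 0 := by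
  ext n; simp [Ev]

lemma Ev_mulc (c : R) (A : ℕ → R) : Ev (fun k => c * A k) = c * Ev A := by
  ext n
  rw [PowerSeries.coeff_mul]
  rw [Ev, Ev]
  simp only [coeff_mk]
  have hext : ∀ p ∈ antidiagonal n,
      (coeff p.1) c * ∑ k ∈ range (p.2 + 1), coeff p.2 (A k * u0 ^ k)
        = ∑ k ∈ range (n + 1), (coeff p.1) c * coeff p.2 (A k * u0 ^ k) := by
    intro p hp
    have hp2 : p.1 + p.2 = n := Finset.HasAntidiagonal.mem_antidiagonal.1 hp
    rw [Finset.mul_sum]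
    apply Finset.sum_subset
    · exact Finset.range_subset_range.2 (by omega)
    · intro k _ hk
      rw [coeff_mul_u0_pow (by simp at hk ⊢; omega), mul_zero]
  rw [Finset.sum_congr rfl hext, Finset.sum_comm]
  refine Finset.sum_congr rfl fun k _ => ?_
  rw [← PowerSeries.coeff_mul, ← mul_assoc]

lemma Ev_shift (A : ℕ → R) : Ev A = A 0 + u0 * Ev (fun k => A (k + 1)) := by
  ext n
  rw [map_add, PowerSeries.coeff_mul]
  rw [Ev, Ev]
  simp only [coeff_mk]
  rw [Finset.sum_range_succ' (fun k => coeff n (A k * u0 ^ k)) n, pow_zero, mul_one]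
  have hext : ∀ p ∈ antidiagonal n,
      (coeff p.1) u0 * ∑ k ∈ range (p.2 + 1), coeff p.2 (A (k + 1) * u0 ^ k)
        = ∑ k ∈ range n, (coeff p.1) u0 * coeff p.2 (A (k + 1) * u0 ^ k) := by
    intro p hp
    have hpn : p.1 + p.2 = n := Finset.HasAntidiagonal.mem_antidiagonal.1 hp
    rcases Nat.eq_zero_or_pos p.1 with h0 | h0
    · have hz : (coeff p.1) u0 = 0 := by
        rw [h0, coeff_zero_eq_constantCoeff]
        exact constantCoeff_u0
      simp [hz]
    · rw [Finset.mul_sum]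
      apply Finset.sum_subset
      · exact Finset.range_subset_range.2 (by omega)
      · intro k _ hk
        rw [coeff_mul_u0_pow (by simp at hk ⊢; omega), mul_zero]
  rw [Finset.sum_congr rfl hext, Finset.sum_comm]
  have hterm : ∀ k ∈ range n,
      (∑ p ∈ antidiagonal n, (coeff p.1) u0 * coeff p.2 (A (k + 1) * u0 ^ k))
        = coeff n (A (k + 1) * u0 ^ (k + 1)) := by
    intro k _
    rw [← PowerSeries.coeff_mul]
    congr 1
    ring
  rw [Finset.sum_congr rfl hterm, add_comm]

def Phi : R := Ev F
def Psi : R := Ev Hs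
def Dv : R := Ev (fun k => ∑ j ∈ range k, F j)
def DGv : R := Ev Dg

lemma Ev_delta : Ev (fun k => if k = 0 then (1 : R) else 0) = 1 := by
  rw [Ev_shift]
  simp [Ev_zero]

lemma hM : Phi = 1 + DGv + Dv + X * Psi := by
  have hF : F = fun k => (if k = 0 then (1 : R) else 0) + Dg k
      + ((fun k => ∑ j ∈ range k, F j) k) + X * Hs k := funext fun k => R1 k
  rw [Phi, hF]
  rw [show (fun k => (if k = 0 then (1 : R) else 0) + Dg k
      + ((fun k => ∑ j ∈ range k, F j) k) + X * Hs k)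
    = (fun k => ((if k = 0 then (1 : R) else 0) + Dg k + (∑ j ∈ range k, F j))
        + (fun k => X * Hs k) k) from rfl, Ev_add]
  rw [show (fun k => ((if k = 0 then (1 : R) else 0) + Dg k + (∑ j ∈ range k, F j)))
    = (fun k => ((if k = 0 then (1 : R) else 0) + Dg k) + (fun k => ∑ j ∈ range k, F j) k)
      from rfl, Ev_add]
  rw [show (fun k => ((if k = 0 then (1 : R) else 0) + Dg k))
    = (fun k => (if k = 0 then (1 : R) else 0) + (fun k => Dg k) k) from rfl, Ev_add]
  rw [Ev_delta, Ev_mulc X Hs]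
  rfl

lemma hDG : (1 - X) * DGv = X * Phi := by
  have hDg : Dg = fun k => X * F k + X * Dg k := funext fun k => R1a k
  have : DGv = X * Phi + X * DGv := by
    rw [DGv]
    conv_lhs => rw [hDg]
    rw [show (fun k => X * F k + X * Dg k)
      = (fun k => (fun k => X * F k) k + (fun k => X * Dg k) k) from rfl, Ev_add,
      Ev_mulc X F, Ev_mulc X Dg]
    rfl
  linear_combination this

lemma hD : (1 - u0) * Dv = u0 * Phi := by
  have h1 := Ev_shift (fun k => ∑ j ∈ range k, F j)
  simp only [range_zero, sum_empty] at h1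
  have h2 : (fun k => ∑ j ∈ range (k + 1), F j)
      = fun k => ((fun k => ∑ j ∈ range k, F j) k + F k) := by
    funext k
    simp [Finset.sum_range_succ]
  rw [h2, Ev_add] at h1
  have : Dv = 0 + u0 * (Dv + Phi) := h1
  linear_combination this

lemma hG2 : Phi = Gs + (X * Gs) * Psi := by
  have h1 : Phi = F 0 + u0 * Ev (fun k => F (k + 1)) := Ev_shift F
  have h3 : Psi = Hs 0 + u0 * Ev (fun k => Hs (k + 1)) := Ev_shift Hs
  have h2 : Psi = Ev (fun k => F (k + 1)) + X * Ev (fun k => Hs (k + 1)) := by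
    rw [Psi]
    conv_lhs => rw [show Hs = fun k => F (k + 1) + X * Hs (k + 1) from funext fun k => R2 k]
    rw [show (fun k => F (k + 1) + X * Hs (k + 1))
      = (fun k => (fun k => F (k + 1)) k + (fun k => X * Hs (k + 1)) k) from rfl, Ev_add,
      Ev_mulc X (fun k => Hs (k + 1))]
  have h4 : Gs = F 0 + X * Hs 0 := R3
  have h5 : u0 = X * (1 + Gs) := rfl
  linear_combination h1 - u0 * h2 + X * h3 - h4 + Psi * h5
end
end Stmt6

namespace Stmt6
open Finset PowerSeries

noncomputable section

lemma Phi_ne_zero : Phi ≠ 0 := by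
  intro h
  have h0 := congrArg (coeff 0) h
  simp [Phi, Ev, F, Q00] at h0

lemma hW0 : Gs * ((1 - X) * (1 - u0) - X * (1 - u0) - u0 * (1 - X)) - (1 - X) * (1 - u0)
    = (0 : R) := by
  have hXWPhi : X * (Gs * ((1 - X) * (1 - u0) - X * (1 - u0) - u0 * (1 - X))
      - (1 - X) * (1 - u0)) * Phi = 0 := by
    linear_combination (X * Gs * (1 - X) * (1 - u0)) * hM + (X * Gs * (1 - u0)) * hDG
      + (X * Gs * (1 - X)) * hD - (X * (1 - X) * (1 - u0)) * hG2
  rcases mul_eq_zero.1 hXWPhi with h | h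
  · rcases mul_eq_zero.1 h with h' | h'
    · exact absurd h' X_ne_zero
    · exact h'
  · exact absurd h Phi_ne_zero

lemma hKrel : Gs - 3 * X * Gs - 2 * X * Gs ^ 2 + 2 * X ^ 2 * Gs + 3 * X ^ 2 * Gs ^ 2
    - 1 + 2 * X - X ^ 2 = (0 : R) := by
  have h := hW0
  rw [show u0 = X * (1 + Gs) from rfl] at h
  linear_combination h

lemma hF0 : (2 - 3 * X) * F 0 = (1 - X) * (1 + Gs) := by
  have h1 : F 0 = 1 + Dg 0 + X * Hs 0 := by simpa using R1 0
  have h2 := R1a 0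
  have h3 := R3
  linear_combination (1 - X) * h1 + h2 - (1 - X) * h3

end
end Stmt6


theorem stmt6 (P : PowerSeries ℚ)
    (hP : P = PowerSeries.mk fun n => (pCatalan queenSteps n : ℚ)) :
    PowerSeries.X * (2 - 3 * PowerSeries.X) ^ 2 * P ^ 2 -
      (4 * PowerSeries.X ^ 3 - 5 * PowerSeries.X ^ 2 + 1) * P +
      (1 - PowerSeries.X) ^ 2 = 0 := by
  open PowerSeries Stmt6 in
  have hPF : P = F 0 := by rw [hP]; rfl
  have h1 : ((2 : Stmt6.R) - 3 * X) * P = (1 - X) * (1 + Gs) := by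
    rw [hPF]; exact hF0
  have h23 : ((2 : Stmt6.R) - 3 * PowerSeries.X) ≠ 0 := by
    intro h
    have h' := congrArg (PowerSeries.constantCoeff) h
    simp only [map_sub, map_mul, map_ofNat, PowerSeries.constantCoeff_X, mul_zero,
      sub_zero, map_zero] at h'
    norm_num at h'
  have key : ((2 : Stmt6.R) - 3 * PowerSeries.X) ^ 2 *
      (PowerSeries.X * (2 - 3 * PowerSeries.X) ^ 2 * P ^ 2 -
        (4 * PowerSeries.X ^ 3 - 5 * PowerSeries.X ^ 2 + 1) * P +
        (1 - PowerSeries.X) ^ 2) = 0 := by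
    linear_combination
      (PowerSeries.X * (2 - 3 * PowerSeries.X) ^ 2 *
          ((2 - 3 * PowerSeries.X) * P + (1 - PowerSeries.X) * (1 + Stmt6.Gs))
        - (4 * PowerSeries.X ^ 3 - 5 * PowerSeries.X ^ 2 + 1) * (2 - 3 * PowerSeries.X)) * h1
      + (3 * PowerSeries.X ^ 3 - 8 * PowerSeries.X ^ 2 + 7 * PowerSeries.X - 2) * Stmt6.hKrel
  rcases mul_eq_zero.1 key with h | h
  · exact absurd h (pow_ne_zero 2 h23)
  · exact h
end

section
/- Let J be any subset of the positive integers, let S = {(1,0),(0,1)} ∪ {(a,a) : a ∈ J}, let p_n be the number of Catalan S-paths from (0,0) to (n,n), let P(t) = Σ_{n≥0} p_n tⁿ ∈ ℚ⟦t⟧, and let T_J(t) = Σ_{a∈J} tᵃ ∈ ℚ⟦t⟧. Then P satisfies the quadratic equation t·P(t)² − (1 − T_J(t))·P(t) + 1 = 0 in ℚ⟦t⟧ (equivalently, P(t) = (1 − T_J(t) − √((1 − T_J(t))² − 4t))/(2t)). -/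
lemma xPart_zero (p : List (ℕ × ℕ)) : xPart p 0 = 0 := rfl
lemma yPart_zero (p : List (ℕ × ℕ)) : yPart p 0 = 0 := rfl

lemma xPart_cons_succ (s : ℕ × ℕ) (p : List (ℕ × ℕ)) (j : ℕ) :
    xPart (s :: p) (j + 1) = s.1 + xPart p j := by
  simp [xPart, List.take_succ_cons]

lemma yPart_cons_succ (s : ℕ × ℕ) (p : List (ℕ × ℕ)) (j : ℕ) :
    yPart (s :: p) (j + 1) = s.2 + yPart p j := by
  simp [yPart, List.take_succ_cons]

lemma xPart_append_left (q r : List (ℕ × ℕ)) {j : ℕ} (h : j ≤ q.length) :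
    xPart (q ++ r) j = xPart q j := by
  simp [xPart, List.take_append_of_le_length h]

lemma yPart_append_left (q r : List (ℕ × ℕ)) {j : ℕ} (h : j ≤ q.length) :
    yPart (q ++ r) j = yPart q j := by
  simp [yPart, List.take_append_of_le_length h]

lemma xPart_append_add (q r : List (ℕ × ℕ)) (t : ℕ) :
    xPart (q ++ r) (q.length + t) = xPart q q.length + xPart r t := by
  simp [xPart, List.take_append, List.take_length, List.take_of_length_le]

lemma yPart_append_add (q r : List (ℕ × ℕ)) (t : ℕ) :
    yPart (q ++ r) (q.length + t) = yPart q q.length + yPart r t := by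
  simp [yPart, List.take_append, List.take_length, List.take_of_length_le]

lemma xPart_length (p : List (ℕ × ℕ)) : xPart p p.length = (p.map Prod.fst).sum := by
  simp [xPart]

lemma yPart_length (p : List (ℕ × ℕ)) : yPart p p.length = (p.map Prod.snd).sum := by
  simp [yPart]

lemma xPart_take (p : List (ℕ × ℕ)) (k j : ℕ) (h : j ≤ k) :
    xPart (p.take k) j = xPart p j := by
  simp [xPart, List.take_take, Nat.min_eq_left h]

lemma yPart_take (p : List (ℕ × ℕ)) (k j : ℕ) (h : j ≤ k) :
    yPart (p.take k) j = yPart p j := by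
  simp [yPart, List.take_take, Nat.min_eq_left h]

lemma xPart_succ_get (p : List (ℕ × ℕ)) (j : ℕ) (h : j < p.length) :
    xPart p (j + 1) = xPart p j + (p.get ⟨j, h⟩).1 := by
  unfold xPart
  rw [List.take_succ, List.getElem?_eq_getElem h, List.map_append, List.sum_append]
  simp

lemma yPart_succ_get (p : List (ℕ × ℕ)) (j : ℕ) (h : j < p.length) :
    yPart p (j + 1) = yPart p j + (p.get ⟨j, h⟩).2 := by
  unfold yPart
  rw [List.take_succ, List.getElem?_eq_getElem h, List.map_append, List.sum_append]
  simp

lemma xPart_mono (p : List (ℕ × ℕ)) {j k : ℕ} (h : j ≤ k) : xPart p j ≤ xPart p k := by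
  rw [← xPart_take p k j h]
  have hs := List.take_sublist j (List.take k p)
  exact List.Sublist.sum_le_sum (hs.map Prod.fst) (by intro x _; positivity)

lemma isPath_iff (S : Set (ℕ × ℕ)) (n m : ℕ) (p : List (ℕ × ℕ)) :
    IsPath S n m p ↔ (∀ st ∈ p, st ∈ S) ∧ (p.map Prod.fst).sum = n ∧ (p.map Prod.snd).sum = m := by
  rw [IsPath, xPart_length, yPart_length]

lemma isCatalan_nil : IsCatalan [] := by intro j hj; simp at hj; simp [hj, xPart_zero, yPart_zero]

lemma isCatalan_cons_diag (a : ℕ) (p : List (ℕ × ℕ)) :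
    IsCatalan ((a, a) :: p) ↔ IsCatalan p := by
  constructor
  · intro h j hj
    have := h (j + 1) (by simpa using Nat.succ_le_succ hj)
    rwa [xPart_cons_succ, yPart_cons_succ, Nat.add_le_add_iff_left] at this
  · intro h j hj
    cases j with
    | zero => simp [xPart_zero, yPart_zero]
    | succ j =>
      rw [xPart_cons_succ, yPart_cons_succ]
      exact Nat.add_le_add_left (h j (by simpa using hj)) a

lemma yPart_mono (p : List (ℕ × ℕ)) {j k : ℕ} (h : j ≤ k) : yPart p j ≤ yPart p k := by
  rw [← yPart_take p k j h]
  have hs := List.take_sublist j (List.take k p)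
  exact List.Sublist.sum_le_sum (hs.map Prod.snd) (by intro x _; positivity)

lemma isPath_cons (S : Set (ℕ × ℕ)) (n m : ℕ) (s : ℕ × ℕ) (q : List (ℕ × ℕ)) :
    IsPath S n m (s :: q) ↔
      s ∈ S ∧ s.1 ≤ n ∧ s.2 ≤ m ∧ IsPath S (n - s.1) (m - s.2) q := by
  simp only [isPath_iff, List.map_cons, List.sum_cons, List.mem_cons]
  constructor
  · rintro ⟨hmem, hx, hy⟩
    refine ⟨hmem s (Or.inl rfl), by omega, by omega,
      fun st h => hmem st (Or.inr h), by omega, by omega⟩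
  · rintro ⟨hs, h1, h2, hmem, hx, hy⟩
    refine ⟨fun st h => ?_, by omega, by omega⟩
    rcases h with h | h
    · exact h ▸ hs
    · exact hmem st h

/-- Catalan paths from (0,0) to (n,n). -/
def CatSet (S : Set (ℕ × ℕ)) (n : ℕ) : Set (List (ℕ × ℕ)) :=
  {p | IsPath S n n p ∧ IsCatalan p}

open Classical in
lemma cat_succ_iff {J : Set ℕ} {S : Set (ℕ × ℕ)} (hJ : ∀ a ∈ J, 1 ≤ a)
    (hS : S = ({(1, 0), (0, 1)} : Set (ℕ × ℕ)) ∪ {st | ∃ a ∈ J, st = (a, a)})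
    (n : ℕ) (p : List (ℕ × ℕ)) :
    p ∈ CatSet S (n + 1) ↔
      (∃ a ∈ J, a ≤ n + 1 ∧ ∃ q ∈ CatSet S (n + 1 - a), p = (a, a) :: q) ∨
      (∃ i ≤ n, ∃ q ∈ CatSet S i, ∃ r ∈ CatSet S (n - i), p = (0, 1) :: (q ++ (1, 0) :: r)) := by
  constructor
  · rintro ⟨hpath, hcat⟩
    cases p with
    | nil =>
      exfalso
      rcases (isPath_iff S _ _ []).mp hpath with ⟨-, hx, -⟩
      simp at hx
    | cons s u =>
      rw [isPath_cons] at hpath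
      obtain ⟨hsS, h1, h2, hrest⟩ := hpath
      rw [hS] at hsS
      rcases hsS with (hs | hs) | ⟨a, haJ, hs⟩
      · -- s = (1,0) : impossible
        exfalso
        have := hcat 1 (by simp)
        rw [hs] at this
        rw [xPart_cons_succ, yPart_cons_succ] at this
        simp [xPart_zero, yPart_zero] at this
      · -- s = (0,1)
        right
        simp only [Set.mem_singleton_iff] at hs
        subst hs
        have hcat' : ∀ j ≤ u.length, xPart u j ≤ yPart u j + 1 := by
          intro j hj
          have := hcat (j + 1) (by simpa using Nat.succ_le_succ hj)
          rw [xPart_cons_succ, yPart_cons_succ] at this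
          omega
        obtain ⟨hmemu, hxu, hyu⟩ := hrest
        have hyu' : yPart u u.length = n := by omega
        have hEx : ∃ j, j ≤ u.length ∧ xPart u j = yPart u j + 1 :=
          ⟨u.length, le_refl _, by omega⟩
        classical
        obtain ⟨k, ⟨hkle, hkeq⟩, hmin'⟩ :
            ∃ k, (k ≤ u.length ∧ xPart u k = yPart u k + 1) ∧
              ∀ j < k, ¬(j ≤ u.length ∧ xPart u j = yPart u j + 1) :=
          ⟨Nat.find hEx, Nat.find_spec hEx, fun j hj => Nat.find_min hEx hj⟩
        have hmin : ∀ j < k, j ≤ u.length → xPart u j ≤ yPart u j := by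
          intro j hj hj'
          have := hmin' j hj
          have := hcat' j hj'
          omega
        have hk0 : k ≠ 0 := by
          intro h
          rw [h] at hkeq
          simp [xPart_zero, yPart_zero] at hkeq
        obtain ⟨k', rfl⟩ : ∃ k', k = k' + 1 := ⟨k - 1, by omega⟩
        have hk'lt : k' < u.length := by omega
        obtain ⟨st, hstdef⟩ : ∃ st, u.get ⟨k', hk'lt⟩ = st := ⟨_, rfl⟩
        have hstmem : st ∈ S := hstdef ▸ hmemu _ (List.get_mem u ⟨k', hk'lt⟩)
        have hxs := xPart_succ_get u k' hk'lt
        have hys := yPart_succ_get u k' hk'lt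
        rw [hstdef] at hxs hys
        have hqle : xPart u k' ≤ yPart u k' := hmin k' (by omega) (by omega)
        -- identify st = (1,0)
        have hst : st = (1, 0) := by
          rw [hS] at hstmem
          rcases hstmem with (h | h) | ⟨b, hbJ, h⟩
          · simpa using h
          · exfalso
            simp only [Set.mem_singleton_iff] at h
            rw [h] at hxs hys
            simp at hxs hys
            omega
          · exfalso
            rw [h] at hxs hys
            simp at hxs hys
            omega
        rw [hst] at hxs hys
        simp at hxs hys
        have hdiag : xPart u k' = yPart u k' := by omega
        set i := yPart u k' with hidef
        refine ⟨i, ?_, u.take k', ⟨⟨?_, ?_, ?_⟩, ?_⟩, u.drop (k' + 1), ⟨⟨?_, ?_, ?_⟩, ?_⟩, ?_⟩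
        · -- i ≤ n
          calc i ≤ yPart u u.length := yPart_mono u (by omega)
          _ = n := hyu'
        · -- steps of take in S
          exact fun t ht => hmemu t (List.take_subset _ _ ht)
        · -- x sum of take
          rw [List.length_take, Nat.min_eq_left (by omega), xPart_take u k' k' le_rfl]
          omega
        · rw [List.length_take, Nat.min_eq_left (by omega), yPart_take u k' k' le_rfl]
        · -- take is Catalan
          intro j hj
          rw [List.length_take, Nat.min_eq_left (by omega)] at hj
          rw [xPart_take u k' j hj, yPart_take u k' j hj]
          exact hmin j (by omega) (by omega)
        · exact fun t ht => hmemu t (List.drop_subset _ _ ht)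
        · -- x sum of drop
          have hsplit : u = u.take (k' + 1) ++ u.drop (k' + 1) := (List.take_append_drop _ _).symm
          have hlen : (u.take (k' + 1)).length = k' + 1 :=
            by rw [List.length_take]; omega
          have := xPart_append_add (u.take (k' + 1)) (u.drop (k' + 1)) ((u.drop (k' + 1)).length)
          rw [hlen] at this
          rw [← hsplit] at this
          have hlen2 : u.length = (k' + 1) + (u.drop (k' + 1)).length := by
            rw [List.length_drop]; omega
          rw [← hlen2] at this
          rw [hxu] at this
          rw [xPart_take u (k' + 1) (k' + 1) le_rfl] at this
          have hld : (u.drop (k' + 1)).length = u.length - (k' + 1) := List.length_drop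
          omega
        · have hsplit : u = u.take (k' + 1) ++ u.drop (k' + 1) := (List.take_append_drop _ _).symm
          have hlen : (u.take (k' + 1)).length = k' + 1 :=
            by rw [List.length_take]; omega
          have := yPart_append_add (u.take (k' + 1)) (u.drop (k' + 1)) ((u.drop (k' + 1)).length)
          rw [hlen] at this
          rw [← hsplit] at this
          have hlen2 : u.length = (k' + 1) + (u.drop (k' + 1)).length := by
            rw [List.length_drop]; omega
          rw [← hlen2] at this
          rw [hyu'] at this
          rw [yPart_take u (k' + 1) (k' + 1) le_rfl] at this
          omega
        · -- drop is Catalan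
          intro t ht
          have hlen : (u.take (k' + 1)).length = k' + 1 := by rw [List.length_take]; omega
          have hx := xPart_append_add (u.take (k' + 1)) (u.drop (k' + 1)) t
          have hy := yPart_append_add (u.take (k' + 1)) (u.drop (k' + 1)) t
          rw [List.take_append_drop, hlen, xPart_take u (k' + 1) (k' + 1) le_rfl] at hx
          rw [List.take_append_drop, hlen, yPart_take u (k' + 1) (k' + 1) le_rfl] at hy
          have hjle : k' + 1 + t ≤ u.length := by
            have : (u.drop (k' + 1)).length = u.length - (k' + 1) := List.length_drop
            omega
          have := hcat' (k' + 1 + t) hjle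
          omega
        · -- p = (0,1) :: (take ++ (1,0) :: drop)
          have hdrop := List.drop_eq_getElem_cons hk'lt
          have hst' : u[k'] = (1, 0) := by
            rw [← hst, ← hstdef]; rfl
          rw [hst'] at hdrop
          rw [← hdrop, List.take_append_drop]
      · -- s = (a,a), a ∈ J
        left
        subst hs
        exact ⟨a, haJ, h1, u, ⟨hrest, (isCatalan_cons_diag a u).mp hcat⟩, rfl⟩
  · rintro (⟨a, haJ, hale, q, ⟨hqpath, hqcat⟩, rfl⟩ | ⟨i, hin, q, ⟨hqpath, hqcat⟩, r, ⟨hrpath, hrcat⟩, rfl⟩)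
    · refine ⟨?_, (isCatalan_cons_diag a q).mpr hqcat⟩
      rw [isPath_cons]
      exact ⟨by rw [hS]; right; exact ⟨a, haJ, rfl⟩, hale, hale, hqpath⟩
    · obtain ⟨hqmem, hqx, hqy⟩ := hqpath
      obtain ⟨hrmem, hrx, hry⟩ := hrpath
      constructor
      · rw [isPath_cons]
        refine ⟨by rw [hS]; left; right; rfl, by omega, by omega, ?_⟩
        simp only [isPath_iff]
        refine ⟨?_, ?_, ?_⟩
        · intro t ht
          rcases List.mem_append.mp ht with h | h
          · exact hqmem t h
          · rcases List.mem_cons.mp h with rfl | h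
            · rw [hS]; left; left; rfl
            · exact hrmem t h
        · rw [xPart_length] at hqx hrx
          simp only [List.map_append, List.sum_append, List.map_cons, List.sum_cons]
          omega
        · rw [yPart_length] at hqy hry
          simp only [List.map_append, List.sum_append, List.map_cons, List.sum_cons]
          omega
      · -- Catalan
        intro j hj
        cases j with
        | zero => simp [xPart_zero, yPart_zero]
        | succ j' =>
          rw [xPart_cons_succ, yPart_cons_succ]
          simp only [List.length_cons] at hj
          have hj' : j' ≤ (q ++ (1, 0) :: r).length := by omega
          have hlen : (q ++ (1, 0) :: r).length = q.length + (r.length + 1) := by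
            simp [List.length_append]
          rcases le_or_gt j' q.length with h | h
          · rw [xPart_append_left q _ h, yPart_append_left q _ h]
            have := hqcat j' h
            omega
          · obtain ⟨t, rfl⟩ : ∃ t, j' = q.length + (t + 1) := ⟨j' - q.length - 1, by omega⟩
            have hx := xPart_append_add q ((1, 0) :: r) (t + 1)
            have hy := yPart_append_add q ((1, 0) :: r) (t + 1)
            rw [xPart_cons_succ] at hx
            rw [yPart_cons_succ] at hy
            have ht : t ≤ r.length := by omega
            have := hrcat t ht
            omega

lemma split_unique {S : Set (ℕ × ℕ)} {i i' : ℕ}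
    {q r q' r' : List (ℕ × ℕ)}
    (hq : q ∈ CatSet S i) (hq' : q' ∈ CatSet S i')
    (h : q ++ (1, 0) :: r = q' ++ (1, 0) :: r') : q = q' ∧ r = r' := by
  have key : ∀ (i₁ i₂ : ℕ) (a b c d : List (ℕ × ℕ)), a ∈ CatSet S i₁ → b ∈ CatSet S i₂ →
      a ++ (1, 0) :: c = b ++ (1, 0) :: d → ¬ (a.length < b.length) := by
    rintro i₁ i₂ a b c d ⟨⟨-, hax, hay⟩, -⟩ ⟨⟨-, -, -⟩, hbcat⟩ heq hlt
    have h1 : xPart (a ++ (1, 0) :: c) (a.length + 1) = xPart a a.length + 1 := by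
      have := xPart_append_add a ((1, 0) :: c) 1
      rw [xPart_cons_succ] at this
      simp [xPart_zero] at this
      omega
    have h2 : yPart (a ++ (1, 0) :: c) (a.length + 1) = yPart a a.length := by
      have := yPart_append_add a ((1, 0) :: c) 1
      rw [yPart_cons_succ] at this
      simp [yPart_zero] at this
      omega
    rw [heq] at h1 h2
    have hle : a.length + 1 ≤ b.length := hlt
    rw [xPart_append_left b _ hle] at h1
    rw [yPart_append_left b _ hle] at h2
    have := hbcat (a.length + 1) (le_trans hle (by simp))
    omega
  have hlen : q.length = q'.length := by
    rcases Nat.lt_trichotomy q.length q'.length with h1 | h1 | h1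
    · exact absurd h1 (key i i' q q' r r' hq hq' h)
    · exact h1
    · exact absurd h1 (key i' i q' q r' r hq' hq h.symm)
  obtain ⟨h1, h2⟩ := List.append_inj h hlen
  exact ⟨h1, by simpa using h2⟩

lemma paths_finite_aux (S : Set (ℕ × ℕ)) (hpos : ∀ st ∈ S, 1 ≤ st.1 + st.2) :
    ∀ N n m, n + m ≤ N → {p | IsPath S n m p}.Finite := by
  intro N
  induction N with
  | zero =>
    intro n m h
    apply Set.Finite.subset (Set.finite_singleton ([] : List (ℕ × ℕ)))
    rintro p hp
    rcases (isPath_iff S n m p).mp hp with ⟨hm, hx, hy⟩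
    cases p with
    | nil => rfl
    | cons s q =>
      exfalso
      simp only [List.map_cons, List.sum_cons] at hx hy
      have := hpos s (hm s List.mem_cons_self)
      omega
  | succ N ih =>
    intro n m h
    classical
    apply Set.Finite.subset
    · exact Set.Finite.insert [] (Set.Finite.biUnion
        (((Finset.range (n + 1)) ×ˢ (Finset.range (m + 1))).filter
          (fun s : ℕ × ℕ => 1 ≤ s.1 + s.2)).finite_toSet
        (fun s hs => Set.Finite.image (s :: ·)
          (ih (n - s.1) (m - s.2) (by
            simp at hs
            omega))))
    · intro p hp
      cases p with
      | nil => exact Set.mem_insert _ _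
      | cons s q =>
        obtain ⟨hsS, h1, h2, hq⟩ := (isPath_cons S n m s q).mp hp
        refine Set.mem_insert_of_mem _ (Set.mem_biUnion ?_ ⟨q, hq, rfl⟩)
        simp only [Finset.coe_filter, Finset.mem_product, Finset.mem_range,
          Set.mem_setOf_eq, Finset.mem_coe]
        exact ⟨⟨by omega, by omega⟩, hpos s hsS⟩

lemma step_pos {J : Set ℕ} {S : Set (ℕ × ℕ)} (hJ : ∀ a ∈ J, 1 ≤ a)
    (hS : S = ({(1, 0), (0, 1)} : Set (ℕ × ℕ)) ∪ {st | ∃ a ∈ J, st = (a, a)}) :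
    ∀ st ∈ S, 1 ≤ st.1 + st.2 := by
  intro st hst
  rw [hS] at hst
  rcases hst with (h | h) | ⟨a, haJ, h⟩
  · rw [h]; simp
  · rw [h]; simp
  · rw [h]; have := hJ a haJ; simp; omega

lemma catSet_finite {J : Set ℕ} {S : Set (ℕ × ℕ)} (hJ : ∀ a ∈ J, 1 ≤ a)
    (hS : S = ({(1, 0), (0, 1)} : Set (ℕ × ℕ)) ∪ {st | ∃ a ∈ J, st = (a, a)})
    (n : ℕ) : (CatSet S n).Finite :=
  (paths_finite_aux S (step_pos hJ hS) (n + n) n n le_rfl).subset fun _ hp => hp.1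

lemma pCatalan_eq (S : Set (ℕ × ℕ)) (n : ℕ) : pCatalan S n = (CatSet S n).ncard := rfl

lemma pCatalan_zero {J : Set ℕ} {S : Set (ℕ × ℕ)} (hJ : ∀ a ∈ J, 1 ≤ a)
    (hS : S = ({(1, 0), (0, 1)} : Set (ℕ × ℕ)) ∪ {st | ∃ a ∈ J, st = (a, a)}) :
    pCatalan S 0 = 1 := by
  rw [pCatalan_eq]
  have : CatSet S 0 = {[]} := by
    ext p
    constructor
    · rintro ⟨hpath, -⟩
      rcases (isPath_iff S 0 0 p).mp hpath with ⟨hm, hx, hy⟩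
      cases p with
      | nil => rfl
      | cons s q =>
        exfalso
        simp only [List.map_cons, List.sum_cons] at hx hy
        have := step_pos hJ hS s (hm s List.mem_cons_self)
        omega
    · rintro rfl
      exact ⟨⟨fun st h => absurd h List.not_mem_nil, rfl, rfl⟩, isCatalan_nil⟩
  rw [this, Set.ncard_singleton]

open Classical in
lemma pCatalan_succ_eq {J : Set ℕ} {S : Set (ℕ × ℕ)} (hJ : ∀ a ∈ J, 1 ≤ a)
    (hS : S = ({(1, 0), (0, 1)} : Set (ℕ × ℕ)) ∪ {st | ∃ a ∈ J, st = (a, a)})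
    (n : ℕ) :
    pCatalan S (n + 1) =
      (∑ a ∈ (Finset.range (n + 2)).filter (· ∈ J), pCatalan S (n + 1 - a)) +
      ∑ i ∈ Finset.range (n + 1), pCatalan S i * pCatalan S (n - i) := by
  classical
  set C : ℕ → Finset (List (ℕ × ℕ)) := fun m => (catSet_finite hJ hS m).toFinset with hCdef
  have hC : ∀ m p, p ∈ C m ↔ p ∈ CatSet S m := fun m p => Set.Finite.mem_toFinset _
  have hcard : ∀ m, pCatalan S m = (C m).card := fun m => by
    rw [pCatalan_eq, Set.ncard_eq_toFinset_card _ (catSet_finite hJ hS m)]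
  set A : Finset (List (ℕ × ℕ)) :=
    ((Finset.range (n + 2)).filter (· ∈ J)).biUnion
      (fun a => (C (n + 1 - a)).image (fun q => (a, a) :: q)) with hA
  set B : Finset (List (ℕ × ℕ)) :=
    (Finset.range (n + 1)).biUnion
      (fun i => ((C i) ×ˢ (C (n - i))).image
        (fun qr => (0, 1) :: (qr.1 ++ (1, 0) :: qr.2))) with hB
  have hunion : C (n + 1) = A ∪ B := by
    ext p
    rw [hC, cat_succ_iff hJ hS]
    simp only [hA, hB, Finset.mem_union, Finset.mem_biUnion, Finset.mem_image,
      Finset.mem_filter, Finset.mem_range, Finset.mem_product, Prod.exists]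
    constructor
    · rintro (⟨a, haJ, hale, q, hq, rfl⟩ | ⟨i, hile, q, hq, r, hr, rfl⟩)
      · exact Or.inl ⟨a, ⟨by omega, haJ⟩, q, (hC _ _).mpr hq, rfl⟩
      · exact Or.inr ⟨i, by omega, q, r, ⟨(hC _ _).mpr hq, (hC _ _).mpr hr⟩, rfl⟩
    · rintro (⟨a, ⟨halt, haJ⟩, q, hq, rfl⟩ | ⟨i, hilt, q, r, ⟨hq, hr⟩, rfl⟩)
      · exact Or.inl ⟨a, haJ, by omega, q, (hC _ _).mp hq, rfl⟩
      · exact Or.inr ⟨i, by omega, q, (hC _ _).mp hq, r, (hC _ _).mp hr, rfl⟩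
  have hdisj : Disjoint A B := by
    rw [Finset.disjoint_left]
    rintro p hpA hpB
    simp only [hA, Finset.mem_biUnion, Finset.mem_image, Finset.mem_filter,
      Finset.mem_range] at hpA
    simp only [hB, Finset.mem_biUnion, Finset.mem_image, Finset.mem_range,
      Finset.mem_product, Prod.exists] at hpB
    obtain ⟨a, ⟨-, haJ⟩, q, -, hEq1⟩ := hpA
    obtain ⟨i, -, q', r', -, hEq2⟩ := hpB
    rw [← hEq2] at hEq1
    have := List.head_eq_of_cons_eq hEq1
    have ha := hJ a haJ
    simp [Prod.ext_iff] at this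
    omega
  have hcardA : A.card = ∑ a ∈ (Finset.range (n + 2)).filter (· ∈ J), pCatalan S (n + 1 - a) := by
    rw [hA, Finset.card_biUnion]
    · refine Finset.sum_congr rfl fun a ha => ?_
      rw [Finset.card_image_of_injective _ (fun q q' h => List.tail_eq_of_cons_eq h), hcard]
    · rintro a ha a' ha' hne
      dsimp only [Function.onFun]
      rw [Finset.disjoint_left]
      rintro p hp hp'
      simp only [Finset.mem_image] at hp hp'
      obtain ⟨q, -, rfl⟩ := hp
      obtain ⟨q', -, hEq⟩ := hp'
      have := List.head_eq_of_cons_eq hEq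
      simp [Prod.ext_iff] at this
      exact hne (by omega)
  have hcardB : B.card = ∑ i ∈ Finset.range (n + 1), pCatalan S i * pCatalan S (n - i) := by
    rw [hB, Finset.card_biUnion]
    · refine Finset.sum_congr rfl fun i hi => ?_
      rw [Finset.card_image_of_injOn, Finset.card_product, hcard, hcard]
      rintro ⟨q, r⟩ hqr ⟨q', r'⟩ hqr' hEq
      simp only [Finset.mem_coe, Finset.mem_product, hC] at hqr hqr'
      have h2 := List.tail_eq_of_cons_eq hEq
      obtain ⟨hq, hr⟩ := split_unique hqr.1 hqr'.1 h2
      exact Prod.ext hq hr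
    · rintro i hi i' hi' hne
      dsimp only [Function.onFun]
      rw [Finset.disjoint_left]
      rintro p hp hp'
      simp only [Finset.mem_image, Finset.mem_product, Prod.exists] at hp hp'
      obtain ⟨q, r, hqr, rfl⟩ := hp
      obtain ⟨q', r', hqr', hEq⟩ := hp'
      have h2 := List.tail_eq_of_cons_eq hEq.symm
      obtain ⟨hq, -⟩ := split_unique ((hC _ _).mp hqr.1) ((hC _ _).mp hqr'.1) h2
      have e1 : xPart q q.length = i := ((hC _ _).mp hqr.1).1.2.1
      have e2 : xPart q' q'.length = i' := ((hC _ _).mp hqr'.1).1.2.1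
      rw [hq] at e1
      exact hne (by omega)
  rw [hcard, hunion, Finset.card_union_of_disjoint hdisj, hcardA, hcardB]


open Classical in
theorem stmt8 (J : Set ℕ) (hJ : ∀ a ∈ J, 1 ≤ a)
    (S : Set (ℕ × ℕ))
    (hS : S = ({(1, 0), (0, 1)} : Set (ℕ × ℕ)) ∪ {st | ∃ a ∈ J, st = (a, a)})
    (P TJ : PowerSeries ℚ)
    (hP : P = PowerSeries.mk fun n => (pCatalan S n : ℚ))
    (hT : TJ = PowerSeries.mk fun a => if a ∈ J then 1 else 0) :
    PowerSeries.X * P ^ 2 - (1 - TJ) * P + 1 = 0 := by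
  have h0 : pCatalan S 0 = 1 := pCatalan_zero hJ hS
  have hT0 : (0 : ℕ) ∉ J := fun h => by have := hJ 0 h; omega
  apply PowerSeries.ext
  intro n
  simp only [map_add, map_sub, map_zero]
  cases n with
  | zero =>
    have c1 : PowerSeries.coeff 0 (PowerSeries.X * P ^ 2) = 0 := by
      simp [PowerSeries.coeff_mul, Finset.Nat.antidiagonal_zero]
    have c2 : PowerSeries.coeff 0 ((1 - TJ) * P) = 1 := by
      simp [PowerSeries.coeff_mul, Finset.Nat.antidiagonal_zero, hP, hT,
        PowerSeries.coeff_mk, h0, hT0]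
    have c3 : PowerSeries.coeff 0 (1 : PowerSeries ℚ) = 1 := by simp
    rw [c1, c2, c3]
    ring
  | succ k =>
    have c1 : PowerSeries.coeff (k + 1) (PowerSeries.X * P ^ 2) =
        ∑ i ∈ Finset.range (k + 1), (pCatalan S i : ℚ) * (pCatalan S (k - i) : ℚ) := by
      rw [PowerSeries.coeff_succ_X_mul, pow_two, PowerSeries.coeff_mul,
        Finset.Nat.sum_antidiagonal_eq_sum_range_succ_mk]
      simp [hP, PowerSeries.coeff_mk]
    have c2 : PowerSeries.coeff (k + 1) ((1 - TJ) * P) =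
        (pCatalan S (k + 1) : ℚ) -
          ∑ a ∈ (Finset.range (k + 2)).filter (· ∈ J), (pCatalan S (k + 1 - a) : ℚ) := by
      rw [sub_mul, one_mul, map_sub, PowerSeries.coeff_mul,
        Finset.Nat.sum_antidiagonal_eq_sum_range_succ_mk]
      rw [hP, hT]
      simp only [PowerSeries.coeff_mk, ite_mul, one_mul, zero_mul]
      rw [← Finset.sum_filter]
    have c3 : PowerSeries.coeff (k + 1) (1 : PowerSeries ℚ) = 0 := by
      simp [PowerSeries.coeff_one]
    rw [c1, c2, c3]
    have hrec := pCatalan_succ_eq hJ hS k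
    have hrecQ := congrArg (fun x : ℕ => (x : ℚ)) hrec
    push_cast at hrecQ
    rw [hrecQ]
    ring
end

section
/- Let S₁ = {(a,0) : a ≥ 1} ∪ {(0,a) : a ≥ 1} ∪ {(1,1)} (all rook steps together with the bishop step of length 1), let p_n be the number of Catalan S₁-paths from (0,0) to (n,n), and let P₁(t) = Σ_{n≥0} p_n tⁿ ∈ ℚ⟦t⟧. Then in ℚ⟦t⟧: ((1 + 2t − t²) − 2t(t−2)²·P₁(t))² = (t−1)(−1 + 11t − 7t² + t³). -/
/-- All rook steps together with the bishop step of length 1. -/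
def S1 : Set (ℕ × ℕ) :=
  {st | (∃ a : ℕ, 1 ≤ a ∧ st = (a, 0)) ∨ (∃ a : ℕ, 1 ≤ a ∧ st = (0, a)) ∨ st = (1, 1)}

open Finset

namespace Stmt9Aux

noncomputable def c (x y : ℕ) : ℕ :=
  Set.ncard {p : List (ℕ × ℕ) | IsPath S1 x y p ∧ IsCatalan p}

lemma xPart_all (p : List (ℕ × ℕ)) : xPart p p.length = (p.map Prod.fst).sum := by
  simp [xPart]

lemma yPart_all (p : List (ℕ × ℕ)) : yPart p p.length = (p.map Prod.snd).sum := by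
  simp [yPart]

lemma xPart_append {q : List (ℕ × ℕ)} (st : ℕ × ℕ) {j : ℕ} (hj : j ≤ q.length) :
    xPart (q ++ [st]) j = xPart q j := by
  unfold xPart; rw [List.take_append_of_le_length hj]

lemma yPart_append {q : List (ℕ × ℕ)} (st : ℕ × ℕ) {j : ℕ} (hj : j ≤ q.length) :
    yPart (q ++ [st]) j = yPart q j := by
  unfold yPart; rw [List.take_append_of_le_length hj]

lemma xPart_append_last (q : List (ℕ × ℕ)) (st : ℕ × ℕ) :
    xPart (q ++ [st]) (q.length + 1) = xPart q q.length + st.1 := by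
  have h : q.length + 1 = (q ++ [st]).length := by simp
  rw [h, xPart_all, xPart_all]
  simp

lemma yPart_append_last (q : List (ℕ × ℕ)) (st : ℕ × ℕ) :
    yPart (q ++ [st]) (q.length + 1) = yPart q q.length + st.2 := by
  have h : q.length + 1 = (q ++ [st]).length := by simp
  rw [h, yPart_all, yPart_all]
  simp

lemma sum_xy (p : List (ℕ × ℕ)) :
    xPart p p.length + yPart p p.length = (p.map fun st => st.1 + st.2).sum := by
  rw [xPart_all, yPart_all]
  induction p with
  | nil => simp
  | cons a t ih => simp at ih ⊢; omega

lemma step_pos {st : ℕ × ℕ} (h : st ∈ S1) : 1 ≤ st.1 + st.2 := by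
  rcases h with ⟨a, ha, rfl⟩ | ⟨a, ha, rfl⟩ | rfl <;> simp <;> omega

lemma length_le {x y : ℕ} {p : List (ℕ × ℕ)} (hp : IsPath S1 x y p) : p.length ≤ x + y := by
  have h1 : (p.map fun st => st.1 + st.2).sum = x + y := by
    rw [← sum_xy, hp.2.1, hp.2.2]
  have h2 : p.length ≤ (p.map fun st => st.1 + st.2).sum := by
    have := (p.map fun st => st.1 + st.2).length_le_sum_of_one_le (fun i hi => by
      rcases List.mem_map.mp hi with ⟨st, hst, rfl⟩
      exact step_pos (hp.1 st hst))
    simpa using this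
  omega

lemma comp_le {x y : ℕ} {p : List (ℕ × ℕ)} (hp : IsPath S1 x y p) :
    ∀ st ∈ p, st.1 ≤ x ∧ st.2 ≤ y := by
  intro st hst
  constructor
  · have : st.1 ≤ (p.map Prod.fst).sum :=
      List.single_le_sum (fun i _ => Nat.zero_le i) _ (List.mem_map_of_mem hst)
    rw [← xPart_all, hp.2.1] at this; exact this
  · have : st.2 ≤ (p.map Prod.snd).sum :=
      List.single_le_sum (fun i _ => Nat.zero_le i) _ (List.mem_map_of_mem hst)
    rw [← yPart_all, hp.2.2] at this; exact this

lemma finite_bounded (s : Set (ℕ × ℕ)) (hs : s.Finite) :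
    ∀ n : ℕ, {l : List (ℕ × ℕ) | l.length ≤ n ∧ ∀ st ∈ l, st ∈ s}.Finite := by
  intro n
  induction n with
  | zero =>
      apply Set.Finite.subset (Set.finite_singleton ([] : List (ℕ × ℕ)))
      rintro l ⟨hl, -⟩
      simp [List.length_eq_zero_iff.mp (Nat.le_zero.mp hl)]
  | succ n ih =>
      apply Set.Finite.subset (((hs.image2 List.cons ih)).insert ([] : List (ℕ × ℕ)))
      rintro l ⟨hl, hmem⟩
      cases l with
      | nil => simp
      | cons a t =>
          right
          refine Set.mem_image2_of_mem (hmem a (by simp)) ⟨?_, ?_⟩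
          · simpa using hl
          · exact fun st hst => hmem st (by simp [hst])

lemma pathSet_finite (x y : ℕ) :
    {p : List (ℕ × ℕ) | IsPath S1 x y p ∧ IsCatalan p}.Finite := by
  apply Set.Finite.subset
    (finite_bounded (Set.Iic (x, y)) (Set.finite_Iic _) (x + y))
  rintro p ⟨hp, -⟩
  refine ⟨length_le hp, fun st hst => ?_⟩
  have := comp_le hp st hst
  exact ⟨this.1, this.2⟩

lemma isPath_append {x y : ℕ} {q : List (ℕ × ℕ)} {st : ℕ × ℕ} (hst : st ∈ S1)
    (hq : IsPath S1 x y q) : IsPath S1 (x + st.1) (y + st.2) (q ++ [st]) := by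
  refine ⟨fun a ha => ?_, ?_, ?_⟩
  · rcases List.mem_append.mp ha with h | h
    · exact hq.1 a h
    · simp at h; subst h; exact hst
  · have h : (q ++ [st]).length = q.length + 1 := by simp
    rw [h, xPart_append_last, hq.2.1]
  · have h : (q ++ [st]).length = q.length + 1 := by simp
    rw [h, yPart_append_last, hq.2.2]

lemma isCatalan_append {x y : ℕ} {q : List (ℕ × ℕ)} {st : ℕ × ℕ}
    (hq : IsPath S1 x y q) (hcat : IsCatalan q) (hle : x + st.1 ≤ y + st.2) :
    IsCatalan (q ++ [st]) := by
  intro j hj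
  have hlen : (q ++ [st]).length = q.length + 1 := by simp
  rw [hlen] at hj
  rcases Nat.lt_or_ge j (q.length + 1) with h | h
  · have hj' : j ≤ q.length := by omega
    rw [xPart_append st hj', yPart_append st hj']
    exact hcat j hj'
  · have hj' : j = q.length + 1 := by omega
    subst hj'
    rw [xPart_append_last, yPart_append_last, hq.2.1, hq.2.2]
    exact hle

lemma nonempty_of_path {x y : ℕ} {p : List (ℕ × ℕ)} (hp : IsPath S1 x y p)
    (hy : 1 ≤ y) : p ≠ [] := by
  rintro rfl
  have := hp.2.2
  simp [yPart] at this
  omega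

lemma decomp {x y : ℕ} {p : List (ℕ × ℕ)} (hne : p ≠ []) (h1 : IsPath S1 x y p)
    (h2 : IsCatalan p) :
    p.getLast hne ∈ S1 ∧ (p.getLast hne).1 ≤ x ∧ (p.getLast hne).2 ≤ y ∧
    IsPath S1 (x - (p.getLast hne).1) (y - (p.getLast hne).2) p.dropLast ∧
    IsCatalan p.dropLast ∧ x - (p.getLast hne).1 ≤ y - (p.getLast hne).2 := by
  set st := p.getLast hne with hst
  set q := p.dropLast with hq
  have hsplit : q ++ [st] = p := List.dropLast_append_getLast hne
  have hlen : p.length = q.length + 1 := by rw [← hsplit]; simp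
  have hx : xPart q q.length + st.1 = x := by
    rw [← xPart_append_last, hsplit, ← hlen, h1.2.1]
  have hy : yPart q q.length + st.2 = y := by
    rw [← yPart_append_last, hsplit, ← hlen, h1.2.2]
  have hmem : st ∈ S1 := h1.1 st (List.getLast_mem hne)
  have hcatq : IsCatalan q := by
    intro j hj
    have h3 := h2 j (by omega)
    rw [← hsplit, xPart_append st hj, yPart_append st hj] at h3
    exact h3
  have hfin : xPart q q.length ≤ yPart q q.length := hcatq q.length le_rfl
  refine ⟨hmem, by omega, by omega, ⟨?_, by omega, by omega⟩, hcatq, by omega⟩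
  intro a ha
  exact h1.1 a (by rw [← hsplit]; exact List.mem_append_left _ ha)

lemma c_eq_zero {x y : ℕ} (h : y < x) : c x y = 0 := by
  unfold c
  have he : {p : List (ℕ × ℕ) | IsPath S1 x y p ∧ IsCatalan p} = ∅ := by
    ext p
    simp only [Set.mem_setOf_eq, Set.mem_empty_iff_false, iff_false]
    rintro ⟨h1, h2⟩
    have := h2 p.length le_rfl
    rw [h1.2.1, h1.2.2] at this
    omega
  rw [he, Set.ncard_empty]

lemma c_zero_zero : c 0 0 = 1 := by
  unfold c
  have : {p : List (ℕ × ℕ) | IsPath S1 0 0 p ∧ IsCatalan p} = {[]} := by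
    ext p
    simp only [Set.mem_setOf_eq, Set.mem_singleton_iff]
    constructor
    · rintro ⟨h1, -⟩
      have := length_le h1
      exact List.length_eq_zero_iff.mp (by omega)
    · rintro rfl
      refine ⟨⟨by simp, by simp [xPart], by simp [yPart]⟩, ?_⟩
      intro j hj
      simp at hj
      simp [hj, xPart, yPart]
  rw [this, Set.ncard_singleton]
lemma getLastD_eq_getLast {p : List (ℕ × ℕ)} (h : p ≠ []) (d : ℕ × ℕ) :
    p.getLastD d = p.getLast h := by
  cases p with
  | nil => exact absurd rfl h
  | cons a t => rw [List.getLast_eq_getLastD, List.getLastD_cons]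

noncomputable def pathFinset (x y : ℕ) : Finset (List (ℕ × ℕ)) :=
  (pathSet_finite x y).toFinset

lemma mem_pathFinset {x y : ℕ} {p : List (ℕ × ℕ)} :
    p ∈ pathFinset x y ↔ IsPath S1 x y p ∧ IsCatalan p := by
  simp [pathFinset, Set.Finite.mem_toFinset]

lemma c_eq_card (x y : ℕ) : c x y = (pathFinset x y).card :=
  Set.ncard_eq_toFinset_card _ (pathSet_finite x y)

lemma c_rec (x y : ℕ) (hxy : x ≤ y) (hy : 1 ≤ y) :
    c x y = (if 1 ≤ x then c (x-1) (y-1) else 0)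
      + (∑ a ∈ Icc 1 x, c (x-a) y) + ∑ a ∈ Icc 1 (y-x), c x (y-a) := by
  classical
  set T : Finset (ℕ × ℕ) :=
    (((Icc 1 x).image fun a => (a, (0:ℕ))) ∪ ((Icc 1 (y-x)).image fun a => ((0:ℕ), a))) ∪
      (if 1 ≤ x then {((1:ℕ), (1:ℕ))} else ∅) with hT
  have hTfact : ∀ st ∈ T, st ∈ S1 ∧ st.1 ≤ x ∧ st.2 ≤ y ∧ x - st.1 ≤ y - st.2 := by
    intro st hst
    rw [hT] at hst
    simp only [mem_union, mem_image, mem_Icc] at hst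
    rcases hst with (⟨a, ha, rfl⟩ | ⟨a, ha, rfl⟩) | hst
    · exact ⟨Or.inl ⟨a, ha.1, rfl⟩, by simp; omega, by simp, by simp; omega⟩
    · exact ⟨Or.inr (Or.inl ⟨a, ha.1, rfl⟩), by simp, by simp; omega, by simp; omega⟩
    · by_cases hx : 1 ≤ x
      · rw [if_pos hx, mem_singleton] at hst
        subst hst
        exact ⟨Or.inr (Or.inr rfl), by simpa, by simp; omega, by simp; omega⟩
      · rw [if_neg hx] at hst
        exact absurd hst (notMem_empty _)
  have hmap : ∀ p ∈ pathFinset x y, p.getLastD (0, 0) ∈ T := by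
    intro p hp
    rw [mem_pathFinset] at hp
    have hne : p ≠ [] := nonempty_of_path hp.1 hy
    rw [getLastD_eq_getLast hne]
    obtain ⟨hS, h1, h2, h3, h4, h5⟩ := decomp hne hp.1 hp.2
    rw [hT]
    simp only [mem_union, mem_image, mem_Icc]
    rcases hS with ⟨a, ha, heq⟩ | ⟨a, ha, heq⟩ | heq
    · left; left
      exact ⟨a, ⟨ha, by rw [heq] at h1; simpa using h1⟩, heq.symm⟩
    · left; right
      refine ⟨a, ⟨ha, ?_⟩, heq.symm⟩
      rw [heq] at h2 h5
      simp at h2 h5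
      omega
    · right
      have hx : 1 ≤ x := by rw [heq] at h1; simpa using h1
      rw [if_pos hx]
      simp [heq]
  have hfiber : ∀ st ∈ T,
      ((pathFinset x y).filter fun p => p.getLastD (0, 0) = st).card
        = c (x - st.1) (y - st.2) := by
    intro st hst
    obtain ⟨hS, h1, h2, h3⟩ := hTfact st hst
    rw [c_eq_card]
    refine (Finset.card_nbij' (fun p => p.dropLast) (fun q => q ++ [st]) ?_ ?_ ?_ ?_).symm.symm
    · intro p hp
      rw [Finset.mem_coe, Finset.mem_filter] at hp
      obtain ⟨hp1, hp2⟩ := hp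
      rw [mem_pathFinset] at hp1
      have hne : p ≠ [] := nonempty_of_path hp1.1 hy
      have hlast : p.getLast hne = st := by
        rw [← getLastD_eq_getLast hne (0, 0), hp2]
      obtain ⟨-, -, -, hq1, hq2, -⟩ := decomp hne hp1.1 hp1.2
      rw [hlast] at hq1
      exact mem_pathFinset.mpr ⟨hq1, hq2⟩
    · intro q hq
      rw [Finset.mem_coe, mem_pathFinset] at hq
      rw [Finset.mem_coe, Finset.mem_filter]
      refine ⟨mem_pathFinset.mpr ⟨?_, ?_⟩, ?_⟩
      · have := isPath_append hS hq.1
        rwa [show x - st.1 + st.1 = x by omega, show y - st.2 + st.2 = y by omega] at this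
      · exact isCatalan_append hq.1 hq.2 (by omega)
      · exact List.getLastD_concat
    · intro p hp
      rw [Finset.mem_coe, Finset.mem_filter] at hp
      obtain ⟨hp1, hp2⟩ := hp
      rw [mem_pathFinset] at hp1
      have hne : p ≠ [] := nonempty_of_path hp1.1 hy
      have hlast : p.getLast hne = st := by
        rw [← getLastD_eq_getLast hne (0, 0), hp2]
      conv_rhs => rw [← List.dropLast_concat_getLast hne]
      rw [hlast]
    · intro q hq
      exact List.dropLast_concat
  rw [c_eq_card, Finset.card_eq_sum_card_fiberwise hmap, Finset.sum_congr rfl hfiber, hT]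
  have hd1 : Disjoint ((Icc 1 x).image fun a => (a, (0:ℕ)))
      ((Icc 1 (y-x)).image fun a => ((0:ℕ), a)) := by
    rw [Finset.disjoint_left]
    rintro ⟨u, v⟩ h1 h2
    simp only [mem_image, mem_Icc, Prod.mk.injEq] at h1 h2
    obtain ⟨a, ha, rfl, rfl⟩ := h1
    obtain ⟨b, hb, hb1, -⟩ := h2
    omega
  have hd2 : Disjoint ((((Icc 1 x).image fun a => (a, (0:ℕ)))) ∪
      ((Icc 1 (y-x)).image fun a => ((0:ℕ), a)))
      (if 1 ≤ x then ({((1:ℕ), (1:ℕ))} : Finset (ℕ × ℕ)) else ∅) := by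
    rw [Finset.disjoint_right]
    rintro ⟨u, v⟩ h1 h2
    by_cases hx : 1 ≤ x
    · rw [if_pos hx, mem_singleton] at h1
      obtain ⟨rfl, rfl⟩ := Prod.mk.injEq .. ▸ h1
      simp only [mem_union, mem_image, mem_Icc, Prod.mk.injEq] at h2
      rcases h2 with ⟨a, -, -, h0⟩ | ⟨a, -, h0, -⟩ <;> omega
    · rw [if_neg hx] at h1
      exact absurd h1 (notMem_empty _)
  rw [Finset.sum_union hd2, Finset.sum_union hd1]
  rw [Finset.sum_image (by intro a _ b _ h; simpa using h),
      Finset.sum_image (by intro a _ b _ h; simpa using h)]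
  have e1 : ∀ a ∈ Icc 1 x, c (x - (a, (0:ℕ)).1) (y - (a, (0:ℕ)).2) = c (x - a) y := by
    intro a _; simp
  have e2 : ∀ a ∈ Icc 1 (y - x), c (x - ((0:ℕ), a).1) (y - ((0:ℕ), a).2) = c x (y - a) := by
    intro a _; simp
  rw [Finset.sum_congr rfl e1, Finset.sum_congr rfl e2]
  by_cases hx : 1 ≤ x
  · rw [if_pos hx, if_pos hx]
    simp only [Finset.sum_singleton]
    omega
  · rw [if_neg hx, if_neg hx]
    simp
open PowerSeries

noncomputable def G (h : ℕ) : PowerSeries ℚ :=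
  PowerSeries.mk fun n => if h ≤ n then (c (n - h) n : ℚ) else 0

noncomputable def Hs (h : ℕ) : PowerSeries ℚ :=
  PowerSeries.mk fun n => ∑ k ∈ Icc (h + 1) n, (c (n - k) n : ℚ)

noncomputable def Ssum (h : ℕ) : PowerSeries ℚ := ∑ a ∈ Icc 1 h, X ^ a * G (h - a)

lemma coeff_G (n h : ℕ) :
    (coeff n) (G h) = if h ≤ n then (c (n - h) n : ℚ) else 0 := coeff_mk _ _

lemma Rel (h : ℕ) :
    G h = (if h = 0 then 1 else 0) + X * G h + Ssum h + Hs h := by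
  ext n
  rw [map_add, map_add, map_add]
  have hA : (coeff n) (if h = 0 then (1 : PowerSeries ℚ) else 0)
      = if h = 0 ∧ n = 0 then 1 else 0 := by
    by_cases h1 : h = 0
    · simp [h1, coeff_one]
    · simp [h1]
  have hB : (coeff n) (X * G h)
      = if h + 1 ≤ n then (c (n - 1 - h) (n - 1) : ℚ) else 0 := by
    rw [show (X : PowerSeries ℚ) * G h = X ^ 1 * G h by ring, coeff_X_pow_mul', coeff_G]
    split_ifs <;> first | rfl | (exfalso; omega)
  have hC : (coeff n) (Ssum h)
      = ∑ a ∈ Icc 1 h, (if a ≤ n then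
          (if h - a ≤ n - a then (c (n - a - (h - a)) (n - a) : ℚ) else 0) else 0) := by
    rw [Ssum, map_sum]
    refine Finset.sum_congr rfl fun a _ => ?_
    rw [coeff_X_pow_mul', coeff_G]
  have hD : (coeff n) (Hs h) = ∑ k ∈ Icc (h + 1) n, (c (n - k) n : ℚ) := coeff_mk _ _
  rw [hA, hB, hC, hD, coeff_G]
  by_cases hhn : h ≤ n
  · by_cases hn0 : n = 0
    · subst hn0
      have h0 : h = 0 := by omega
      subst h0
      rw [if_pos le_rfl, if_pos ⟨rfl, rfl⟩, if_neg (by omega)]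
      simp [c_zero_zero]
    · -- main case : n ≥ 1
      have key : c (n - h) n = (if h + 1 ≤ n then c (n - 1 - h) (n - 1) else 0)
          + (∑ k ∈ Icc (h + 1) n, c (n - k) n) + ∑ a ∈ Icc 1 h, c (n - h) (n - a) := by
        rw [c_rec (n - h) n (by omega) (by omega)]
        congr 1
        · congr 1
          · split_ifs with h1 h2 h3
            · rw [show n - h - 1 = n - 1 - h by omega]
            · exfalso; omega
            · exfalso; omega
            · rfl
          · refine Finset.sum_nbij' (fun a => a + h) (fun k => k - h) ?_ ?_ ?_ ?_ ?_
            · intro a ha; simp only [mem_Icc] at ha ⊢; omega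
            · intro k hk; simp only [mem_Icc] at hk ⊢; omega
            · intro a ha; simp only [mem_Icc] at ha; show a + h - h = a; omega
            · intro k hk; simp only [mem_Icc] at hk; show k - h + h = k; omega
            · intro a ha; simp only [mem_Icc] at ha
              show c (n - h - a) n = c (n - (a + h)) n
              rw [show n - h - a = n - (a + h) by omega]
        · rw [show n - (n - h) = h by omega]
      rw [if_pos hhn, if_neg (by omega : ¬(h = 0 ∧ n = 0))]
      have hCC : ∑ a ∈ Icc 1 h, (if a ≤ n then
          (if h - a ≤ n - a then (c (n - a - (h - a)) (n - a) : ℚ) else 0) else 0)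
          = ∑ a ∈ Icc 1 h, (c (n - h) (n - a) : ℚ) := by
        refine Finset.sum_congr rfl fun a ha => ?_
        rw [mem_Icc] at ha
        rw [if_pos (by omega), if_pos (by omega), show n - a - (h - a) = n - h by omega]
      rw [hCC]
      have keyQ := congrArg (Nat.cast : ℕ → ℚ) key
      push_cast [apply_ite (Nat.cast : ℕ → ℚ)] at keyQ
      rw [keyQ]
      ring
  · rw [if_neg hhn, if_neg (by omega : ¬(h = 0 ∧ n = 0)), if_neg (by omega : ¬(h + 1 ≤ n))]
    rw [Finset.sum_eq_zero, Finset.Icc_eq_empty (by omega), Finset.sum_empty]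
    · norm_num
    · intro a ha
      rw [mem_Icc] at ha
      split_ifs with h1 h2
      · exfalso; omega
      · rfl
      · rfl

lemma Sshift (h : ℕ) : Ssum (h + 1) = X * Ssum h + X * G h := by
  rw [Ssum, Ssum, Finset.mul_sum]
  have hins : Icc 1 (h + 1) = insert 1 (Icc 2 (h + 1)) := by
    ext a; simp only [mem_Icc, mem_insert]; omega
  rw [hins, Finset.sum_insert (by simp [mem_Icc])]
  rw [pow_one, show h + 1 - 1 = h by omega, add_comm (X * G h)]
  congr 1
  refine Finset.sum_nbij' (fun a => a - 1) (fun a => a + 1) ?_ ?_ ?_ ?_ ?_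
  · intro a ha; simp only [mem_Icc] at ha ⊢; omega
  · intro a ha; simp only [mem_Icc] at ha ⊢; omega
  · intro a ha; simp only [mem_Icc] at ha; show a - 1 + 1 = a; omega
  · intro a ha; simp only [mem_Icc] at ha; show a + 1 - 1 = a; omega
  · intro a ha
    simp only [mem_Icc] at ha
    show X ^ a * G (h + 1 - a) = X * (X ^ (a - 1) * G (h - (a - 1)))
    rw [show h - (a - 1) = h + 1 - a by omega, ← mul_assoc, ← pow_succ',
        show a - 1 + 1 = a by omega]

lemma HsG (h : ℕ) : Hs h = Hs (h + 1) + G (h + 1) := by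
  ext n
  rw [map_add, Hs, Hs, coeff_mk, coeff_mk, coeff_G]
  by_cases hn : h + 1 ≤ n
  · rw [if_pos hn, show Icc (h + 1) n = insert (h + 1) (Icc (h + 2) n) by
      ext a; simp only [mem_Icc, mem_insert]; omega,
      Finset.sum_insert (by rw [mem_Icc]; omega)]
    ring
  · rw [if_neg hn, Finset.Icc_eq_empty (by omega), Finset.Icc_eq_empty (by omega)]
    simp

lemma Ssum_zero : Ssum 0 = 0 := by simp [Ssum]

lemma RelR (h : ℕ) :
    (2 - X) * G (h + 1) - X * (2 - X) * G h - (1 - X) * Hs h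
      = -(if h = 0 then X else 0) := by
  have e1 : G (h + 1) = X * G (h + 1) + Ssum (h + 1) + Hs (h + 1) := by
    have := Rel (h + 1); simpa using this
  have s1 := Sshift h
  have hg := HsG h
  cases h with
  | zero =>
      have e0 : G 0 = 1 + X * G 0 + Ssum 0 + Hs 0 := by have := Rel 0; simpa using this
      rw [if_pos rfl]
      linear_combination e1 - X * e0 + s1 - hg
  | succ k =>
      have e0 : G (k + 1) = X * G (k + 1) + Ssum (k + 1) + Hs (k + 1) := by
        have := Rel (k + 1); simpa using this
      rw [if_neg (by omega)]
      linear_combination e1 - X * e0 + s1 - hg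

lemma RelT (h : ℕ) :
    (2 - X) * G (h + 2) - (1 + 2 * X - X ^ 2) * G (h + 1) + X * (2 - X) * G h
      = (if h = 0 then X else 0) := by
  have r1 := RelR (h + 1)
  rw [if_neg (by omega)] at r1
  have r0 := RelR h
  have hg := HsG h
  linear_combination r1 - r0 - (1 - X) * hg

lemma RelII : (2 - X) * G 1 = G 0 - 1 := by
  have r0 := RelR 0
  rw [if_pos rfl] at r0
  have e0 : G 0 = 1 + X * G 0 + Ssum 0 + Hs 0 := by have := Rel 0; simpa using this
  have s0 := Ssum_zero
  linear_combination r0 - (1 - X) * e0 - (1 - X) * s0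
def Cc (n : ℕ) : ℚ :=
  if n = 0 then 1 else if n = 1 then -12 else if n = 2 then 18 else
    if n = 3 then -8 else if n = 4 then 1 else 0

def w : ℕ → ℚ
  | 0 => 1
  | (n + 1) => (Cc (n + 1) - ∑ k ∈ (Finset.Ioo 0 (n + 1)).attach, w k.1 * w (n + 1 - k.1)) / 2
decreasing_by
  · have := Finset.mem_Ioo.mp k.2; omega
  · have := Finset.mem_Ioo.mp k.2; omega

lemma w_zero : w 0 = 1 := by rw [w]

lemma w_succ (n : ℕ) :
    w (n + 1) = (Cc (n + 1) - ∑ k ∈ Finset.Ioo 0 (n + 1), w k * w (n + 1 - k)) / 2 := by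
  rw [w]
  congr 1
  rw [sub_right_inj]
  exact Finset.sum_attach (Finset.Ioo 0 (n + 1)) (fun k => w k * w (n + 1 - k))

noncomputable def Wser : PowerSeries ℚ := PowerSeries.mk w

lemma Wsq : Wser * Wser = 1 - 12 * X + 18 * X ^ 2 - 8 * X ^ 3 + X ^ 4 := by
  have hC : (1 - 12 * X + 18 * X ^ 2 - 8 * X ^ 3 + X ^ 4 : PowerSeries ℚ)
      = C 1 + C (-12) * X ^ 1 + C 18 * X ^ 2 + C (-8) * X ^ 3 + C 1 * X ^ 4 := by
    have h1 : (C (-12 : ℚ) : PowerSeries ℚ) = -12 := by rw [map_neg, map_ofNat]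
    have h2 : (C (18 : ℚ) : PowerSeries ℚ) = 18 := by rw [map_ofNat]
    have h3 : (C (-8 : ℚ) : PowerSeries ℚ) = -8 := by rw [map_neg, map_ofNat]
    rw [h1, h2, h3, map_one]
    ring
  rw [hC]
  ext n
  rw [Wser, coeff_mul, Finset.Nat.sum_antidiagonal_eq_sum_range_succ_mk]
  simp only [coeff_mk]
  have hR : ∀ m : ℕ, (coeff m) ((C 1 : PowerSeries ℚ) + C (-12) * X ^ 1 + C 18 * X ^ 2 + C (-8) * X ^ 3
      + C 1 * X ^ 4) = Cc m := by
    intro m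
    rw [map_add, map_add, map_add, map_add, coeff_C_mul, coeff_C_mul, coeff_C_mul, coeff_C_mul,
        coeff_X_pow, coeff_X_pow, coeff_X_pow, coeff_X_pow, coeff_C, Cc]
    rcases m with _ | _ | _ | _ | _ | m <;> norm_num
    rw [if_neg (by omega), if_neg (by omega), if_neg (by omega), if_neg (by omega),
        if_neg (by omega)]
    norm_num
  rw [hR]
  cases n with
  | zero => norm_num [w_zero, Cc]
  | succ n =>
      have hsplit : Finset.range (n + 2) = insert 0 (insert (n + 1) (Finset.Ioo 0 (n + 1))) := by
        ext a
        simp only [Finset.mem_range, Finset.mem_insert, Finset.mem_Ioo]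
        omega
      rw [hsplit, Finset.sum_insert (by simp), Finset.sum_insert (by simp)]
      rw [show n + 1 - 0 = n + 1 by omega, Nat.sub_self, w_zero, w_succ]
      have : ∀ a ∈ Finset.Ioo 0 (n + 1), w a * w (n + 1 - a) = w a * w (n + 1 - a) := fun _ _ => rfl
      ring
noncomputable def Dp (h : ℕ) : PowerSeries ℚ :=
  2 * (2 - X) * G (h + 1) - ((1 + 2 * X - X ^ 2) - Wser) * G h

lemma coeff_mul_G (f : PowerSeries ℚ) {n h : ℕ} (hn : n < h) :
    (coeff n) (f * G h) = 0 := by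
  rw [coeff_mul]
  refine Finset.sum_eq_zero ?_
  rintro ⟨i, j⟩ hij
  rw [Finset.HasAntidiagonal.mem_antidiagonal] at hij
  have : j < h := by omega
  simp only [coeff_G, if_neg (by omega : ¬ h ≤ j), mul_zero]

lemma constAW : (constantCoeff) ((1 + 2 * X - X ^ 2 : PowerSeries ℚ) - Wser) = 0 := by
  rw [Wser]
  simp [constantCoeff_mk, w_zero, map_ofNat]

lemma coeff_Dp {n h : ℕ} (hn : n ≤ h) : (coeff n) (Dp h) = 0 := by
  rw [Dp, map_sub, coeff_mul_G _ (by omega : n < h + 1)]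
  rw [coeff_mul]
  rw [zero_sub, neg_eq_zero]
  refine Finset.sum_eq_zero ?_
  rintro ⟨i, j⟩ hij
  rw [Finset.HasAntidiagonal.mem_antidiagonal] at hij
  rcases Nat.lt_or_ge j h with hj | hj
  · simp only [coeff_G, if_neg (by omega : ¬ h ≤ j), mul_zero]
  · have hjh : j = h := by omega
    have hi : i = 0 := by omega
    subst hjh; subst hi
    rw [coeff_zero_eq_constantCoeff, constAW, zero_mul]

lemma Drec (h : ℕ) :
    2 * (2 - X) * Dp (h + 1)
      = ((1 + 2 * X - X ^ 2) + Wser) * Dp h + 4 * (2 - X) * (if h = 0 then X else 0) := by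
  simp only [Dp]
  linear_combination 4 * (2 - X) * (RelT h) - (G h) * Wsq

lemma pows (h : ℕ) :
    (2 * (2 - X)) ^ h * Dp (h + 1) = ((1 + 2 * X - X ^ 2) + Wser) ^ h * Dp 1 := by
  induction h with
  | zero => simp
  | succ k ih =>
      have hd := Drec (k + 1)
      rw [if_neg (by omega), mul_zero, add_zero] at hd
      calc (2 * (2 - X)) ^ (k + 1) * Dp (k + 2)
          = (2 * (2 - X)) ^ k * (2 * (2 - X) * Dp (k + 2)) := by ring
        _ = (2 * (2 - X)) ^ k * (((1 + 2 * X - X ^ 2) + Wser) * Dp (k + 1)) := by rw [hd]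
        _ = ((1 + 2 * X - X ^ 2) + Wser) * ((2 * (2 - X)) ^ k * Dp (k + 1)) := by ring
        _ = ((1 + 2 * X - X ^ 2) + Wser) ^ (k + 1) * Dp 1 := by rw [ih]; ring

lemma Dp_one : Dp 1 = 0 := by
  have hvan : ∀ n, (coeff n) (Dp 1) = 0 := by
    intro n
    induction n using Nat.strong_induction_on with
    | _ n ih =>
      have h1 : (coeff n) (((1 + 2 * X - X ^ 2) + Wser) ^ n * Dp 1) = 0 := by
        rw [← pows n, coeff_mul]
        refine Finset.sum_eq_zero ?_
        rintro ⟨i, j⟩ hij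
        rw [Finset.HasAntidiagonal.mem_antidiagonal] at hij
        rw [coeff_Dp (show j ≤ n + 1 by omega), mul_zero]
      rw [coeff_mul, Finset.Nat.sum_antidiagonal_eq_sum_range_succ_mk] at h1
      rw [Finset.sum_eq_single 0 (fun k hk hk0 => by
            rw [ih (n - k) (by rw [Finset.mem_range] at hk; omega), mul_zero])
          (fun h => absurd (Finset.mem_range.mpr (Nat.succ_pos n)) h)] at h1
      rw [Nat.sub_zero] at h1
      have hb : (coeff 0) (((1 + 2 * X - X ^ 2 : PowerSeries ℚ) + Wser) ^ n) = 2 ^ n := by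
        rw [coeff_zero_eq_constantCoeff, map_pow, Wser]
        norm_num [constantCoeff_mk, w_zero, map_ofNat]
      rw [hb] at h1
      exact (mul_eq_zero.mp h1).resolve_left (pow_ne_zero n two_ne_zero)
  ext n
  rw [hvan, map_zero]

lemma two_ne_zero' : (2 : PowerSeries ℚ) ≠ 0 := by
  intro h
  have := congrArg (constantCoeff) h
  rw [map_ofNat, map_zero] at this
  norm_num at this

lemma e1 : (((1 + 2 * X - X ^ 2) + Wser) - 2 * X * (2 - X) ^ 2) * G 0
    = ((1 + 2 * X - X ^ 2) + Wser) - 2 * (2 - X) * X := by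
  have d0 := Drec 0
  rw [if_pos rfl, Dp_one, mul_zero] at d0
  simp only [Dp] at d0
  have r2 := RelII
  refine mul_left_cancel₀ two_ne_zero' ?_
  linear_combination (-1 : PowerSeries ℚ) * d0
    - 2 * ((1 + 2*X - X^2) + Wser) * r2 - (G 0) * Wsq

lemma e2 : ((1 + 2 * X - X ^ 2) + Wser) ^ 2
    - 2 * (1 + 2 * X - X ^ 2) * ((1 + 2 * X - X ^ 2) + Wser) + 4 * X * (2 - X) ^ 2 = 0 := by
  linear_combination Wsq

lemma hu : (((1 + 2 * X - X ^ 2 : PowerSeries ℚ) + Wser) - 2 * X * (2 - X) ^ 2) ≠ 0 := by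
  intro h
  have := congrArg (constantCoeff) h
  rw [Wser] at this
  simp [constantCoeff_mk, w_zero, map_ofNat] at this

lemma T0 : X * (2 - X) ^ 2 * (G 0) ^ 2 - (1 + 2 * X - X ^ 2) * (G 0) + 1 = 0 := by
  have key : ((((1 + 2 * X - X ^ 2) + Wser) - 2 * X * (2 - X) ^ 2)) ^ 2
      * (X * (2 - X) ^ 2 * (G 0) ^ 2 - (1 + 2 * X - X ^ 2) * (G 0) + 1) = 0 := by
    linear_combination
      (X * (2 - X) ^ 2 * (((((1 + 2 * X - X ^ 2) + Wser) - 2 * X * (2 - X) ^ 2)) * G 0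
          + (((1 + 2 * X - X ^ 2) + Wser) - 2 * (2 - X) * X))
        - (1 + 2 * X - X ^ 2) * ((((1 + 2 * X - X ^ 2) + Wser) - 2 * X * (2 - X) ^ 2))) * e1
      + (2 * X - 3 * X ^ 2 + X ^ 3) * e2
  rcases mul_eq_zero.mp key with h | h
  · exact absurd (pow_eq_zero_iff two_ne_zero |>.mp h) hu
  · exact h

end Stmt9Aux

theorem stmt9 (P1 : PowerSeries ℚ)
    (hP : P1 = PowerSeries.mk fun n => (pCatalan S1 n : ℚ)) :
    ((1 + 2 * PowerSeries.X - PowerSeries.X ^ 2) -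
        2 * PowerSeries.X * (PowerSeries.X - 2) ^ 2 * P1) ^ 2 =
      (PowerSeries.X - 1) *
        (-1 + 11 * PowerSeries.X - 7 * PowerSeries.X ^ 2 + PowerSeries.X ^ 3) := by
  subst hP
  have hPG : (PowerSeries.mk fun n => (pCatalan S1 n : ℚ)) = Stmt9Aux.G 0 := by
    ext n
    rw [PowerSeries.coeff_mk, Stmt9Aux.coeff_G, if_pos (Nat.zero_le n), Nat.sub_zero]
    rfl
  rw [hPG]
  have h := Stmt9Aux.T0
  linear_combination (4 * PowerSeries.X * (2 - PowerSeries.X) ^ 2) * h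
end

section
/- Let S₂ = {(a,0) : a ≥ 1} ∪ {(0,a) : a ≥ 1} ∪ {(1,1),(2,2)} (all rook steps together with the bishop steps of length at most 2), let p_n be the number of Catalan S₂-paths from (0,0) to (n,n), and let P₂(t) = Σ_{n≥0} p_n tⁿ ∈ ℚ⟦t⟧. Then in ℚ⟦t⟧: ((1 + 3t + t²) − 2t(1−t)(2+t)²·P₂(t))² = 1 − 10t − 5t² + 2t³ + t⁴. -/
/-- All rook steps together with the bishop steps of length at most 2. -/
def S2 : Set (ℕ × ℕ) :=
  {st | (∃ a : ℕ, 1 ≤ a ∧ st = (a, 0)) ∨ (∃ a : ℕ, 1 ≤ a ∧ st = (0, a)) ∨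
        st = (1, 1) ∨ st = (2, 2)}

namespace Stmt10Aux

open Finset

/-- Catalan path prefixes with `x + y = k` ending at height `y - x = h`. -/
def W (k h : ℕ) : Set (List (ℕ × ℕ)) :=
  {p | (∀ st ∈ p, st ∈ S2) ∧ IsCatalan p ∧
       (p.map Prod.snd).sum = (p.map Prod.fst).sum + h ∧
       (p.map Prod.fst).sum + (p.map Prod.snd).sum = k}

/-- The number of Catalan path prefixes with `x + y = k` ending at height `h`. -/
noncomputable def c (k h : ℕ) : ℕ := (W k h).ncard

lemma xPart_length (p : List (ℕ × ℕ)) : xPart p p.length = (p.map Prod.fst).sum := by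
  simp [xPart]

lemma yPart_length (p : List (ℕ × ℕ)) : yPart p p.length = (p.map Prod.snd).sum := by
  simp [yPart]

lemma S2_sum_pos {st : ℕ × ℕ} (h : st ∈ S2) : 1 ≤ st.1 + st.2 := by
  rcases h with ⟨a, ha, rfl⟩ | ⟨a, ha, rfl⟩ | rfl | rfl <;> simp <;> omega

lemma len_le_sum {l : List ℕ} (h : ∀ x ∈ l, 1 ≤ x) : l.length ≤ l.sum := by
  induction l with
  | nil => simp
  | cons a t ih =>
    simp only [List.length_cons, List.sum_cons]
    have ha := h a (by simp)
    have := ih fun x hx => h x (by simp [hx])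
    omega

lemma sum_map_add_eq (p : List (ℕ × ℕ)) :
    (p.map fun st => st.1 + st.2).sum = (p.map Prod.fst).sum + (p.map Prod.snd).sum := by
  induction p with
  | nil => simp
  | cons a t ih =>
    simp only [List.map_cons, List.sum_cons, ih]
    omega

lemma length_le_of_mem_W {k h : ℕ} {p : List (ℕ × ℕ)} (hp : p ∈ W k h) : p.length ≤ k := by
  obtain ⟨hS, _, _, hsum⟩ := hp
  have h1 : (p.map fun st => st.1 + st.2).sum = k := by
    rw [← hsum, sum_map_add_eq]
  have h2 : p.length ≤ (p.map fun st => st.1 + st.2).sum := by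
    have := len_le_sum (l := p.map fun st => st.1 + st.2) ?_
    · simpa using this
    · intro x hx
      simp only [List.mem_map] at hx
      obtain ⟨st, hst, rfl⟩ := hx
      exact S2_sum_pos (hS st hst)
  omega

lemma entry_le_of_mem_W {k h : ℕ} {p : List (ℕ × ℕ)} (hp : p ∈ W k h) {st : ℕ × ℕ}
    (hst : st ∈ p) : st.1 ≤ k ∧ st.2 ≤ k := by
  obtain ⟨_, _, _, hsum⟩ := hp
  constructor
  · have : st.1 ≤ (p.map Prod.fst).sum :=
      List.single_le_sum (by simp) _ (List.mem_map_of_mem hst)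
    omega
  · have : st.2 ≤ (p.map Prod.snd).sum :=
      List.single_le_sum (by simp) _ (List.mem_map_of_mem hst)
    omega

lemma W_finite (k h : ℕ) : (W k h).Finite := by
  classical
  have hsub : W k h ⊆ (fun l : List (Fin (k+1) × Fin (k+1)) =>
      l.map fun st => ((st.1 : ℕ), (st.2 : ℕ))) ''
      {l : List (Fin (k+1) × Fin (k+1)) | l.length ≤ k} := by
    intro p hp
    refine ⟨p.attach.map fun st =>
      (⟨st.1.1, Nat.lt_succ_of_le (entry_le_of_mem_W hp st.2).1⟩,
       ⟨st.1.2, Nat.lt_succ_of_le (entry_le_of_mem_W hp st.2).2⟩), ?_, ?_⟩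
    · simp only [Set.mem_setOf_eq, List.length_map, List.length_attach]
      exact length_le_of_mem_W hp
    · dsimp only
      rw [List.map_map]
      have : p.attach.map ((fun st : Fin (k+1) × Fin (k+1) => ((st.1 : ℕ), (st.2 : ℕ))) ∘
          (fun st => (⟨st.1.1, Nat.lt_succ_of_le (entry_le_of_mem_W hp st.2).1⟩,
            ⟨st.1.2, Nat.lt_succ_of_le (entry_le_of_mem_W hp st.2).2⟩))) =
          p.attach.map (fun st => st.1) := by
        refine List.map_congr_left fun st _ => ?_
        simp
      rw [this, List.attach_map_subtype_val]
  exact Set.Finite.subset ((List.finite_length_le _ k).image _) hsub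

lemma W_zero (h : ℕ) : W 0 h = if h = 0 then {([] : List (ℕ × ℕ))} else ∅ := by
  split_ifs with hh
  · subst hh
    ext p
    simp only [Set.mem_singleton_iff, W, Set.mem_setOf_eq]
    constructor
    · rintro ⟨hS, _, _, hsum⟩
      match p with
      | [] => rfl
      | st :: t =>
        exfalso
        have h1 := S2_sum_pos (hS st (by simp))
        simp only [List.map_cons, List.sum_cons] at hsum
        omega
    · rintro rfl
      refine ⟨by simp, fun j hj => ?_, by simp, by simp⟩
      simp at hj
      simp [hj, xPart, yPart]
  · ext p
    simp only [Set.mem_empty_iff_false, iff_false, W, Set.mem_setOf_eq]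
    rintro ⟨_, _, heq, hsum⟩
    omega

lemma c_zero (h : ℕ) : c 0 h = if h = 0 then 1 else 0 := by
  rw [c, W_zero]
  split_ifs <;> simp

end Stmt10Aux
namespace Stmt10Aux

open Finset

lemma xPart_append_le {q r : List (ℕ × ℕ)} {j : ℕ} (hj : j ≤ q.length) :
    xPart (q ++ r) j = xPart q j := by
  rw [xPart, xPart, List.take_append]
  have : j - q.length = 0 := by omega
  simp [this]

lemma yPart_append_le {q r : List (ℕ × ℕ)} {j : ℕ} (hj : j ≤ q.length) :
    yPart (q ++ r) j = yPart q j := by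
  rw [yPart, yPart, List.take_append]
  have : j - q.length = 0 := by omega
  simp [this]

lemma isCatalan_append_iff (q : List (ℕ × ℕ)) (st : ℕ × ℕ) :
    IsCatalan (q ++ [st]) ↔ IsCatalan q ∧
      (q.map Prod.fst).sum + st.1 ≤ (q.map Prod.snd).sum + st.2 := by
  constructor
  · intro hcat
    refine ⟨fun j hj => ?_, ?_⟩
    · have := hcat j (by simp; omega)
      rwa [xPart_append_le hj, yPart_append_le hj] at this
    · have := hcat (q.length + 1) (by simp)
      rw [show q.length + 1 = (q ++ [st]).length by simp] at this
      rw [xPart_length, yPart_length] at this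
      simpa using this
  · rintro ⟨hcat, hfin⟩ j hj
    rcases Nat.lt_or_ge j (q.length + 1) with hlt | hge
    · have hj' : j ≤ q.length := by omega
      rw [xPart_append_le hj', yPart_append_le hj']
      exact hcat j hj'
    · have hj' : j = q.length + 1 := by simp at hj; omega
      subst hj'
      rw [show q.length + 1 = (q ++ [st]).length by simp, xPart_length, yPart_length]
      simpa using hfin

lemma mem_W_append_iff {q : List (ℕ × ℕ)} {st : ℕ × ℕ} (hst : st ∈ S2) {k h : ℕ} :
    (q ++ [st]) ∈ W k h ↔
      ∃ k' h', q ∈ W k' h' ∧ k = k' + st.1 + st.2 ∧ h + st.1 = h' + st.2 := by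
  constructor
  · rintro ⟨hS, hcat, hh, hk⟩
    rw [isCatalan_append_iff] at hcat
    obtain ⟨hcatq, hfin⟩ := hcat
    have hxy : (q.map Prod.fst).sum ≤ (q.map Prod.snd).sum := by
      have := hcatq q.length le_rfl
      rwa [xPart_length, yPart_length] at this
    simp only [List.map_append, List.sum_append, List.map_cons, List.map_nil, List.sum_cons,
      List.sum_nil] at hh hk
    refine ⟨(q.map Prod.fst).sum + (q.map Prod.snd).sum,
      (q.map Prod.snd).sum - (q.map Prod.fst).sum, ⟨?_, hcatq, by omega, rfl⟩, by omega, by omega⟩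
    intro s hs
    exact hS s (by simp [hs])
  · rintro ⟨k', h', ⟨hS, hcat, hh', hk'⟩, rfl, heq⟩
    refine ⟨?_, ?_, ?_, ?_⟩
    · intro s hs
      rcases List.mem_append.mp hs with h1 | h1
      · exact hS s h1
      · simp at h1; subst h1; exact hst
    · rw [isCatalan_append_iff]
      exact ⟨hcat, by omega⟩
    · simp only [List.map_append, List.sum_append, List.map_cons, List.map_nil, List.sum_cons,
        List.sum_nil]
      omega
    · simp only [List.map_append, List.sum_append, List.map_cons, List.map_nil, List.sum_cons,
        List.sum_nil]
      omega

/-- The finset of possible last steps of a path counted by `c k h`. -/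
def lastSteps (k h : ℕ) : Finset (ℕ × ℕ) :=
  (((Finset.range (min h k)).image fun i => ((0 : ℕ), i + 1)) ∪
    ((Finset.range k).image fun i => (i + 1, (0 : ℕ)))) ∪
  ((if 2 ≤ k then {((1 : ℕ), (1 : ℕ))} else ∅) ∪
    (if 4 ≤ k then {((2 : ℕ), (2 : ℕ))} else ∅))

lemma mem_lastSteps {k h : ℕ} {st : ℕ × ℕ} : st ∈ lastSteps k h ↔
    ((st.1 = 0 ∧ 1 ≤ st.2 ∧ st.2 ≤ min h k) ∨ (st.2 = 0 ∧ 1 ≤ st.1 ∧ st.1 ≤ k) ∨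
      (st = (1, 1) ∧ 2 ≤ k) ∨ (st = (2, 2) ∧ 4 ≤ k)) := by
  simp only [lastSteps, Finset.mem_union, Finset.mem_image, Finset.mem_range]
  constructor
  · rintro ((⟨i, hi, rfl⟩ | ⟨i, hi, rfl⟩) | hd)
    · exact Or.inl ⟨rfl, by omega, by omega⟩
    · exact Or.inr (Or.inl ⟨rfl, by omega, by omega⟩)
    · rcases hd with hd | hd
      · split_ifs at hd with h2
        · simp at hd; exact Or.inr (Or.inr (Or.inl ⟨by simp [hd, Prod.ext_iff], h2⟩))
        · simp at hd
      · split_ifs at hd with h4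
        · simp at hd; exact Or.inr (Or.inr (Or.inr ⟨by simp [hd, Prod.ext_iff], h4⟩))
        · simp at hd
  · rintro (⟨h1, h2, h3⟩ | ⟨h1, h2, h3⟩ | ⟨rfl, h2⟩ | ⟨rfl, h2⟩)
    · exact Or.inl (Or.inl ⟨st.2 - 1, by omega, by rw [← h1]; ext <;> simp <;> omega⟩)
    · exact Or.inl (Or.inr ⟨st.1 - 1, by omega, by rw [← h1]; ext <;> simp <;> omega⟩)
    · exact Or.inr (Or.inl (by simp [h2]))
    · exact Or.inr (Or.inr (by simp [h2]))

lemma lastSteps_mem_S2 {k h : ℕ} {st : ℕ × ℕ} (hst : st ∈ lastSteps k h) : st ∈ S2 := by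
  rw [mem_lastSteps] at hst
  rcases hst with ⟨h1, h2, _⟩ | ⟨h1, h2, _⟩ | ⟨rfl, _⟩ | ⟨rfl, _⟩
  · exact Or.inr (Or.inl ⟨st.2, h2, by rw [← h1]⟩)
  · exact Or.inl ⟨st.1, h2, by rw [← h1]⟩
  · exact Or.inr (Or.inr (Or.inl rfl))
  · exact Or.inr (Or.inr (Or.inr rfl))

lemma W_eq_biUnion {k h : ℕ} (hk : 1 ≤ k) :
    W k h = ⋃ st ∈ lastSteps k h,
      (fun q => q ++ [st]) '' W (k - st.1 - st.2) (h + st.1 - st.2) := by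
  ext p
  simp only [Set.mem_iUnion, Set.mem_image, exists_prop]
  constructor
  · intro hp
    have hne : p ≠ [] := by
      rintro rfl
      obtain ⟨_, _, _, hsum⟩ := hp
      simp at hsum
      omega
    obtain ⟨q, st, rfl⟩ : ∃ q st, p = q ++ [st] :=
      ⟨p.dropLast, p.getLast hne, (List.dropLast_append_getLast hne).symm⟩
    have hstS : st ∈ S2 := hp.1 st (by simp)
    obtain ⟨k', h', hq, hkeq, hheq⟩ := (mem_W_append_iff hstS).mp hp
    have hk' : k - st.1 - st.2 = k' := by omega
    have hh' : h + st.1 - st.2 = h' := by omega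
    refine ⟨st, ?_, q, by rw [hk', hh']; exact hq, rfl⟩
    rw [mem_lastSteps]
    rcases hstS with ⟨a, ha, hsteq⟩ | ⟨a, ha, hsteq⟩ | hsteq | hsteq <;> subst hsteq
    · exact Or.inr (Or.inl ⟨rfl, by simpa using ha, by simp at hkeq ⊢; omega⟩)
    · refine Or.inl ⟨rfl, by simpa using ha, ?_⟩
      simp only at hkeq hheq ⊢
      omega
    · exact Or.inr (Or.inr (Or.inl ⟨rfl, by simp at hkeq; omega⟩))
    · exact Or.inr (Or.inr (Or.inr ⟨rfl, by simp at hkeq; omega⟩))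
  · rintro ⟨st, hst, q, hq, rfl⟩
    have hstS := lastSteps_mem_S2 hst
    rw [mem_W_append_iff hstS]
    rw [mem_lastSteps] at hst
    rcases hst with ⟨h1, h2, h3⟩ | ⟨h1, h2, h3⟩ | ⟨heq, h2⟩ | ⟨heq, h2⟩
    · exact ⟨k - st.1 - st.2, h + st.1 - st.2, hq, by omega, by omega⟩
    · exact ⟨k - st.1 - st.2, h + st.1 - st.2, hq, by omega, by omega⟩
    · subst heq
      exact ⟨k - 1 - 1, h + 1 - 1, hq, by simp only; omega, by simp only; omega⟩
    · subst heq
      exact ⟨k - 2 - 2, h + 2 - 2, hq, by simp only; omega, by simp only; omega⟩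

end Stmt10Aux
namespace Stmt10Aux

open Finset

lemma ncard_biUnion {α β : Type*} [DecidableEq β] (s : Finset β) (f : β → Set α)
    (hfin : ∀ b ∈ s, (f b).Finite)
    (hdisj : ∀ b1 ∈ s, ∀ b2 ∈ s, b1 ≠ b2 → Disjoint (f b1) (f b2)) :
    (⋃ b ∈ s, f b).ncard = ∑ b ∈ s, (f b).ncard := by
  classical
  induction s using Finset.induction_on with
  | empty => simp
  | @insert a s' ha ih =>
    rw [Finset.sum_insert ha]
    have hbu : (⋃ b ∈ insert a s', f b) = f a ∪ ⋃ b ∈ s', f b := by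
      simp [Set.biUnion_insert]
    rw [hbu]
    have hfin' : (⋃ b ∈ s', f b).Finite :=
      Set.Finite.biUnion s'.finite_toSet fun b hb => hfin b (Finset.mem_insert_of_mem hb)
    have hdisj' : Disjoint (f a) (⋃ b ∈ s', f b) := by
      rw [Set.disjoint_left]
      intro x hx hx'
      simp only [Set.mem_iUnion, exists_prop] at hx'
      obtain ⟨b, hb, hxb⟩ := hx'
      have hne : a ≠ b := by rintro rfl; exact ha hb
      exact (Set.disjoint_left.mp (hdisj a (Finset.mem_insert_self a s') b
        (Finset.mem_insert_of_mem hb) hne)) hx hxb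
    rw [Set.ncard_union_eq hdisj' (hfin a (Finset.mem_insert_self a s')) hfin']
    rw [ih (fun b hb => hfin b (Finset.mem_insert_of_mem hb))
      (fun b1 hb1 b2 hb2 hne => hdisj b1 (Finset.mem_insert_of_mem hb1) b2
        (Finset.mem_insert_of_mem hb2) hne)]

lemma c_eq_sum_lastSteps {k h : ℕ} (hk : 1 ≤ k) :
    c k h = ∑ st ∈ lastSteps k h, c (k - st.1 - st.2) (h + st.1 - st.2) := by
  classical
  rw [c, W_eq_biUnion hk]
  rw [ncard_biUnion]
  · refine Finset.sum_congr rfl fun st _ => ?_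
    rw [Set.ncard_image_of_injective _ (List.append_left_injective [st])]
    rfl
  · intro st _
    exact Set.Finite.image _ (W_finite _ _)
  · intro st1 _ st2 _ hne
    rw [Set.disjoint_left]
    rintro p ⟨q1, _, rfl⟩ ⟨q2, _, heq⟩
    apply hne
    simp only at heq
    have h1 : (q2 ++ [st2]).getLast? = some st2 := List.getLast?_concat
    have h2 : (q2 ++ [st2]).getLast? = some st1 := by rw [heq]; exact List.getLast?_concat
    rw [h1] at h2
    exact (Option.some_injective _ h2).symm

theorem c_rec (k h : ℕ) (hk : 1 ≤ k) :
    c k h = (∑ i ∈ Finset.range (min h k), c (k - 1 - i) (h - 1 - i)) +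
      (if 2 ≤ k then c (k - 2) h else 0) + (if 4 ≤ k then c (k - 4) h else 0) +
      (∑ i ∈ Finset.range k, c (k - 1 - i) (h + 1 + i)) := by
  classical
  set g : ℕ × ℕ → ℕ := fun st => c (k - st.1 - st.2) (h + st.1 - st.2) with hg
  set A : Finset (ℕ × ℕ) := (Finset.range (min h k)).image fun i => ((0 : ℕ), i + 1) with hA
  set B : Finset (ℕ × ℕ) := (Finset.range k).image fun i => (i + 1, (0 : ℕ)) with hB
  set C : Finset (ℕ × ℕ) := if 2 ≤ k then {((1 : ℕ), (1 : ℕ))} else ∅ with hC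
  set D : Finset (ℕ × ℕ) := if 4 ≤ k then {((2 : ℕ), (2 : ℕ))} else ∅ with hD
  have hCsub : ∀ st ∈ C, st = ((1 : ℕ), (1 : ℕ)) := by
    intro st hst; rw [hC] at hst; split_ifs at hst <;> simpa using hst
  have hDsub : ∀ st ∈ D, st = ((2 : ℕ), (2 : ℕ)) := by
    intro st hst; rw [hD] at hst; split_ifs at hst <;> simpa using hst
  have hdAB : Disjoint A B := by
    rw [Finset.disjoint_left]
    rintro a ha hb
    rw [hA, Finset.mem_image] at ha
    rw [hB, Finset.mem_image] at hb
    obtain ⟨i, _, rfl⟩ := ha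
    obtain ⟨j, _, hj⟩ := hb
    exact absurd (congrArg Prod.fst hj) (by simp)
  have hdCD : Disjoint C D := by
    rw [Finset.disjoint_left]
    intro a ha hb
    rw [hCsub a ha] at hb
    exact absurd (hDsub _ hb) (by decide)
  have hdABCD : Disjoint (A ∪ B) (C ∪ D) := by
    rw [Finset.disjoint_left]
    intro a ha hb
    have ha1 : a.1 = 0 ∨ a.2 = 0 := by
      rcases Finset.mem_union.mp ha with h1 | h1
      · rw [hA, Finset.mem_image] at h1; obtain ⟨i, _, rfl⟩ := h1; left; rfl
      · rw [hB, Finset.mem_image] at h1; obtain ⟨i, _, rfl⟩ := h1; right; rfl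
    rcases Finset.mem_union.mp hb with h1 | h1
    · rw [hCsub a h1] at ha1; simp at ha1
    · rw [hDsub a h1] at ha1; simp at ha1
  have hsplit : c k h = (∑ st ∈ A, g st) + (∑ st ∈ B, g st) + ((∑ st ∈ C, g st) +
      (∑ st ∈ D, g st)) := by
    rw [c_eq_sum_lastSteps hk]
    have : lastSteps k h = (A ∪ B) ∪ (C ∪ D) := rfl
    rw [this, Finset.sum_union hdABCD, Finset.sum_union hdAB, Finset.sum_union hdCD]
  have hAsum : (∑ st ∈ A, g st) = ∑ i ∈ Finset.range (min h k), c (k - 1 - i) (h - 1 - i) := by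
    rw [hA, Finset.sum_image (by intro a _ b _ hab; simpa using hab)]
    refine Finset.sum_congr rfl fun i _ => ?_
    rw [hg]
    have e1 : k - 0 - (i + 1) = k - 1 - i := by omega
    have e2 : h + 0 - (i + 1) = h - 1 - i := by omega
    simp only [e1, e2]
  have hBsum : (∑ st ∈ B, g st) = ∑ i ∈ Finset.range k, c (k - 1 - i) (h + 1 + i) := by
    rw [hB, Finset.sum_image (by intro a _ b _ hab; simpa using hab)]
    refine Finset.sum_congr rfl fun i _ => ?_
    rw [hg]
    have e1 : k - (i + 1) - 0 = k - 1 - i := by omega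
    have e2 : h + (i + 1) - 0 = h + 1 + i := by omega
    simp only [e1, e2]
  have hCsum : (∑ st ∈ C, g st) = if 2 ≤ k then c (k - 2) h else 0 := by
    rw [hC]; split_ifs
    · rw [Finset.sum_singleton, hg]
      have e1 : k - 1 - 1 = k - 2 := by omega
      have e2 : h + 1 - 1 = h := by omega
      simp only [e1, e2]
    · simp
  have hDsum : (∑ st ∈ D, g st) = if 4 ≤ k then c (k - 4) h else 0 := by
    rw [hD]; split_ifs
    · rw [Finset.sum_singleton, hg]
      have e1 : k - 2 - 2 = k - 4 := by omega
      have e2 : h + 2 - 2 = h := by omega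
      simp only [e1, e2]
    · simp
  rw [hsplit, hAsum, hBsum, hCsum, hDsum]
  ring

end Stmt10Aux


open PowerSeries Finset

namespace EvAux

variable {S : Type*} [CommRing S]

/-- Evaluation of an outer power series at an inner power series `w` (with zero constant
term), i.e. substitution of `w` for the outer variable. -/
noncomputable def evFun (w : PowerSeries S) (G : PowerSeries (PowerSeries S)) : PowerSeries S :=
  PowerSeries.mk fun m => ∑ h ∈ range (m + 1), coeff m ((coeff h G) * w ^ h)

lemma coeff_mul_w_pow_eq_zero {w : PowerSeries S} (hw : constantCoeff w = 0)
    (f : PowerSeries S) {m h : ℕ} (hmh : m < h) :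
    coeff m (f * w ^ h) = 0 := by
  have hX : (X : PowerSeries S) ^ h ∣ f * w ^ h :=
    Dvd.dvd.mul_left (pow_dvd_pow_of_dvd (X_dvd_iff.mpr hw) h) f
  exact (X_pow_dvd_iff.mp hX) m hmh

lemma coeff_evFun_eq {w : PowerSeries S} (hw : constantCoeff w = 0)
    (G : PowerSeries (PowerSeries S)) {m N : ℕ} (hmN : m < N) :
    coeff m (evFun w G) = coeff m (Polynomial.eval w (trunc N G)) := by
  have hdeg : (trunc N G).natDegree < N := by
    obtain ⟨n, rfl⟩ : ∃ n, N = n + 1 := ⟨N - 1, by omega⟩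
    exact natDegree_trunc_lt G n
  rw [Polynomial.eval_eq_sum_range' hdeg, map_sum]
  have hcongr : (∑ i ∈ range N, coeff m ((trunc N G).coeff i * w ^ i)) =
      ∑ i ∈ range N, coeff m ((coeff i G) * w ^ i) := by
    refine Finset.sum_congr rfl fun i hi => ?_
    rw [coeff_trunc]
    simp only [mem_range] at hi
    simp [hi]
  rw [hcongr, evFun, coeff_mk]
  refine Finset.sum_subset (fun x hx => by simp only [mem_range] at hx ⊢; omega)
    (fun x _ hx => coeff_mul_w_pow_eq_zero hw _ (by simp only [mem_range] at hx ⊢; omega))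

lemma coeff_eval_eq_of_coeff_eq {w : PowerSeries S} (hw : constantCoeff w = 0)
    {P Q : Polynomial (PowerSeries S)} {m N : ℕ} (hmN : m < N)
    (h : ∀ i < N, P.coeff i = Q.coeff i) :
    coeff m (Polynomial.eval w P) = coeff m (Polynomial.eval w Q) := by
  have hdvd : Polynomial.X ^ N ∣ P - Q := by
    rw [Polynomial.X_pow_dvd_iff]
    intro d hd
    simp [h d hd]
  obtain ⟨R, hR⟩ := hdvd
  have hPQ : P = Q + Polynomial.X ^ N * R := by linear_combination hR
  rw [hPQ]
  simp only [Polynomial.eval_add, Polynomial.eval_mul, Polynomial.eval_pow, Polynomial.eval_X,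
    map_add]
  have : w ^ N * Polynomial.eval w R = Polynomial.eval w R * w ^ N := mul_comm _ _
  rw [this, coeff_mul_w_pow_eq_zero hw _ hmN, add_zero]

lemma evFun_mul {w : PowerSeries S} (hw : constantCoeff w = 0)
    (G H : PowerSeries (PowerSeries S)) :
    evFun w (G * H) = evFun w G * evFun w H := by
  ext m
  have hmN : m < m + 1 := Nat.lt_succ_self m
  rw [coeff_evFun_eq hw _ hmN]
  have h1 : coeff m (Polynomial.eval w (trunc (m + 1) (G * H))) =
      coeff m (Polynomial.eval w (trunc (m + 1) G * trunc (m + 1) H)) := by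
    refine coeff_eval_eq_of_coeff_eq hw hmN fun i hi => ?_
    have h2 := congrArg (fun p => Polynomial.coeff p i) (trunc_trunc_mul_trunc (n := m + 1) G H)
    rw [coeff_trunc] at h2
    rw [← h2]
    simp only [hi, if_true]
    rw [← Polynomial.coe_mul, Polynomial.coeff_coe]
  rw [h1, Polynomial.eval_mul]
  rw [PowerSeries.coeff_mul, PowerSeries.coeff_mul]
  refine Finset.sum_congr rfl fun p hp => ?_
  have hp1 : p.1 < m + 1 := by have := Finset.HasAntidiagonal.mem_antidiagonal.mp hp; omega
  have hp2 : p.2 < m + 1 := by have := Finset.HasAntidiagonal.mem_antidiagonal.mp hp; omega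
  rw [coeff_evFun_eq hw G hp1, coeff_evFun_eq hw H hp2]

/-- `evFun w` as a ring homomorphism. -/
noncomputable def ev {w : PowerSeries S} (hw : constantCoeff w = 0) :
    PowerSeries (PowerSeries S) →+* PowerSeries S where
  toFun := evFun w
  map_one' := by
    ext m
    rw [evFun, coeff_mk, Finset.sum_eq_single 0]
    · simp
    · intro b _ hb
      have hb1 : coeff b (1 : PowerSeries (PowerSeries S)) = 0 := by
        rw [PowerSeries.coeff_one]; simp [hb]
      simp [hb1]
    · simp
  map_mul' := evFun_mul hw
  map_zero' := by ext m; simp [evFun]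
  map_add' := fun G H => by
    ext m
    simp [evFun, add_mul, Finset.sum_add_distrib]

lemma ev_C {w : PowerSeries S} (hw : constantCoeff w = 0) (a : PowerSeries S) :
    ev hw (PowerSeries.C a) = a := by
  show evFun w _ = a
  ext m
  rw [evFun, coeff_mk, Finset.sum_eq_single 0]
  · simp
  · intro b _ hb
    rw [PowerSeries.coeff_C]
    simp [hb]
  · simp

lemma ev_X {w : PowerSeries S} (hw : constantCoeff w = 0) :
    ev hw (PowerSeries.X : PowerSeries (PowerSeries S)) = w := by
  show evFun w _ = w
  ext m
  rw [evFun, coeff_mk, Finset.sum_eq_single 1]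
  · simp
  · intro b _ hb
    rw [PowerSeries.coeff_X]
    simp [hb]
  · intro h
    simp only [mem_range, not_lt] at h
    obtain rfl : m = 0 := by omega
    rw [PowerSeries.coeff_X]
    simp [hw]

lemma coeff_ev {w : PowerSeries S} (hw : constantCoeff w = 0)
    (G : PowerSeries (PowerSeries S)) (m : ℕ) :
    coeff m (ev hw G) = ∑ h ∈ range (m + 1), coeff m ((coeff h G) * w ^ h) := by
  show coeff m (evFun w G) = _
  rw [evFun, coeff_mk]

end EvAux


namespace Stmt10Aux

open Finset PowerSeries

noncomputable section

abbrev R := PowerSeries ℚ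
abbrev A := PowerSeries R

def fc (h : ℕ) : R := PowerSeries.mk fun m => (c m h : ℚ)

def Fgf : A := PowerSeries.mk fun h => fc h

def Ugf : A := PowerSeries.mk fun h => PowerSeries.mk fun m =>
  ∑ i ∈ Finset.range (min h m), (c (m - 1 - i) (h - 1 - i) : ℚ)

def Jgf : A := PowerSeries.mk fun h => PowerSeries.mk fun m =>
  ∑ i ∈ Finset.range m, (c (m - 1 - i) (h + 1 + i) : ℚ)

def dgf : R := PowerSeries.mk fun m => ∑ j ∈ Finset.range (m + 1), (c (m - j) j : ℚ)

def uu : A := PowerSeries.C PowerSeries.X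
def vv : A := PowerSeries.X

lemma cc_uu_mul (G : A) (h m : ℕ) :
    coeff m (coeff h (uu * G)) = if m = 0 then 0 else coeff (m - 1) (coeff h G) := by
  rw [uu, coeff_C_mul]
  rcases m with _ | m
  · simp
  · simp [coeff_succ_X_mul]

lemma cc_vv_mul (G : A) (h m : ℕ) :
    coeff m (coeff h (vv * G)) = if h = 0 then 0 else coeff m (coeff (h - 1) G) := by
  rw [vv]
  rcases h with _ | h
  · simp [coeff_zero_X_mul]
  · simp [coeff_succ_X_mul]

lemma cc_Fgf (h m : ℕ) : coeff m (coeff h Fgf) = (c m h : ℚ) := by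
  rw [Fgf, coeff_mk, fc, coeff_mk]

lemma cc_Ugf (h m : ℕ) : coeff m (coeff h Ugf) =
    ∑ i ∈ Finset.range (min h m), (c (m - 1 - i) (h - 1 - i) : ℚ) := by
  rw [Ugf, coeff_mk, coeff_mk]

lemma cc_Jgf (h m : ℕ) : coeff m (coeff h Jgf) =
    ∑ i ∈ Finset.range m, (c (m - 1 - i) (h + 1 + i) : ℚ) := by
  rw [Jgf, coeff_mk, coeff_mk]

lemma cc_Cdgf (h m : ℕ) : coeff m (coeff h (PowerSeries.C dgf)) =
    if h = 0 then ∑ j ∈ Finset.range (m + 1), (c (m - j) j : ℚ) else 0 := by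
  rw [PowerSeries.coeff_C]
  split_ifs with hh
  · rw [dgf, coeff_mk]
  · simp

lemma cc_one (h m : ℕ) : coeff m (coeff h (1 : A)) =
    if h = 0 ∧ m = 0 then 1 else 0 := by
  by_cases hh : h = 0 <;> by_cases hm : m = 0 <;>
    simp [hh, hm, PowerSeries.coeff_one]

lemma R2 : Ugf = uu * vv * (Fgf + Ugf) := by
  refine PowerSeries.ext fun h => ?_
  refine PowerSeries.ext fun m => ?_
  rw [show uu * vv * (Fgf + Ugf) = uu * (vv * (Fgf + Ugf)) by ring]
  rw [cc_uu_mul, cc_Ugf]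
  rcases m with _ | m
  · simp
  · rw [if_neg (Nat.succ_ne_zero m), Nat.succ_sub_one, cc_vv_mul]
    rcases h with _ | h
    · simp
    · rw [if_neg (Nat.succ_ne_zero h), Nat.succ_sub_one]
      rw [map_add, map_add, cc_Fgf, cc_Ugf]
      have hmin : min (h + 1) (m + 1) = min h m + 1 := by omega
      rw [hmin]
      rw [Finset.sum_range_succ']
      have he : ∀ i ∈ Finset.range (min h m),
          ((c (m - (i + 1)) (h - (i + 1)) : ℚ)) = ((c (m - 1 - i) (h - 1 - i) : ℚ)) := by
        intro i _
        have e1 : m - (i + 1) = m - 1 - i := by omega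
        have e2 : h - (i + 1) = h - 1 - i := by omega
        rw [e1, e2]
      rw [Finset.sum_congr rfl he]
      simp only [Nat.sub_zero]
      ring

lemma R3 : vv * Jgf - uu * Jgf = uu * Fgf - uu * (PowerSeries.C dgf) := by
  refine PowerSeries.ext fun h => ?_
  refine PowerSeries.ext fun m => ?_
  simp only [map_sub]
  rw [cc_vv_mul, cc_uu_mul, cc_uu_mul, cc_uu_mul]
  rcases m with _ | m
  · rcases h with _ | h
    · simp
    · rw [if_neg (Nat.succ_ne_zero h), Nat.succ_sub_one, cc_Jgf]
      simp
  · rw [if_neg (Nat.succ_ne_zero m), if_neg (Nat.succ_ne_zero m), if_neg (Nat.succ_ne_zero m),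
      Nat.succ_sub_one, cc_Fgf, cc_Cdgf, cc_Jgf]
    rcases h with _ | h
    · rw [if_pos rfl, if_pos rfl, cc_Jgf]
      rw [Finset.sum_range_succ']
      have he : ∀ j ∈ Finset.range m, ((c (m - (j + 1)) (j + 1) : ℚ)) =
          ((c (m - 1 - j) (0 + 1 + j) : ℚ)) := by
        intro j _
        have e1 : m - (j + 1) = m - 1 - j := by omega
        have e2 : j + 1 = 0 + 1 + j := by omega
        rw [e1, e2]
      rw [Finset.sum_congr rfl he]
      simp only [Nat.sub_zero]
      ring
    · rw [if_neg (Nat.succ_ne_zero h), if_neg (Nat.succ_ne_zero h), Nat.succ_sub_one, cc_Jgf]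
      simp only [Nat.add_sub_cancel]
      rw [Finset.sum_range_succ']
      have he : ∀ i ∈ Finset.range m, ((c (m - (i + 1)) (h + 1 + (i + 1)) : ℚ)) =
          ((c (m - 1 - i) (h + 1 + 1 + i) : ℚ)) := by
        intro i _
        have e1 : m - (i + 1) = m - 1 - i := by omega
        have e2 : h + 1 + (i + 1) = h + 1 + 1 + i := by omega
        rw [e1, e2]
      rw [Finset.sum_congr rfl he]
      simp only [Nat.sub_zero, Nat.add_zero]
      ring

lemma cc_uu_pow_mul (G : A) (j h m : ℕ) :
    coeff m (coeff h (uu ^ j * G)) = if j ≤ m then coeff (m - j) (coeff h G) else 0 := by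
  induction j generalizing m with
  | zero => simp
  | succ j ih =>
    rw [pow_succ, show uu ^ j * uu * G = uu * (uu ^ j * G) by ring, cc_uu_mul]
    rcases m with _ | m
    · rw [if_pos rfl, if_neg (by omega)]
    · rw [if_neg (Nat.succ_ne_zero m), Nat.succ_sub_one, ih]
      by_cases hj : j ≤ m
      · rw [if_pos hj, if_pos (by omega), show m + 1 - (j + 1) = m - j by omega]
      · rw [if_neg hj, if_neg (by omega)]

lemma R1 : Fgf = 1 + Ugf + (uu ^ 2 + uu ^ 4) * Fgf + Jgf := by
  refine PowerSeries.ext fun h => ?_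
  refine PowerSeries.ext fun m => ?_
  rw [show (1 : A) + Ugf + (uu ^ 2 + uu ^ 4) * Fgf + Jgf =
    1 + Ugf + uu ^ 2 * Fgf + uu ^ 4 * Fgf + Jgf by ring]
  simp only [map_add]
  rw [cc_Fgf, cc_one, cc_Ugf, cc_Jgf, cc_uu_pow_mul, cc_uu_pow_mul, cc_Fgf, cc_Fgf]
  rcases m with _ | m
  · rw [if_neg (by omega : ¬(2 : ℕ) ≤ 0), if_neg (by omega : ¬(4 : ℕ) ≤ 0)]
    simp only [Nat.min_zero, Finset.range_zero, Finset.sum_empty, add_zero, zero_add]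
    rw [c_zero h]
    by_cases hh : h = 0 <;> simp [hh]
  · rw [if_neg (by omega : ¬(h = 0 ∧ m + 1 = 0))]
    rw [c_rec (m + 1) h (by omega)]
    push_cast [Nat.cast_ite]
    ring

end

end Stmt10Aux


namespace Stmt10Aux

open Finset PowerSeries EvAux

noncomputable section

lemma hv0 : constantCoeff ((PowerSeries.X * (1 + dgf)) : R) = 0 := by simp

def evk : A →+* R := ev hv0

lemma evk_uu : evk uu = PowerSeries.X := ev_C hv0 _

lemma evk_vv : evk vv = PowerSeries.X * (1 + dgf) := ev_X hv0

lemma evk_Cd : evk (PowerSeries.C dgf) = dgf := ev_C hv0 _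

lemma star : Fgf * ((vv - uu) * ((1 - uu * vv) * (1 - uu ^ 2 - uu ^ 4) - uu * vv) -
      uu * (1 - uu * vv)) =
    (1 - uu * vv) * (vv - uu) - uu * (1 - uu * vv) * (PowerSeries.C dgf) := by
  linear_combination ((1 - uu * vv) * (vv - uu)) * R1 + (vv - uu) * R2 + (1 - uu * vv) * R3

/-- `g` is the generating function of Catalan prefixes ending at height 0. -/
def ggf : R := fc 0

-- the relation obtained by reading off the constant coefficient (v = 0)
lemma ccoeff_vv : PowerSeries.constantCoeff vv = 0 := PowerSeries.constantCoeff_X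

lemma ccoeff_uu : PowerSeries.constantCoeff uu = PowerSeries.X :=
  PowerSeries.constantCoeff_C _

lemma ccoeff_F : PowerSeries.constantCoeff Fgf = ggf := by
  have : PowerSeries.constantCoeff Fgf = fc 0 := by
    rw [Fgf]
    exact PowerSeries.constantCoeff_mk
  rw [this, ggf]

lemma E2 : (2 - PowerSeries.X ^ 2 - PowerSeries.X ^ 4) * ggf = 1 + dgf := by
  have h0 := congrArg (PowerSeries.constantCoeff) star
  simp only [map_mul, map_sub, map_add, map_one, map_pow, ccoeff_vv, ccoeff_uu, ccoeff_F,
    PowerSeries.constantCoeff_C] at h0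
  have hX : (PowerSeries.X : R) ≠ 0 := PowerSeries.X_ne_zero
  refine mul_left_cancel₀ hX ?_
  linear_combination (-1 : R) * h0


lemma evkF_ne : evk Fgf ≠ 0 := by
  intro h
  have h0 := congrArg (PowerSeries.coeff 0) h
  rw [show evk Fgf = ev hv0 Fgf from rfl, coeff_ev] at h0
  simp only [zero_add, Finset.range_one, Finset.sum_singleton, Finset.sum_range_one,
    pow_zero, mul_one] at h0
  rw [show PowerSeries.coeff 0 Fgf = fc 0 from by rw [Fgf]; exact PowerSeries.coeff_mk 0 _] at h0
  rw [show PowerSeries.coeff 0 (fc 0) = ((c 0 0 : ℚ)) from by rw [fc]; exact PowerSeries.coeff_mk 0 _] at h0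
  rw [c_zero 0] at h0
  simp at h0

lemma E1 : (PowerSeries.X * (1 + dgf) - PowerSeries.X) *
      ((1 - PowerSeries.X * (PowerSeries.X * (1 + dgf))) *
        (1 - PowerSeries.X ^ 2 - PowerSeries.X ^ 4) -
        PowerSeries.X * (PowerSeries.X * (1 + dgf))) -
      PowerSeries.X * (1 - PowerSeries.X * (PowerSeries.X * (1 + dgf))) = 0 := by
  have h := congrArg evk star
  simp only [map_mul, map_sub, map_add, map_one, map_pow, evk_uu, evk_vv, evk_Cd] at h
  have hrhs : (1 - PowerSeries.X * (PowerSeries.X * (1 + dgf))) *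
      (PowerSeries.X * (1 + dgf) - PowerSeries.X) -
      PowerSeries.X * (1 - PowerSeries.X * (PowerSeries.X * (1 + dgf))) * dgf = 0 := by
    ring
  rw [hrhs] at h
  rcases mul_eq_zero.mp h with h1 | h1
  · exact absurd h1 evkF_ne
  · exact h1

lemma M_ne : (2 - PowerSeries.X ^ 2 - PowerSeries.X ^ 4 : R) ≠ 0 := by
  intro h
  have h0 := congrArg (PowerSeries.constantCoeff) h
  norm_num [map_ofNat] at h0

lemma Qg : PowerSeries.X ^ 2 * (2 - PowerSeries.X ^ 2 - PowerSeries.X ^ 4) ^ 2 * ggf ^ 2 -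
    (1 - PowerSeries.X ^ 2) * (1 + 3 * PowerSeries.X ^ 2 + PowerSeries.X ^ 4) * ggf + 1 = 0 := by
  have hd : dgf = (2 - PowerSeries.X ^ 2 - PowerSeries.X ^ 4) * ggf - 1 := by
    linear_combination - E2
  have hK := E1
  rw [hd] at hK
  have h5 : (PowerSeries.X * (2 - PowerSeries.X ^ 2 - PowerSeries.X ^ 4)) *
      (PowerSeries.X ^ 2 * (2 - PowerSeries.X ^ 2 - PowerSeries.X ^ 4) ^ 2 * ggf ^ 2 -
        (1 - PowerSeries.X ^ 2) * (1 + 3 * PowerSeries.X ^ 2 + PowerSeries.X ^ 4) * ggf + 1) =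
      0 := by
    linear_combination (-1 : R) * hK
  rcases mul_eq_zero.mp h5 with h6 | h6
  · exact absurd h6 (mul_ne_zero PowerSeries.X_ne_zero M_ne)
  · exact h6

/-- the doubling substitution `t ↦ u²`. -/
def sigma : PowerSeries ℚ →+* R :=
  (ev (by simp : PowerSeries.constantCoeff ((PowerSeries.X : R) ^ 2) = 0)).comp
    (PowerSeries.map (PowerSeries.C (R := ℚ)))

lemma sigma_coeff (f : PowerSeries ℚ) (m : ℕ) :
    PowerSeries.coeff m (sigma f) = if 2 ∣ m then PowerSeries.coeff (m / 2) f else 0 := by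
  rw [sigma, RingHom.comp_apply, coeff_ev]
  have hterm : ∀ h ∈ Finset.range (m + 1),
      PowerSeries.coeff m ((PowerSeries.coeff h (PowerSeries.map (PowerSeries.C (R := ℚ)) f)) *
        ((PowerSeries.X : R) ^ 2) ^ h) =
      (if m = 2 * h then PowerSeries.coeff h f else 0) := by
    intro h _
    rw [PowerSeries.coeff_map, ← pow_mul, mul_comm (PowerSeries.C _), PowerSeries.coeff_mul_C,
      PowerSeries.coeff_X_pow]
    split_ifs <;> simp
  rw [Finset.sum_congr rfl hterm]
  by_cases hm : 2 ∣ m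
  · obtain ⟨n, rfl⟩ := hm
    rw [Finset.sum_eq_single n]
    · rw [if_pos rfl, if_pos ⟨n, rfl⟩, show 2 * n / 2 = n from by omega]
    · intro b _ hb
      rw [if_neg (by omega)]
    · intro hn
      exfalso
      simp only [Finset.mem_range] at hn
      omega
  · rw [if_neg hm]
    refine Finset.sum_eq_zero fun h _ => ?_
    rw [if_neg (fun hc => hm ⟨h, hc⟩)]

lemma sigma_inj : Function.Injective sigma := by
  intro f g hfg
  refine PowerSeries.ext fun n => ?_
  have := congrArg (PowerSeries.coeff (2 * n)) hfg
  rw [sigma_coeff, sigma_coeff, if_pos ⟨n, rfl⟩, if_pos ⟨n, rfl⟩] at this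
  simpa [Nat.mul_div_cancel_left n (by norm_num : 0 < 2)] using this

lemma sigma_X : sigma PowerSeries.X = PowerSeries.X ^ 2 := by
  rw [sigma, RingHom.comp_apply, PowerSeries.map_X]
  exact ev_X _

lemma c_even_eq (n : ℕ) : c (2 * n) 0 = pCatalan S2 n := by
  rw [c, pCatalan]
  congr 1
  ext p
  simp only [W, Set.mem_setOf_eq, IsPath]
  rw [xPart_length, yPart_length]
  constructor
  · rintro ⟨hS, hcat, hh, hsum⟩
    exact ⟨⟨hS, by omega, by omega⟩, hcat⟩
  · rintro ⟨⟨hS, hx, hy⟩, hcat⟩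
    exact ⟨hS, hcat, by omega, by omega⟩

lemma c_odd_eq (m : ℕ) (hm : ¬ 2 ∣ m) : c m 0 = 0 := by
  have hW : W m 0 = ∅ := by
    ext p
    simp only [W, Set.mem_setOf_eq, Set.mem_empty_iff_false, iff_false]
    rintro ⟨_, _, hh, hsum⟩
    exact hm ⟨(p.map Prod.fst).sum, by omega⟩
  rw [c, hW, Set.ncard_empty]

lemma sigma_P2 : sigma (PowerSeries.mk fun n => (pCatalan S2 n : ℚ)) = ggf := by
  refine PowerSeries.ext fun m => ?_
  rw [sigma_coeff]
  rw [show PowerSeries.coeff m ggf = ((c m 0 : ℚ)) from by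
    rw [ggf, fc]; exact PowerSeries.coeff_mk m _]
  by_cases hm : 2 ∣ m
  · obtain ⟨n, rfl⟩ := hm
    rw [if_pos ⟨n, rfl⟩, PowerSeries.coeff_mk, show 2 * n / 2 = n from by omega, c_even_eq]
  · rw [if_neg hm, c_odd_eq m hm, Nat.cast_zero]

end

end Stmt10Aux

theorem stmt10 (P2 : PowerSeries ℚ)
    (hP : P2 = PowerSeries.mk fun n => (pCatalan S2 n : ℚ)) :
    ((1 + 3 * PowerSeries.X + PowerSeries.X ^ 2) -
        2 * PowerSeries.X * (1 - PowerSeries.X) * (2 + PowerSeries.X) ^ 2 * P2) ^ 2 =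
      1 - 10 * PowerSeries.X - 5 * PowerSeries.X ^ 2 + 2 * PowerSeries.X ^ 3 +
        PowerSeries.X ^ 4 := by
  apply Stmt10Aux.sigma_inj
  simp only [map_pow, map_mul, map_sub, map_add, map_one, map_ofNat, Stmt10Aux.sigma_X, hP,
    Stmt10Aux.sigma_P2]
  linear_combination (4 * PowerSeries.X ^ 2 * (2 + PowerSeries.X ^ 2) ^ 2 : Stmt10Aux.R) *
    Stmt10Aux.Qg
end

section
/- Let S = {(1,0),(0,1),(1,2)} (the step set of Tugger paths), let p_n be the number of Catalan S-paths from (0,0) to (n,n), and let P(t) = Σ_{n≥0} p_n tⁿ ∈ ℚ⟦t⟧. Then in ℚ⟦t⟧: (1 − 2t(1+t)·P(t))² = 1 − 4t − 4t² (equivalently, P(t) = (1 − √(1 − 4t − 4t²))/(2t(1+t))). -/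
/-- The step set of Tugger paths. -/
def tuggerSteps : Set (ℕ × ℕ) := {(1, 0), (0, 1), (1, 2)}

namespace TuggerAux

def sx (p : List (ℕ × ℕ)) : ℕ := (p.map Prod.fst).sum
def sy (p : List (ℕ × ℕ)) : ℕ := (p.map Prod.snd).sum

@[simp] lemma sx_nil : sx [] = 0 := rfl
@[simp] lemma sy_nil : sy [] = 0 := rfl
@[simp] lemma sx_cons (a : ℕ × ℕ) (p : List (ℕ × ℕ)) : sx (a :: p) = a.1 + sx p := rfl
@[simp] lemma sy_cons (a : ℕ × ℕ) (p : List (ℕ × ℕ)) : sy (a :: p) = a.2 + sy p := rfl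
@[simp] lemma sx_append (p q : List (ℕ × ℕ)) : sx (p ++ q) = sx p + sx q := by simp [sx]
@[simp] lemma sy_append (p q : List (ℕ × ℕ)) : sy (p ++ q) = sy p + sy q := by simp [sy]

lemma xPart_eq (p : List (ℕ × ℕ)) (j : ℕ) : xPart p j = sx (p.take j) := rfl
lemma yPart_eq (p : List (ℕ × ℕ)) (j : ℕ) : yPart p j = sy (p.take j) := rfl

/-- The set of Catalan Tugger paths to `(n,n)`. -/
def Cat (n : ℕ) : Set (List (ℕ × ℕ)) :=
  {p | IsPath tuggerSteps n n p ∧ IsCatalan p}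

lemma mem_steps_iff (s : ℕ × ℕ) : s ∈ tuggerSteps ↔ s = (1,0) ∨ s = (0,1) ∨ s = (1,2) := by
  simp [tuggerSteps]

lemma mem_cat_iff (n : ℕ) (p : List (ℕ × ℕ)) :
    p ∈ Cat n ↔ (∀ s ∈ p, s ∈ tuggerSteps) ∧ sx p = n ∧ sy p = n ∧
      ∀ j, sx (p.take j) ≤ sy (p.take j) := by
  constructor
  · rintro ⟨⟨h1, h2, h3⟩, h4⟩
    rw [xPart_eq, List.take_length] at h2
    rw [yPart_eq, List.take_length] at h3
    refine ⟨h1, h2, h3, fun j => ?_⟩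
    rcases le_or_gt j p.length with hj | hj
    · exact h4 j hj
    · rw [List.take_of_length_le hj.le]
      have := h4 p.length le_rfl
      rwa [xPart_eq, yPart_eq, List.take_length] at this
  · rintro ⟨h1, h2, h3, h4⟩
    refine ⟨⟨h1, ?_, ?_⟩, fun j _ => h4 j⟩
    · rw [xPart_eq, List.take_length]; exact h2
    · rw [yPart_eq, List.take_length]; exact h3

lemma sum_xy (p : List (ℕ × ℕ)) : (p.map (fun s => s.1 + s.2)).sum = sx p + sy p := by
  induction p with
  | nil => simp
  | cons a t ih => simp [ih, sx, sy]; ring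

lemma pCatalan_eq (n : ℕ) : pCatalan tuggerSteps n = (Cat n).ncard := rfl

/-- Catalan paths are finite in number. -/
lemma cat_finite (n : ℕ) : (Cat n).Finite := by
  have hsub : Cat n ⊆ (fun l : List (Fin 3) =>
      l.map (fun i => if i = 0 then ((1,0) : ℕ × ℕ) else if i = 1 then (0,1) else (1,2))) ''
      {l : List (Fin 3) | l.length ≤ 2 * n} := by
    intro p hp
    rw [mem_cat_iff] at hp
    obtain ⟨h1, h2, h3, -⟩ := hp
    refine ⟨p.map (fun s => if s = (1,0) then (0 : Fin 3) else if s = (0,1) then 1 else 2), ?_, ?_⟩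
    · -- length bound
      have hlen : p.length ≤ 2 * n := by
        have : p.length ≤ (p.map (fun s => s.1 + s.2)).sum := by
          have := List.length_le_sum_of_one_le (p.map (fun s => s.1 + s.2)) ?_
          · simpa using this
          · intro x hx
            simp only [List.mem_map] at hx
            obtain ⟨s, hs, rfl⟩ := hx
            have := h1 s hs
            rw [mem_steps_iff] at this
            rcases this with rfl | rfl | rfl <;> simp
        have hsum := sum_xy p
        omega
      simpa using hlen
    · simp only [List.map_map]
      conv_rhs => rw [← List.map_id p]
      apply List.map_congr_left
      intro s hs
      have := h1 s hs
      rw [mem_steps_iff] at this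
      rcases this with rfl | rfl | rfl <;> simp
  exact Set.Finite.subset (Set.Finite.image _ (List.finite_length_le (Fin 3) (2*n))) hsub

lemma cat_zero : Cat 0 = {[]} := by
  ext p
  simp only [Set.mem_singleton_iff, mem_cat_iff]
  constructor
  · rintro ⟨h1, h2, h3, -⟩
    cases p with
    | nil => rfl
    | cons a t =>
      have := h1 a (by simp)
      rw [mem_steps_iff] at this
      rcases this with rfl | rfl | rfl <;> simp at h2 h3 <;> omega
  · rintro rfl
    exact ⟨by simp, rfl, rfl, fun j => by simp⟩

lemma take_comp_small (c d : ℕ × ℕ) (q r : List (ℕ × ℕ)) {m : ℕ} (h : m ≤ q.length) :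
    (c :: (q ++ d :: r)).take (m + 1) = c :: q.take m := by
  rw [List.take_succ_cons, List.take_append_of_le_length h]

lemma take_comp_large (c d : ℕ × ℕ) (q r : List (ℕ × ℕ)) (m : ℕ) :
    (c :: (q ++ d :: r)).take (q.length + 2 + m) = c :: (q ++ d :: r.take m) := by
  rw [show q.length + 2 + m = (q.length + (m + 1)) + 1 by ring]
  rw [List.take_succ_cons, List.take_append, List.take_of_length_le (Nat.le_add_right _ _),
    Nat.add_sub_cancel_left, List.take_succ_cons]

lemma comp_mem {i j : ℕ} {s : ℕ × ℕ} (hs : s = ((0,1) : ℕ × ℕ) ∨ s = (1,2))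
    {q r : List (ℕ × ℕ)} (hq : q ∈ Cat i) (hr : r ∈ Cat j) :
    s :: (q ++ (1,0) :: r) ∈ Cat (i + j + 1 + s.1) := by
  rw [mem_cat_iff] at hq hr ⊢
  obtain ⟨hq1, hq2, hq3, hq4⟩ := hq
  obtain ⟨hr1, hr2, hr3, hr4⟩ := hr
  have hs2 : s.2 = s.1 + 1 := by rcases hs with rfl | rfl <;> rfl
  have hsS : s ∈ tuggerSteps := by rw [mem_steps_iff]; tauto
  refine ⟨?_, ?_, ?_, ?_⟩
  · intro t ht
    rcases List.mem_cons.mp ht with rfl | ht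
    · exact hsS
    rcases List.mem_append.mp ht with h | h
    · exact hq1 _ h
    rcases List.mem_cons.mp h with rfl | h
    · rw [mem_steps_iff]; tauto
    · exact hr1 _ h
  · simp [hq2, hr2]; omega
  · simp [hq3, hr3]; omega
  · intro m
    rcases Nat.lt_or_ge m (q.length + 2) with hm | hm
    · cases m with
      | zero => simp
      | succ t =>
        have ht : t ≤ q.length := by omega
        rw [take_comp_small _ _ _ _ ht]
        have := hq4 t
        simp; omega
    · obtain ⟨t, rfl⟩ : ∃ t, m = q.length + 2 + t := ⟨m - (q.length + 2), by omega⟩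
      rw [take_comp_large]
      have := hr4 t
      simp [hq2, hq3]; omega

lemma len_not_lt {s : ℕ × ℕ} (hs2 : s.2 = s.1 + 1) {q r q' r' : List (ℕ × ℕ)}
    (hqd : sx q = sy q)
    (hq' : ∀ j, sx (q'.take j) ≤ sy (q'.take j))
    (heq : s :: (q ++ (1,0) :: r) = s :: (q' ++ (1,0) :: r')) :
    ¬ q.length < q'.length := by
  intro hlt
  have h1 : (s :: (q ++ (1,0) :: r)).take (q.length + 2) = s :: (q ++ [(1,0)]) := by
    simpa using take_comp_large s (1,0) q r 0
  have h2 : (s :: (q ++ (1,0) :: r)).take (q.length + 2) = s :: q'.take (q.length + 1) := by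
    rw [heq, show q.length + 2 = (q.length + 1) + 1 by ring,
      take_comp_small s (1,0) q' r' (by omega)]
  rw [h1] at h2
  have hx : s.1 + (sx q + 1) = s.1 + sx (q'.take (q.length + 1)) := by
    have := congrArg sx h2; simpa using this
  have hy : s.2 + (sy q + 0) = s.2 + sy (q'.take (q.length + 1)) := by
    have := congrArg sy h2; simpa using this
  have := hq' (q.length + 1)
  omega

lemma comp_inj {s s' : ℕ × ℕ} (hs2 : s.2 = s.1 + 1) (hs2' : s'.2 = s'.1 + 1)
    {q r q' r' : List (ℕ × ℕ)}
    (hqd : sx q = sy q) (hqd' : sx q' = sy q')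
    (hqc : ∀ j, sx (q.take j) ≤ sy (q.take j))
    (hqc' : ∀ j, sx (q'.take j) ≤ sy (q'.take j))
    (heq : s :: (q ++ (1,0) :: r) = s' :: (q' ++ (1,0) :: r')) :
    s = s' ∧ q = q' ∧ r = r' := by
  obtain ⟨rfl, htl⟩ : s = s' ∧ (q ++ (1,0) :: r) = (q' ++ (1,0) :: r') :=
    ⟨(List.cons.inj heq).1, (List.cons.inj heq).2⟩
  have hlen : q.length = q'.length := by
    rcases Nat.lt_trichotomy q.length q'.length with h | h | h
    · exact absurd h (len_not_lt hs2 hqd hqc' heq)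
    · exact h
    · exact absurd h (len_not_lt hs2 hqd' hqc heq.symm)
  obtain ⟨hq, hr⟩ := List.append_inj htl hlen
  exact ⟨rfl, hq, (List.cons.inj hr).2⟩

lemma decomp {n : ℕ} {p : List (ℕ × ℕ)} (hp : p ∈ Cat (n + 1)) :
    ∃ s q r, (s = ((0,1) : ℕ × ℕ) ∨ s = (1,2)) ∧ p = s :: (q ++ (1,0) :: r) ∧
      q ∈ Cat (sx q) ∧ r ∈ Cat (sx r) ∧ n + 1 = sx q + sx r + 1 + s.1 := by
  classical
  rw [mem_cat_iff] at hp
  obtain ⟨h1, h2, h3, h4⟩ := hp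
  have hne : p ≠ [] := by rintro rfl; simp at h2
  obtain ⟨s, u, rfl⟩ : ∃ s u, p = s :: u := ⟨p.head hne, p.tail, (List.cons_head_tail hne).symm⟩
  have hlen : 1 ≤ (s :: u).length := by simp
  have hex : ∃ m, 1 ≤ m ∧ sx ((s :: u).take m) = sy ((s :: u).take m) :=
    ⟨(s :: u).length, hlen, by rw [List.take_length]; omega⟩
  set k := Nat.find hex with hkdef
  obtain ⟨hk1, hkd⟩ := Nat.find_spec hex
  rw [← hkdef] at hk1 hkd
  have hkle : k ≤ (s :: u).length := Nat.find_le ⟨hlen, by rw [List.take_length]; omega⟩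
  have hmin : ∀ m, 1 ≤ m → m < k → sx ((s :: u).take m) < sy ((s :: u).take m) := by
    intro m hm1 hmk
    have h := Nat.find_min hex hmk
    have h5 := h4 m
    have hne' : sx ((s :: u).take m) ≠ sy ((s :: u).take m) := fun he => h ⟨hm1, he⟩
    omega
  have hsS : s ∈ tuggerSteps := h1 s (by simp)
  have hsle : s.1 ≤ s.2 := by
    have := h4 1
    simpa using this
  have hsor : s = ((0,1) : ℕ × ℕ) ∨ s = (1,2) := by
    rw [mem_steps_iff] at hsS
    rcases hsS with rfl | rfl | rfl
    · simp at hsle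
    · left; rfl
    · right; rfl
  have hs2 : s.2 = s.1 + 1 := by rcases hsor with rfl | rfl <;> rfl
  have hk2 : 2 ≤ k := by
    rcases Nat.lt_or_ge k 2 with h | h
    · exfalso
      have hk1' : k = 1 := by omega
      rw [hk1'] at hkd
      simp at hkd
      omega
    · exact h
  -- split u
  have hku : k - 2 < u.length := by simp at hkle; omega
  set q := u.take (k - 2) with hqdef
  set w := u.drop (k - 2) with hwdef
  have hwne : w ≠ [] := by
    rw [hwdef]
    simp [List.drop_eq_nil_iff]
    omega
  obtain ⟨d, v, hw⟩ : ∃ d v, w = d :: v := ⟨w.head hwne, w.tail, (List.cons_head_tail hwne).symm⟩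
  have hu : u = q ++ d :: v := by rw [hqdef, ← hw, hwdef, List.take_append_drop]
  have hqlen : q.length = k - 2 := by rw [hqdef, List.length_take]; omega
  -- node computations
  have htake1 : (s :: u).take (k - 1) = s :: q := by
    rw [show k - 1 = (k - 2) + 1 by omega, List.take_succ_cons, hqdef]
  have htake2 : (s :: u).take k = s :: (q ++ [d]) := by
    rw [show k = (k - 1) + 1 by omega, List.take_succ_cons,
      show k - 1 = (k - 2) + 1 by omega, List.take_add, ← hqdef, ← hwdef, hw]
    rfl
  have hstrict : sx ((s :: u).take (k - 1)) < sy ((s :: u).take (k - 1)) :=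
    hmin (k - 1) (by omega) (by omega)
  rw [htake1] at hstrict
  rw [htake2] at hkd
  simp at hstrict hkd
  -- d is (1,0)
  have hdS : d ∈ tuggerSteps := by
    apply h1
    rw [hu]
    simp
  rw [mem_steps_iff] at hdS
  have hd : d = ((1,0) : ℕ × ℕ) := by
    rcases hdS with rfl | rfl | rfl
    · rfl
    · simp at hkd; omega
    · simp at hkd; omega
  subst hd
  simp at hkd
  -- sy q = sx q
  have hqd : sy q = sx q := by omega
  have hdrop : (s :: u).drop k = v := by
    rw [show k = (k - 1) + 1 by omega]
    show u.drop (k - 1) = v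
    rw [show k - 1 = (k - 2) + 1 by omega, ← List.drop_drop, ← hwdef, hw]
    rfl
  refine ⟨s, q, v, hsor, by rw [hu], ?_, ?_, ?_⟩
  · rw [mem_cat_iff]
    refine ⟨fun t ht => h1 t (by rw [hu]; simp [List.mem_append]; tauto), rfl, hqd, fun j => ?_⟩
    rcases le_or_gt q.length j with hj | hj
    · rw [List.take_of_length_le hj]
      omega
    · have hqj : q.take j = u.take j := by
        rw [hqdef, List.take_take, min_eq_left (by omega)]
      have := hmin (j + 1) (by omega) (by omega)
      rw [show (j:ℕ) + 1 = j + 1 by rfl, List.take_succ_cons, ← hqj] at this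
      simp at this
      omega
  · rw [mem_cat_iff]
    have hvsub : ∀ t ∈ v, t ∈ tuggerSteps := by
      intro t ht
      exact h1 t (by rw [hu]; simp [List.mem_append]; tauto)
    have htot_x : sx (s :: u) = n + 1 := h2
    have htot_y : sy (s :: u) = n + 1 := h3
    rw [hu] at htot_x htot_y
    simp at htot_x htot_y
    have hvd : sy v = sx v := by omega
    refine ⟨hvsub, rfl, hvd, fun j => ?_⟩
    have h5 := h4 (k + j)
    rw [show k + j = k + j by rfl, List.take_add, hdrop, htake2] at h5
    simp at h5
    omega
  · have htot_x : sx (s :: u) = n + 1 := h2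
    rw [hu] at htot_x
    simp at htot_x
    omega

lemma cat_sx {m : ℕ} {q : List (ℕ × ℕ)} (h : q ∈ Cat m) : sx q = m :=
  ((mem_cat_iff m q).mp h).2.1

lemma cat_diag {m : ℕ} {q : List (ℕ × ℕ)} (h : q ∈ Cat m) : sx q = sy q := by
  have h' := (mem_cat_iff m q).mp h
  omega

lemma cat_cat {m : ℕ} {q : List (ℕ × ℕ)} (h : q ∈ Cat m) :
    ∀ j, sx (q.take j) ≤ sy (q.take j) :=
  ((mem_cat_iff m q).mp h).2.2.2

noncomputable instance catFintype (m : ℕ) : Fintype (Cat m) := (cat_finite m).fintype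

abbrev DecT (n : ℕ) : Type :=
  (Σ _k : Fin (n+1), Cat _k.1 × Cat (n - _k.1)) ⊕ (Σ _k : Fin n, Cat _k.1 × Cat (n - 1 - _k.1))

noncomputable def toPath (n : ℕ) : DecT n → Cat (n+1)
  | .inl ⟨k, q, r⟩ => ⟨(0,1) :: (q.1 ++ (1,0) :: r.1), by
      have hk := k.2
      have h := comp_mem (Or.inl rfl) q.2 r.2
      rwa [show k.1 + (n - k.1) + 1 + ((0,1) : ℕ × ℕ).1 = n + 1 by simp; omega] at h⟩
  | .inr ⟨k, q, r⟩ => ⟨(1,2) :: (q.1 ++ (1,0) :: r.1), by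
      have hk := k.2
      have h := comp_mem (Or.inr rfl) q.2 r.2
      rwa [show k.1 + (n - 1 - k.1) + 1 + ((1,2) : ℕ × ℕ).1 = n + 1 by simp; omega] at h⟩

lemma toPath_bij (n : ℕ) : Function.Bijective (toPath n) := by
  constructor
  · rintro (⟨k, ⟨q, hq⟩, ⟨r, hr⟩⟩ | ⟨k, ⟨q, hq⟩, ⟨r, hr⟩⟩)
      (⟨k', ⟨q', hq'⟩, ⟨r', hr'⟩⟩ | ⟨k', ⟨q', hq'⟩, ⟨r', hr'⟩⟩) h <;>
      simp only [toPath, Subtype.mk.injEq] at h <;>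
      obtain ⟨hss, hqq, hrr⟩ := comp_inj rfl rfl (cat_diag hq) (cat_diag hq')
        (cat_cat hq) (cat_cat hq') h
    · subst hqq; subst hrr
      have hk : k = k' := Fin.ext (by rw [← cat_sx hq, ← cat_sx hq'])
      subst hk; rfl
    · exact absurd hss (by decide)
    · exact absurd hss (by decide)
    · subst hqq; subst hrr
      have hk : k = k' := Fin.ext (by rw [← cat_sx hq, ← cat_sx hq'])
      subst hk; rfl
  · rintro ⟨p, hp⟩
    obtain ⟨s, q, r, hsor, rfl, hq, hr, heq⟩ := decomp hp
    rcases hsor with rfl | rfl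
    · simp only [show ((0,1) : ℕ × ℕ).1 = 0 from rfl] at heq
      refine ⟨Sum.inl ⟨⟨sx q, by omega⟩, ⟨q, hq⟩, ⟨r, ?_⟩⟩, rfl⟩
      rwa [show n - sx q = sx r by omega]
    · simp only [show ((1,2) : ℕ × ℕ).1 = 1 from rfl] at heq
      refine ⟨Sum.inr ⟨⟨sx q, by omega⟩, ⟨q, hq⟩, ⟨r, ?_⟩⟩, rfl⟩
      rwa [show n - 1 - sx q = sx r by omega]

lemma card_cat_succ (n : ℕ) :
    Nat.card ↥(Cat (n+1)) =
      (∑ k ∈ Finset.range (n+1), Nat.card ↥(Cat k) * Nat.card ↥(Cat (n-k))) +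
        ∑ k ∈ Finset.range n, Nat.card ↥(Cat k) * Nat.card ↥(Cat (n-1-k)) := by
  classical
  rw [← Nat.card_eq_of_bijective _ (toPath_bij n), Nat.card_eq_fintype_card,
    Fintype.card_sum, Fintype.card_sigma, Fintype.card_sigma]
  simp only [Fintype.card_prod, ← Nat.card_eq_fintype_card]
  simp only [Nat.card_prod]
  rw [Fin.sum_univ_eq_sum_range (fun k => Nat.card ↥(Cat k) * Nat.card ↥(Cat (n - k))),
    Fin.sum_univ_eq_sum_range (fun k => Nat.card ↥(Cat k) * Nat.card ↥(Cat (n - 1 - k)))]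

lemma pc0 : pCatalan tuggerSteps 0 = 1 := by
  rw [pCatalan_eq, cat_zero, Set.ncard_singleton]

lemma pc_succ (n : ℕ) :
    pCatalan tuggerSteps (n+1) =
      (∑ k ∈ Finset.range (n+1), pCatalan tuggerSteps k * pCatalan tuggerSteps (n-k)) +
        ∑ k ∈ Finset.range n, pCatalan tuggerSteps k * pCatalan tuggerSteps (n-1-k) := by
  have h := card_cat_succ n
  simpa only [Nat.card_coe_set_eq, ← pCatalan_eq] using h

end TuggerAux

open TuggerAux PowerSeries in
theorem stmt11 (P : PowerSeries ℚ)
    (hP : P = PowerSeries.mk fun n => (pCatalan tuggerSteps n : ℚ)) :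
    (1 - 2 * PowerSeries.X * (1 + PowerSeries.X) * P) ^ 2 =
      1 - 4 * PowerSeries.X - 4 * PowerSeries.X ^ 2 := by
  have hc : ∀ n, (coeff n) P = (pCatalan tuggerSteps n : ℚ) := by
    intro n; rw [hP]; simp
  have hP2 : ∀ m, (coeff m) (P ^ 2) =
      ∑ k ∈ Finset.range (m + 1), (pCatalan tuggerSteps k : ℚ) * pCatalan tuggerSteps (m - k) := by
    intro m
    rw [pow_two, coeff_mul, Finset.Nat.sum_antidiagonal_eq_sum_range_succ_mk]
    simp [hc]
  have hrec : P = 1 + X * P ^ 2 + X * (X * P ^ 2) := by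
    ext n
    rw [map_add, map_add]
    cases n with
    | zero =>
      rw [hc 0, pc0]
      simp
    | succ n =>
      rw [coeff_succ_X_mul, coeff_succ_X_mul, hc (n + 1), hP2]
      have hrecn := pc_succ n
      have hsecond : (coeff n) (X * P ^ 2) =
          (∑ k ∈ Finset.range n,
            (pCatalan tuggerSteps k : ℚ) * pCatalan tuggerSteps (n - 1 - k)) := by
        cases n with
        | zero => simp
        | succ m =>
          rw [coeff_succ_X_mul, hP2]
          apply Finset.sum_congr rfl
          intro k hk
          congr 2
      rw [hsecond, coeff_one, if_neg (by omega)]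
      rw [hrecn]
      push_cast
      ring
  linear_combination ((-(4 : PowerSeries ℚ)) * (X + X ^ 2)) * hrec
end

section
/- Let M = {(a,0) : a ≥ 1} ∪ {(0,a) : a ≥ 1} ∪ {(b,c) : 1 ≤ b ≤ c} (all rook, bishop and spider steps; the largest step set satisfying the slope condition for the Catalan boundary), let p_n be the number of Catalan M-paths from (0,0) to (n,n), and let P(t) = Σ_{n≥0} p_n tⁿ ∈ ℚ⟦t⟧. Then P satisfies the quadratic equation 2t(3t−2)·P(t)² − (3t² − t − 1)·P(t) + (t−1) = 0 in ℚ⟦t⟧. -/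
/-- The set of all rook, bishop and spider steps. -/
def MSteps : Set (ℕ × ℕ) :=
  {st | (∃ a : ℕ, 1 ≤ a ∧ st = (a, 0)) ∨ (∃ a : ℕ, 1 ≤ a ∧ st = (0, a)) ∨
        (∃ b c : ℕ, 1 ≤ b ∧ b ≤ c ∧ st = (b, c))}

namespace S13
open Finset PowerSeries

lemma mem_MSteps_iff (st : ℕ × ℕ) :
    st ∈ MSteps ↔ (st.2 = 0 ∧ 1 ≤ st.1 ∨ st.1 = 0 ∧ 1 ≤ st.2 ∨ 1 ≤ st.1 ∧ st.1 ≤ st.2) := by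
  constructor
  · rintro (⟨a, ha, rfl⟩ | ⟨a, ha, rfl⟩ | ⟨b, c, hb, hbc, rfl⟩) <;> simp_all
  · rcases st with ⟨x, y⟩
    rintro (⟨h1, h2⟩ | ⟨h1, h2⟩ | ⟨h1, h2⟩)
    · exact Or.inl ⟨x, h2, by simp_all⟩
    · exact Or.inr (Or.inl ⟨y, h2, by simp_all⟩)
    · exact Or.inr (Or.inr ⟨x, y, h1, h2, rfl⟩)

lemma MSteps_pos {st : ℕ × ℕ} (h : st ∈ MSteps) : 1 ≤ st.1 + st.2 := by
  rw [mem_MSteps_iff] at h; omega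

def CPath (n m : ℕ) : Set (List (ℕ × ℕ)) := {p | IsPath MSteps n m p ∧ IsCatalan p}

lemma xPart_len (p : List (ℕ × ℕ)) : xPart p p.length = (p.map Prod.fst).sum := by
  rw [xPart, List.take_length]
lemma yPart_len (p : List (ℕ × ℕ)) : yPart p p.length = (p.map Prod.snd).sum := by
  rw [yPart, List.take_length]

lemma fst_le {p : List (ℕ × ℕ)} {n m : ℕ} (hp : IsPath MSteps n m p) {st : ℕ × ℕ}
    (hst : st ∈ p) : st.1 ≤ n ∧ st.2 ≤ m := by
  obtain ⟨-, h1, h2⟩ := hp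
  rw [xPart_len] at h1; rw [yPart_len] at h2
  constructor
  · rw [← h1]
    exact List.single_le_sum (by simp) _ (List.mem_map_of_mem hst)
  · rw [← h2]
    exact List.single_le_sum (by simp) _ (List.mem_map_of_mem hst)

lemma length_le {p : List (ℕ × ℕ)} {n m : ℕ} (hp : IsPath MSteps n m p) :
    p.length ≤ n + m := by
  obtain ⟨hmem, h1, h2⟩ := hp
  rw [xPart_len] at h1; rw [yPart_len] at h2
  have : p.length ≤ (p.map Prod.fst).sum + (p.map Prod.snd).sum := by
    clear h1 h2
    induction p with
    | nil => simp
    | cons a l ih =>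
      simp only [List.length_cons, List.map_cons, List.sum_cons]
      have := MSteps_pos (hmem a (by simp))
      have := ih (fun st h => hmem st (by simp [h]))
      omega
  omega

lemma cpath_finite (n m : ℕ) : (CPath n m).Finite := by
  classical
  set B : Finset (ℕ × ℕ) := (range (n+1)) ×ˢ (range (m+1)) with hB
  have h1 : {l : List {x : ℕ × ℕ // x ∈ B} | l.length ≤ n + m}.Finite :=
    List.finite_length_le _ (n + m)
  apply (h1.image (List.map Subtype.val)).subset
  rintro p ⟨hp, -⟩
  have hmem : ∀ st ∈ p, st ∈ B := by
    intro st hst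
    have := fst_le hp hst
    simp [hB, Finset.mem_product, Finset.mem_range]; omega
  refine ⟨p.attach.map (fun x => ⟨x.1, hmem x.1 x.2⟩), by simpa using length_le hp, ?_⟩
  simp [List.map_map, Function.comp_def]
  exact List.attach_map_subtype_val p

noncomputable def c (n m : ℕ) : ℕ := (CPath n m).ncard

noncomputable def PF (n m : ℕ) : Finset (List (ℕ × ℕ)) := (cpath_finite n m).toFinset

lemma mem_PF {n m : ℕ} {p : List (ℕ × ℕ)} :
    p ∈ PF n m ↔ IsPath MSteps n m p ∧ IsCatalan p := by
  simp [PF, Set.Finite.mem_toFinset, CPath]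

lemma c_eq_card (n m : ℕ) : c n m = (PF n m).card := by
  rw [c, Set.ncard_eq_toFinset_card _ (cpath_finite n m)]; rfl

lemma c_zero : c 0 0 = 1 := by
  have : CPath 0 0 = {[]} := by
    ext p
    simp only [CPath, Set.mem_setOf_eq, Set.mem_singleton_iff]
    constructor
    · rintro ⟨⟨hmem, h1, h2⟩, -⟩
      cases p with
      | nil => rfl
      | cons a l =>
        exfalso
        have ha := MSteps_pos (hmem a (by simp))
        have := fst_le ⟨hmem, h1, h2⟩ (show a ∈ a :: l by simp)
        omega
    · rintro rfl
      refine ⟨⟨by simp, rfl, rfl⟩, ?_⟩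
      intro j hj
      simp only [List.length_nil, Nat.le_zero] at hj
      subst hj; simp [xPart, yPart]
  rw [c, this, Set.ncard_singleton]

lemma c_vanish {n m : ℕ} (h : m < n) : c n m = 0 := by
  have he : CPath n m = ∅ := by
    ext p
    simp only [CPath, Set.mem_setOf_eq, Set.mem_empty_iff_false, iff_false]
    rintro ⟨⟨hmem, h1, h2⟩, hcat⟩
    have := hcat p.length le_rfl
    omega
  rw [c, he, Set.ncard_empty]


lemma xPart_concat_le (q : List (ℕ × ℕ)) (s : ℕ × ℕ) {j : ℕ} (h : j ≤ q.length) :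
    xPart (q ++ [s]) j = xPart q j := by
  rw [xPart, xPart, List.take_append_of_le_length h]
lemma yPart_concat_le (q : List (ℕ × ℕ)) (s : ℕ × ℕ) {j : ℕ} (h : j ≤ q.length) :
    yPart (q ++ [s]) j = yPart q j := by
  rw [yPart, yPart, List.take_append_of_le_length h]

lemma xPart_concat_len (q : List (ℕ × ℕ)) (s : ℕ × ℕ) :
    xPart (q ++ [s]) (q.length + 1) = xPart q q.length + s.1 := by
  have : q.length + 1 = (q ++ [s]).length := by simp
  rw [this, xPart_len, xPart_len]; simp
lemma yPart_concat_len (q : List (ℕ × ℕ)) (s : ℕ × ℕ) :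
    yPart (q ++ [s]) (q.length + 1) = yPart q q.length + s.2 := by
  have : q.length + 1 = (q ++ [s]).length := by simp
  rw [this, yPart_len, yPart_len]; simp

def stepF (n m : ℕ) : Finset (ℕ × ℕ) :=
  ((range (n+1)) ×ˢ (range (m+1))).filter
    (fun s => s.2 = 0 ∧ 1 ≤ s.1 ∨ s.1 = 0 ∧ 1 ≤ s.2 ∨ 1 ≤ s.1 ∧ s.1 ≤ s.2)

lemma mem_stepF {n m : ℕ} {s : ℕ × ℕ} :
    s ∈ stepF n m ↔ (s.1 ≤ n ∧ s.2 ≤ m ∧ s ∈ MSteps) := by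
  simp only [stepF, mem_filter, mem_product, mem_range, mem_MSteps_iff]
  omega

lemma PF_eq {n m : ℕ} (hnm : n ≤ m) (h0 : ¬(n = 0 ∧ m = 0)) :
    PF n m = (stepF n m).biUnion
      (fun s => (PF (n - s.1) (m - s.2)).image (fun q => q ++ [s])) := by
  ext p
  simp only [mem_PF, mem_biUnion, mem_image]
  constructor
  · rintro ⟨hp, hcat⟩
    have hne : p ≠ [] := by
      rintro rfl
      exact h0 ⟨hp.2.1.symm.trans rfl, hp.2.2.symm.trans rfl⟩
    set s := p.getLast hne with hs
    set q := p.dropLast with hq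
    have heq : q ++ [s] = p := List.dropLast_append_getLast hne
    have hlen : p.length = q.length + 1 := by
      rw [← heq]; simp
    have hsmem : s ∈ MSteps := hp.1 s (List.getLast_mem hne)
    have hb := fst_le hp (List.getLast_mem hne)
    have hxq : xPart q q.length + s.1 = n := by
      rw [← xPart_concat_len, heq, ← hlen, hp.2.1]
    have hyq : yPart q q.length + s.2 = m := by
      rw [← yPart_concat_len, heq, ← hlen, hp.2.2]
    refine ⟨s, mem_stepF.mpr ⟨hb.1, hb.2, hsmem⟩, q, ⟨⟨?_, by omega, by omega⟩, ?_⟩, heq⟩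
    · intro st hst
      exact hp.1 st (by rw [← heq]; exact List.mem_append_left _ hst)
    · intro j hj
      rw [← xPart_concat_le q s hj, ← yPart_concat_le q s hj, heq]
      exact hcat j (by omega)
  · rintro ⟨s, hsF, q, ⟨⟨hqmem, hqx, hqy⟩, hqcat⟩, rfl⟩
    obtain ⟨hs1, hs2, hsM⟩ := mem_stepF.mp hsF
    have hlen : (q ++ [s]).length = q.length + 1 := by simp
    have hx : xPart (q ++ [s]) (q.length + 1) = n := by
      rw [xPart_concat_len, hqx]; omega
    have hy : yPart (q ++ [s]) (q.length + 1) = m := by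
      rw [yPart_concat_len, hqy]; omega
    refine ⟨⟨?_, by rw [hlen]; exact hx, by rw [hlen]; exact hy⟩, ?_⟩
    · intro st hst
      rcases List.mem_append.mp hst with h | h
      · exact hqmem st h
      · simp only [List.mem_singleton] at h; subst h; exact hsM
    · intro j hj
      rw [hlen] at hj
      rcases Nat.lt_or_ge j (q.length + 1) with h | h
      · rw [xPart_concat_le q s (by omega), yPart_concat_le q s (by omega)]
        exact hqcat j (by omega)
      · have : j = q.length + 1 := by omega
        subst this
        rw [hx, hy]; exact hnm

lemma MR {n m : ℕ} (hnm : n ≤ m) (h0 : ¬(n = 0 ∧ m = 0)) :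
    c n m = ∑ s ∈ stepF n m, c (n - s.1) (m - s.2) := by
  rw [c_eq_card, PF_eq hnm h0, Finset.card_biUnion]
  · refine Finset.sum_congr rfl fun s _ => ?_
    rw [Finset.card_image_of_injective _ (fun a b h => (List.append_left_inj [s]).mp h),
      c_eq_card]
  · intro s hs s' hs' hss
    rw [Function.onFun, Finset.disjoint_left]
    rintro p hp hp'
    simp only [mem_image] at hp hp'
    obtain ⟨q, -, rfl⟩ := hp
    obtain ⟨q', -, heq⟩ := hp'
    apply hss
    have h1 : some s = some s' := by
      rw [← List.getLast?_concat (l := q), ← List.getLast?_concat (l := q'), heq]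
    exact Option.some_inj.mp h1



lemma sum_c_split (u v : ℕ) :
    ∑ i ∈ range (u + v), c u i = ∑ j ∈ range v, c u (u + j) := by
  have h1 : ∑ i ∈ Ico 0 u, c u i = 0 := by
    apply Finset.sum_eq_zero
    intro i hi
    exact c_vanish (by simp at hi; omega)
  conv_lhs => rw [range_eq_Ico, ← Finset.sum_Ico_consecutive _ (Nat.zero_le u) (Nat.le_add_right u v)]
  rw [h1, zero_add, Finset.sum_Ico_eq_sum_range]
  have h2 : u + v - u = v := by omega
  rw [h2]

lemma sum_Icc_reflect (u a m : ℕ) :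
    ∑ b ∈ Icc a m, c u (m - b) = ∑ i ∈ range (m + 1 - a), c u i := by
  rw [← Finset.Ico_add_one_right_eq_Icc, Finset.sum_Ico_eq_sum_range]
  rw [← Finset.sum_range_reflect]
  apply Finset.sum_congr rfl
  intro i hi
  simp only [mem_range] at hi
  congr 1
  omega

lemma CG {k h : ℕ} (h0 : ¬(k = 0 ∧ h = 0)) :
    c k (k + h) = (∑ a ∈ Icc 1 k, c (k - a) (k + h))
      + (∑ j ∈ range h, c k (k + j))
      + (∑ b ∈ Icc 1 k, ∑ j ∈ range (h + 1), c (k - b) (k - b + j)) := by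
  set n := k with hn
  set m := k + h with hm
  have hnm : n ≤ m := by omega
  rw [MR hnm (by omega)]
  rw [stepF, Finset.sum_filter, Finset.sum_product]
  have split : ∀ a ∈ range (n+1), ∀ b ∈ range (m+1),
      (if ((a,b).2 = 0 ∧ 1 ≤ (a,b).1 ∨ (a,b).1 = 0 ∧ 1 ≤ (a,b).2 ∨
          1 ≤ (a,b).1 ∧ (a,b).1 ≤ (a,b).2) then c (n - a) (m - b) else 0)
      = (if b = 0 ∧ 1 ≤ a then c (n - a) (m - b) else 0)
        + (if a = 0 ∧ 1 ≤ b then c (n - a) (m - b) else 0)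
        + (if 1 ≤ a ∧ a ≤ b then c (n - a) (m - b) else 0) := by
    intro a _ b _
    dsimp only
    split_ifs <;> omega
  rw [Finset.sum_congr rfl (fun a ha => Finset.sum_congr rfl (fun b hb => split a ha b hb))]
  simp only [Finset.sum_add_distrib]
  congr 1
  · congr 1
    -- rook-horizontal part
    · have inner : ∀ a : ℕ, (∑ b ∈ range (m+1), if b = 0 ∧ 1 ≤ a then c (n - a) (m - b) else 0)
          = if 1 ≤ a then c (n - a) m else 0 := by
        intro a
        by_cases h1 : 1 ≤ a
        · simp only [h1, and_true]
          rw [Finset.sum_ite_eq' (range (m+1)) 0 (fun b => c (n - a) (m - b))]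
          simp
        · simp [h1]
      rw [Finset.sum_congr rfl (fun a _ => inner a), ← Finset.sum_filter]
      apply Finset.sum_congr
      · ext a; simp; omega
      · intros; rfl
    -- vertical part
    · have inner : ∀ b : ℕ, (∑ a ∈ range (n+1), if a = 0 ∧ 1 ≤ b then c (n - a) (m - b) else 0)
          = if 1 ≤ b then c n (m - b) else 0 := by
        intro b
        by_cases h1 : 1 ≤ b
        · simp only [h1, and_true]
          rw [Finset.sum_ite_eq' (range (n+1)) 0 (fun a => c (n - a) (m - b))]
          simp
        · simp [h1]
      rw [Finset.sum_comm]
      rw [Finset.sum_congr rfl (fun b _ => inner b), ← Finset.sum_filter]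
      have hfe : (range (m+1)).filter (fun b => 1 ≤ b) = Icc 1 m := by ext b; simp; omega
      rw [hfe, sum_Icc_reflect n 1 m]
      have : m + 1 - 1 = n + h := by omega
      rw [this, sum_c_split]
  -- spider part
  · have inner : ∀ a : ℕ, (∑ b ∈ range (m+1), if 1 ≤ a ∧ a ≤ b then c (n - a) (m - b) else 0)
        = if 1 ≤ a then (∑ b ∈ Icc a m, c (n - a) (m - b)) else 0 := by
      intro a
      by_cases h1 : 1 ≤ a
      · simp only [h1, true_and, if_true]
        rw [← Finset.sum_filter]
        apply Finset.sum_congr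
        · ext b; simp; omega
        · intros; rfl
      · simp [h1]
    rw [Finset.sum_congr rfl (fun a _ => inner a), ← Finset.sum_filter]
    have hfe : (range (n+1)).filter (fun a => 1 ≤ a) = Icc 1 n := by ext a; simp; omega
    rw [hfe]
    apply Finset.sum_congr rfl
    intro a ha
    simp only [mem_Icc] at ha
    rw [sum_Icc_reflect (n - a) a m]
    have : m + 1 - a = (n - a) + (h + 1) := by omega
    rw [this, sum_c_split]



noncomputable def G (h : ℕ) : PowerSeries ℚ := PowerSeries.mk fun k => (c k (k + h) : ℚ)
noncomputable def A (h : ℕ) : PowerSeries ℚ :=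
  PowerSeries.mk fun k => ∑ a ∈ Icc 1 k, (c (k - a) (k + h) : ℚ)
noncomputable def V : PowerSeries ℚ := PowerSeries.mk fun k => if 1 ≤ k then (1 : ℚ) else 0
noncomputable def U (h : ℕ) : PowerSeries ℚ := ∑ j ∈ range h, G j
noncomputable def W (h : ℕ) : PowerSeries ℚ := ∑ j ∈ range (h + 1), G j
noncomputable def Q : PowerSeries ℚ :=
  PowerSeries.mk fun n => ∑ h ∈ range (n + 1), (c (n - h) n : ℚ)
noncomputable def Z : PowerSeries ℚ := X * (1 + Q)

lemma c_congr {a b a' b' : ℕ} (h1 : a = a') (h2 : b = b') : (c a b : ℚ) = c a' b' := by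
  rw [h1, h2]

lemma sum_Icc1 (f : ℕ → ℚ) (k : ℕ) : ∑ a ∈ Icc 1 k, f a = ∑ i ∈ range k, f (i + 1) := by
  rw [← Finset.Ico_add_one_right_eq_Icc, Finset.sum_Ico_eq_sum_range]
  have h1 : k + 1 - 1 = k := by omega
  rw [h1]
  exact Finset.sum_congr rfl (fun i _ => by rw [Nat.add_comm 1 i])

lemma coeff_V_mul (F : PowerSeries ℚ) (k : ℕ) :
    (coeff k) (V * F) = ∑ b ∈ Icc 1 k, (coeff (k - b)) F := by
  rw [coeff_mul, Finset.Nat.sum_antidiagonal_eq_sum_range_succ_mk]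
  rw [sum_Icc1 (fun b => (coeff (k - b)) F) k]
  rw [Finset.sum_range_succ' (fun i => (coeff i) V * (coeff (k - i)) F) k]
  have h0 : (coeff 0) V = 0 := by simp [V]
  rw [h0, zero_mul, add_zero]
  apply Finset.sum_congr rfl
  intro i _
  have h1 : (coeff (i + 1)) V = 1 := by simp [V]
  rw [h1, one_mul]

lemma eqh (h : ℕ) : G h = (if h = 0 then 1 else 0) + A h + U h + V * W h := by
  apply PowerSeries.ext
  intro k
  simp only [map_add, coeff_mk, G, A]
  have hU : (coeff k) (U h) = ∑ j ∈ range h, (c k (k + j) : ℚ) := by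
    simp [U, G]
  have hW : (coeff k) (V * W h) =
      ∑ b ∈ Icc 1 k, ∑ j ∈ range (h + 1), (c (k - b) (k - b + j) : ℚ) := by
    rw [coeff_V_mul]
    apply Finset.sum_congr rfl
    intro b _
    simp [W, G]
  rw [hU, hW]
  by_cases h00 : k = 0 ∧ h = 0
  · obtain ⟨rfl, rfl⟩ := h00
    simp [c_zero]
  · have hcg := CG h00
    have hif : (coeff k) (if h = 0 then (1 : PowerSeries ℚ) else 0) = 0 := by
      split_ifs with hh
      · subst hh
        rw [coeff_one]
        simp only [ite_eq_right_iff]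
        intro hk; exact absurd ⟨hk, rfl⟩ h00
      · simp
    rw [hif, zero_add]
    rw [hcg]
    push_cast
    ring

lemma arec (h : ℕ) : A h = X * (G (h + 1) + A (h + 1)) := by
  apply PowerSeries.ext
  intro k
  cases k with
  | zero => simp [A, coeff_zero_X_mul]
  | succ k =>
    rw [coeff_succ_X_mul, map_add]
    simp only [A, G, coeff_mk]
    rw [sum_Icc1 (fun a => (c (k + 1 - a) (k + 1 + h) : ℚ)) (k + 1)]
    rw [Finset.sum_range_succ' (fun i => (c (k + 1 - (i + 1)) (k + 1 + h) : ℚ)) k]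
    have h1 : (c (k + 1 - (0 + 1)) (k + 1 + h) : ℚ) = (c k (k + (h + 1)) : ℚ) :=
      c_congr (by omega) (by omega)
    rw [h1]
    rw [sum_Icc1 (fun a => (c (k - a) (k + (h + 1)) : ℚ)) k]
    have e2 : ∀ i ∈ range k, (c (k + 1 - (i + 1 + 1)) (k + 1 + h) : ℚ)
        = (c (k - (i + 1)) (k + (h + 1)) : ℚ) := fun i _ => c_congr (by omega) (by omega)
    rw [Finset.sum_congr rfl e2]
    ring

lemma qpa : Q = G 0 + A 0 := by
  apply PowerSeries.ext
  intro n
  rw [map_add]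
  simp only [Q, G, A, coeff_mk]
  rw [Finset.sum_range_succ' (fun h => (c (n - h) n : ℚ)) n]
  rw [sum_Icc1 (fun a => (c (n - a) (n + 0) : ℚ)) n]
  have e1 : (c (n - 0) n : ℚ) = c n (n + 0) := c_congr (by omega) (by omega)
  have e2 : ∀ i ∈ range n, (c (n - (i + 1)) n : ℚ) = c (n - (i + 1)) (n + 0) :=
    fun i _ => c_congr rfl (by omega)
  rw [Finset.sum_congr rfl e2, e1]
  ring

lemma vx : (1 - X) * V = X := by
  apply PowerSeries.ext
  intro n
  rw [sub_mul, one_mul, map_sub, coeff_X]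
  cases n with
  | zero => simp [V, coeff_zero_X_mul]
  | succ n =>
    rw [coeff_succ_X_mul]
    simp only [V, coeff_mk]
    cases n <;> simp

noncomputable def Sw (F : ℕ → PowerSeries ℚ) : PowerSeries ℚ :=
  PowerSeries.mk fun n => ∑ h ∈ range (n + 1), (coeff n) (F h * Z ^ h)

lemma Zdef : Z = X * (1 + Q) := by unfold Z; rfl

lemma X_dvd_Z : (X : PowerSeries ℚ) ∣ Z := ⟨1 + Q, Zdef⟩

lemma coeff_mul_Zpow_eq_zero {F : PowerSeries ℚ} {h n : ℕ} (hn : n < h) :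
    (coeff n) (F * Z ^ h) = 0 := by
  have hd : (X : PowerSeries ℚ) ^ h ∣ F * Z ^ h :=
    Dvd.dvd.mul_left (pow_dvd_pow_of_dvd X_dvd_Z h) F
  exact (PowerSeries.X_pow_dvd_iff.mp hd) n hn

lemma coeff_mul_congr {A₁ A₂ Y : PowerSeries ℚ} {n : ℕ}
    (hc : ∀ m ≤ n, (coeff m) A₁ = (coeff m) A₂) :
    (coeff n) (A₁ * Y) = (coeff n) (A₂ * Y) := by
  rw [coeff_mul, coeff_mul]
  apply Finset.sum_congr rfl
  intro p hp
  rw [Finset.HasAntidiagonal.mem_antidiagonal] at hp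
  rw [hc p.1 (by omega)]

lemma coeff_Sw_mul (F : ℕ → PowerSeries ℚ) (n : ℕ) (Y : PowerSeries ℚ) :
    (coeff n) (Sw F * Y) = (coeff n) ((∑ h ∈ range (n + 1), F h * Z ^ h) * Y) := by
  apply coeff_mul_congr
  intro m hm
  rw [Sw, coeff_mk, map_sum]
  apply Finset.sum_subset
  · apply Finset.range_subset_range.mpr; omega
  · intro h _ hh
    rw [mem_range] at hh
    exact coeff_mul_Zpow_eq_zero (by omega)

lemma coeff_Sw (F : ℕ → PowerSeries ℚ) (n : ℕ) :
    (coeff n) (Sw F) = (coeff n) (∑ h ∈ range (n + 1), F h * Z ^ h) := by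
  have := coeff_Sw_mul F n 1
  rwa [mul_one, mul_one] at this

lemma Sw_add (F₁ F₂ : ℕ → PowerSeries ℚ) :
    Sw (fun h => F₁ h + F₂ h) = Sw F₁ + Sw F₂ := by
  apply PowerSeries.ext
  intro n
  rw [map_add, Sw, Sw, Sw, coeff_mk, coeff_mk, coeff_mk, ← Finset.sum_add_distrib]
  apply Finset.sum_congr rfl
  intro h _
  rw [add_mul, map_add]

lemma Sw_cmul (Cs : PowerSeries ℚ) (F : ℕ → PowerSeries ℚ) :
    Sw (fun h => Cs * F h) = Cs * Sw F := by
  apply PowerSeries.ext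
  intro n
  rw [mul_comm Cs (Sw F), coeff_Sw_mul, Sw, coeff_mk]
  rw [Finset.sum_mul, map_sum]
  apply Finset.sum_congr rfl
  intro h _
  rw [show Cs * F h * Z ^ h = F h * Z ^ h * Cs by ring]

lemma Sw_delta : Sw (fun h => if h = 0 then (1 : PowerSeries ℚ) else 0) = 1 := by
  apply PowerSeries.ext
  intro n
  rw [Sw, coeff_mk]
  rw [Finset.sum_eq_single 0]
  · simp
  · intro h _ hh
    simp [hh]
  · intro habs
    simp at habs

lemma Sw_shift (F : ℕ → PowerSeries ℚ) :
    Z * Sw (fun h => F (h + 1)) = Sw F - F 0 := by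
  apply PowerSeries.ext
  intro n
  rw [mul_comm, coeff_Sw_mul, Finset.sum_mul, map_sum, map_sub, coeff_Sw, map_sum]
  have hterm : ∀ h, (coeff n) (F (h + 1) * Z ^ h * Z) = (coeff n) (F (h + 1) * Z ^ (h + 1)) := by
    intro h
    rw [show F (h + 1) * Z ^ h * Z = F (h + 1) * Z ^ (h + 1) by ring]
  rw [Finset.sum_congr rfl (fun h _ => hterm h)]
  rw [Finset.sum_range_succ' (fun h => (coeff n) (F h * Z ^ h)) n]
  rw [Finset.sum_range_succ (fun h => (coeff n) (F (h + 1) * Z ^ (h + 1))) n]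
  rw [coeff_mul_Zpow_eq_zero (show n < n + 1 by omega), add_zero]
  have h00 : (coeff n) (F 0 * Z ^ 0) = (coeff n) (F 0) := by
    rw [pow_zero, mul_one]
  rw [h00]
  ring

noncomputable def Kt : PowerSeries ℚ :=
  (1 - X) * (1 - Z) * (Z - X) - (1 - X) * (1 - Z) * X - (1 - X) * (Z - X) * Z - X * (Z - X)

lemma swA : (Z - X) * Sw A = X * (Sw G - Q) := by
  have h1 : Sw A = X * Sw (fun h => G (h + 1)) + X * Sw (fun h => A (h + 1)) := by
    calc Sw A = Sw (fun h => X * (G (h + 1) + A (h + 1))) :=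
          congrArg Sw (funext fun h => arec h)
    _ = X * Sw (fun h => G (h + 1) + A (h + 1)) := Sw_cmul _ _
    _ = X * (Sw (fun h => G (h + 1)) + Sw (fun h => A (h + 1))) := by rw [Sw_add]
    _ = _ := by ring
  have h2 := Sw_shift G
  have h3 := Sw_shift A
  have h4 := qpa
  linear_combination Z * h1 + X * h2 + X * h3 + X * h4

lemma hU0 : U 0 = 0 := by simp [U]
lemma hUsucc : (fun h => U (h + 1)) = fun h => U h + G h := by
  funext h; rw [U, U, Finset.sum_range_succ]

lemma swU : (1 - Z) * Sw U = Z * Sw G := by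
  have h2 := Sw_shift U
  rw [hU0, sub_zero, hUsucc, Sw_add] at h2
  linear_combination -h2

lemma hWU : W = fun h => U (h + 1) := by
  funext h; rw [W, U]

lemma swW : (1 - Z) * Sw W = Sw G := by
  have h2 := Sw_shift U
  rw [hU0, sub_zero] at h2
  have h3 : Sw W = Sw (fun h => U (h + 1)) := by rw [hWU]
  rw [hUsucc, Sw_add] at h2 h3
  have h4 := swU
  linear_combination (1 - Z) * h3 + h4


lemma SwG_ne_zero : Sw G ≠ 0 := by
  intro h
  have h0 := congrArg (coeff 0) h
  simp only [Sw, coeff_mk, map_zero] at h0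
  rw [Finset.sum_range_one, pow_zero, mul_one] at h0
  simp [G, c_zero] at h0

lemma sweq : Sw G = 1 + Sw A + Sw U + V * Sw W := by
  have h0 : Sw G = Sw (fun h => (if h = 0 then 1 else 0) + A h + U h + V * W h) :=
    congrArg Sw (funext fun h => eqh h)
  rw [h0]
  rw [Sw_add (fun h => (if h = 0 then 1 else 0) + A h + U h) (fun h => V * W h)]
  rw [Sw_add (fun h => (if h = 0 then 1 else 0) + A h) (fun h => U h)]
  rw [Sw_add (fun h => (if h = 0 then 1 else 0)) (fun h => A h)]
  rw [Sw_delta, Sw_cmul V W]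

lemma hKt0 : (1 - X) * (1 - Z) * (Z - X) - (1 - X) * (1 - Z) * X
    - (1 - X) * (Z - X) * Z - X * (Z - X) = 0 := by
  have hmain : Sw G * ((1 - X) * (1 - Z) * (Z - X) - (1 - X) * (1 - Z) * X
      - (1 - X) * (Z - X) * Z - X * (Z - X)) = 0 := by
    linear_combination (1 - X) * (1 - Z) * (Z - X) * sweq + (1 - X) * (1 - Z) * swA
      + (1 - X) * (Z - X) * swU + (Z - X) * X * swW + (Z - X) * (1 - Z) * (Sw W) * vx
      + (1 - X) * (1 - Z) * Zdef
  rcases mul_eq_zero.mp hmain with h | h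
  · exact absurd h SwG_ne_zero
  · exact h

lemma hA2 : (1 - X) * (1 + Q) = (2 - 3 * X) * G 0 := by
  have e0 := eqh 0
  rw [if_pos rfl, hU0] at e0
  have hW0 : W 0 = G 0 := by rw [W, Finset.sum_range_one]
  rw [hW0] at e0
  linear_combination (-(1 - X)) * e0 + (1 - X) * qpa - G 0 * vx

end S13


theorem stmt13 (P : PowerSeries ℚ)
    (hP : P = PowerSeries.mk fun n => (pCatalan MSteps n : ℚ)) :
    2 * PowerSeries.X * (3 * PowerSeries.X - 2) * P ^ 2 -
      (3 * PowerSeries.X ^ 2 - PowerSeries.X - 1) * P + (PowerSeries.X - 1) = 0 := by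
  have hPG : P = S13.G 0 := by
    rw [hP]
    apply PowerSeries.ext
    intro k
    simp only [PowerSeries.coeff_mk, S13.G]
    norm_cast
  rw [hPG]
  have h1 := S13.hKt0
  have h2 := S13.hA2
  have h3 := S13.Zdef
  have hT : (PowerSeries.X * (2 - 3 * PowerSeries.X)) *
      (2 * PowerSeries.X * (3 * PowerSeries.X - 2) * (S13.G 0) ^ 2 -
        (3 * PowerSeries.X ^ 2 - PowerSeries.X - 1) * (S13.G 0) + (PowerSeries.X - 1)) = 0 := by
    linear_combination (1 - PowerSeries.X) * h1
      - (1 - 2 * S13.Z - 2 * PowerSeries.X + 4 * PowerSeries.X * S13.Z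
          - 2 * PowerSeries.X * S13.Q - 2 * PowerSeries.X ^ 2 * S13.Z
          + 4 * PowerSeries.X ^ 2 * S13.Q + PowerSeries.X ^ 3
          - 2 * PowerSeries.X ^ 3 * S13.Q) * h3
      - (PowerSeries.X - PowerSeries.X ^ 2 - 2 * PowerSeries.X ^ 2 * S13.Q
          - 4 * PowerSeries.X ^ 2 * (S13.G 0) - PowerSeries.X ^ 3
          + 2 * PowerSeries.X ^ 3 * S13.Q + 6 * PowerSeries.X ^ 3 * (S13.G 0)) * h2
  have h23 : (2 - 3 * PowerSeries.X : PowerSeries ℚ) ≠ 0 := by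
    intro h
    have hc := congrArg (PowerSeries.constantCoeff) h
    simp only [map_sub, map_mul, map_ofNat, PowerSeries.constantCoeff_X, map_zero, mul_zero] at hc
    norm_num at hc
  have hXne : (PowerSeries.X : PowerSeries ℚ) ≠ 0 := PowerSeries.X_ne_zero
  rcases mul_eq_zero.mp hT with h | h
  · exact absurd h (mul_ne_zero hXne h23)
  · exact h
end
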